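/- arXiv:2408.16525 — 9 statements merged into one kernel-verified Lean document; each statement's English description precedes it below -/
import Mathlib

section
/- Let κ < 0 and N > 1 be real, let (a,b) be a nonempty bounded open real interval, and let h be an MCP(κ,N) density on (a,b) which is positive at every point of (a,b). Set c := √(−κ/(N−1)). Then: (i) for all x, y with a < x < y < b one has (sinh(c·(b−y))/sinh(c·(b−x)))^{N−1} ≤ h(y)/h(x) ≤ (sinh(c·(y−a))/sinh(c·(x−a)))^{N−1}; and (ii) for every x ∈ (a,b) at which h is differentiable with derivative h'(x), one has −√(−κ·(N−1))·cosh(c·(b−x))/sinh(c·(b−x)) ≤ h'(x)/h(x) ≤ √(−κ·(N−1))·cosh(c·(x−a))/sinh(c·(x−a)). -/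
open Set

/-- An `MCP(κ,N)` density on the set `I ⊆ ℝ`, for a constant negative curvature
parameter `κ`, with the explicit hyperbolic distortion coefficients. -/
def IsMCPNegDensity (κ N : ℝ) (I : Set ℝ) (h : ℝ → ℝ) : Prop :=
  (∀ x ∈ I, 0 ≤ h x) ∧
    ∀ x₀ ∈ I, ∀ x₁ ∈ I, x₀ ≠ x₁ → ∀ t ∈ Set.Icc (0 : ℝ) 1,
      Real.sinh (Real.sqrt (-κ / (N - 1)) * ((1 - t) * |x₁ - x₀|)) /
          Real.sinh (Real.sqrt (-κ / (N - 1)) * |x₁ - x₀|) * h x₀ ^ (1 / (N - 1)) ≤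
        h ((1 - t) * x₀ + t * x₁) ^ (1 / (N - 1))

open Filter Topology in
private lemma mcp_deriv_nonpos_aux {f : ℝ → ℝ} {x d : ℝ} (hd : HasDerivAt f d x)
    (h0 : f x = 0) (hr : ∀ᶠ y in 𝓝[>] x, f y ≤ 0) (hl : ∀ᶠ y in 𝓝[<] x, 0 ≤ f y) :
    d ≤ 0 := by
  have hs : Tendsto (slope f x) (𝓝[≠] x) (𝓝 d) := hasDerivAt_iff_tendsto_slope.mp hd
  refine le_of_tendsto hs ?_
  rw [← nhdsLT_sup_nhdsGT x, eventually_sup]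
  constructor
  · filter_upwards [hl, self_mem_nhdsWithin] with y hy hy'
    have hxy : y - x < 0 := sub_neg.mpr hy'
    rw [slope_def_field, h0, sub_zero]
    exact div_nonpos_of_nonneg_of_nonpos hy hxy.le
  · filter_upwards [hr, self_mem_nhdsWithin] with y hy hy'
    have hxy : 0 < y - x := sub_pos.mpr hy'
    rw [slope_def_field, h0, sub_zero]
    exact div_nonpos_of_nonpos_of_nonneg hy hxy.le

open Filter Topology in
private lemma mcp_deriv_nonneg_aux {f : ℝ → ℝ} {x d : ℝ} (hd : HasDerivAt f d x)
    (h0 : f x = 0) (hr : ∀ᶠ y in 𝓝[>] x, 0 ≤ f y) (hl : ∀ᶠ y in 𝓝[<] x, f y ≤ 0) :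
    0 ≤ d := by
  have := mcp_deriv_nonpos_aux hd.neg (by simp [h0])
    (hr.mono fun y hy => by simpa using hy) (hl.mono fun y hy => by simpa using hy)
  linarith

open Filter Topology in
/-- Comparison estimates for `MCP(κ,N)` densities (`κ < 0`) on a bounded
open interval `(a,b)`, with `c = √(-κ/(N-1))`. -/
theorem mcp_neg_density_comparison (κ N a b : ℝ) (h : ℝ → ℝ)
    (hκ : κ < 0) (hN : 1 < N) (hab : a < b)
    (hMCP : IsMCPNegDensity κ N (Set.Ioo a b) h)
    (hpos : ∀ x ∈ Set.Ioo a b, 0 < h x) :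
    (∀ x y : ℝ, a < x → x < y → y < b →
      (Real.sinh (Real.sqrt (-κ / (N - 1)) * (b - y)) /
          Real.sinh (Real.sqrt (-κ / (N - 1)) * (b - x))) ^ (N - 1) ≤ h y / h x ∧
        h y / h x ≤
          (Real.sinh (Real.sqrt (-κ / (N - 1)) * (y - a)) /
              Real.sinh (Real.sqrt (-κ / (N - 1)) * (x - a))) ^ (N - 1)) ∧
    (∀ x ∈ Set.Ioo a b, ∀ d : ℝ, HasDerivAt h d x →
      -Real.sqrt (-κ * (N - 1)) *
            (Real.cosh (Real.sqrt (-κ / (N - 1)) * (b - x)) /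
              Real.sinh (Real.sqrt (-κ / (N - 1)) * (b - x))) ≤ d / h x ∧
        d / h x ≤ Real.sqrt (-κ * (N - 1)) *
            (Real.cosh (Real.sqrt (-κ / (N - 1)) * (x - a)) /
              Real.sinh (Real.sqrt (-κ / (N - 1)) * (x - a)))) := by
  have hN1 : (0 : ℝ) < N - 1 := by linarith
  set c := Real.sqrt (-κ / (N - 1)) with hc_def
  have hcpos : 0 < c := Real.sqrt_pos.mpr (div_pos (by linarith) hN1)
  have hsq : Real.sqrt (-κ * (N - 1)) = (N - 1) * c := by
    rw [show -κ * (N - 1) = (N - 1) ^ 2 * (-κ / (N - 1)) by field_simp,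
      Real.sqrt_mul (by positivity), Real.sqrt_sq hN1.le]
  have hsinh : ∀ u : ℝ, 0 < u → 0 < Real.sinh (c * u) := fun u hu =>
    Real.sinh_pos_iff.mpr (mul_pos hcpos hu)
  -- the MCP inequality specialized to `a < s < x < y < b`
  have keyB : ∀ x y s : ℝ, a < s → s < x → x < y → y < b →
      Real.sinh (c * (x - s)) / Real.sinh (c * (y - s)) * h y ^ (1 / (N - 1)) ≤
        h x ^ (1 / (N - 1)) := by
    intro x y s has hsx hxy hyb
    have hyI : y ∈ Set.Ioo a b := ⟨by linarith, hyb⟩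
    have hsI : s ∈ Set.Ioo a b := ⟨has, by linarith⟩
    have hne : y ≠ s := by intro he; linarith
    have hys : 0 < y - s := by linarith
    set t := (y - x) / (y - s) with ht_def
    have ht : t ∈ Set.Icc (0 : ℝ) 1 :=
      ⟨div_nonneg (by linarith) hys.le, (div_le_one hys).mpr (by linarith)⟩
    have h1t : 1 - t = (x - s) / (y - s) := by
      rw [ht_def]; field_simp; ring
    have hpoint : (1 - t) * y + t * s = x := by
      rw [h1t, ht_def]; field_simp; ring
    have habs : |s - y| = y - s := by rw [abs_sub_comm]; exact abs_of_pos hys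
    have hlen : (1 - t) * |s - y| = x - s := by
      rw [habs, h1t, div_mul_cancel₀ _ (ne_of_gt hys)]
    have := hMCP.2 y hyI s hsI hne t ht
    rw [hpoint, hlen, habs] at this
    exact this
  -- the MCP inequality specialized to `a < x < y < s < b`
  have keyC : ∀ x y s : ℝ, a < x → x < y → y < s → s < b →
      Real.sinh (c * (s - y)) / Real.sinh (c * (s - x)) * h x ^ (1 / (N - 1)) ≤
        h y ^ (1 / (N - 1)) := by
    intro x y s hax hxy hys hsb
    have hxI : x ∈ Set.Ioo a b := ⟨hax, by linarith⟩
    have hsI : s ∈ Set.Ioo a b := ⟨by linarith, hsb⟩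
    have hne : x ≠ s := by intro he; linarith
    have hsx : 0 < s - x := by linarith
    set t := (y - x) / (s - x) with ht_def
    have ht : t ∈ Set.Icc (0 : ℝ) 1 :=
      ⟨div_nonneg (by linarith) hsx.le, (div_le_one hsx).mpr (by linarith)⟩
    have h1t : 1 - t = (s - y) / (s - x) := by
      rw [ht_def]; field_simp; ring
    have hpoint : (1 - t) * x + t * s = y := by
      rw [h1t, ht_def]; field_simp; ring
    have habs : |s - x| = s - x := abs_of_pos hsx
    have hlen : (1 - t) * |s - x| = s - y := by
      rw [habs, h1t, div_mul_cancel₀ _ (ne_of_gt hsx)]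
    have := hMCP.2 x hxI s hsI hne t ht
    rw [hpoint, hlen, habs] at this
    exact this
  -- limit versions at the endpoints
  have limB : ∀ x y : ℝ, a < x → x < y → y < b →
      Real.sinh (c * (x - a)) / Real.sinh (c * (y - a)) * h y ^ (1 / (N - 1)) ≤
        h x ^ (1 / (N - 1)) := by
    intro x y hax hxy hyb
    have hden : Real.sinh (c * (y - a)) ≠ 0 := (hsinh _ (by linarith)).ne'
    have hT : Tendsto
        (fun s => Real.sinh (c * (x - s)) / Real.sinh (c * (y - s)) * h y ^ (1 / (N - 1)))
        (𝓝[>] a)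
        (𝓝 (Real.sinh (c * (x - a)) / Real.sinh (c * (y - a)) * h y ^ (1 / (N - 1)))) := by
      apply Tendsto.mono_left _ nhdsWithin_le_nhds
      have c1 : ContinuousAt (fun s => Real.sinh (c * (x - s))) a := by fun_prop
      have c2 : ContinuousAt (fun s => Real.sinh (c * (y - s))) a := by fun_prop
      exact ((c1.div c2 hden).mul continuousAt_const).tendsto
    refine le_of_tendsto hT ?_
    filter_upwards [Ioo_mem_nhdsGT hax] with s hs
    exact keyB x y s hs.1 hs.2 hxy hyb
  have limC : ∀ x y : ℝ, a < x → x < y → y < b →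
      Real.sinh (c * (b - y)) / Real.sinh (c * (b - x)) * h x ^ (1 / (N - 1)) ≤
        h y ^ (1 / (N - 1)) := by
    intro x y hax hxy hyb
    have hden : Real.sinh (c * (b - x)) ≠ 0 := (hsinh _ (by linarith)).ne'
    have hT : Tendsto
        (fun s => Real.sinh (c * (s - y)) / Real.sinh (c * (s - x)) * h x ^ (1 / (N - 1)))
        (𝓝[<] b)
        (𝓝 (Real.sinh (c * (b - y)) / Real.sinh (c * (b - x)) * h x ^ (1 / (N - 1)))) := by
      apply Tendsto.mono_left _ nhdsWithin_le_nhds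
      have c1 : ContinuousAt (fun s => Real.sinh (c * (s - y))) b := by fun_prop
      have c2 : ContinuousAt (fun s => Real.sinh (c * (s - x))) b := by fun_prop
      exact ((c1.div c2 hden).mul continuousAt_const).tendsto
    refine le_of_tendsto hT ?_
    filter_upwards [Ioo_mem_nhdsLT hyb] with s hs
    exact keyC x y s hax hxy hs.1 hs.2
  -- part (i)
  have hα : (1 / (N - 1)) * (N - 1) = 1 := by field_simp
  have part1 : ∀ x y : ℝ, a < x → x < y → y < b →
      (Real.sinh (c * (b - y)) / Real.sinh (c * (b - x))) ^ (N - 1) ≤ h y / h x ∧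
        h y / h x ≤ (Real.sinh (c * (y - a)) / Real.sinh (c * (x - a))) ^ (N - 1) := by
    intro x y hax hxy hyb
    have hhx : 0 < h x := hpos x ⟨hax, by linarith⟩
    have hhy : 0 < h y := hpos y ⟨by linarith, hyb⟩
    constructor
    · set R := Real.sinh (c * (b - y)) / Real.sinh (c * (b - x)) with hR_def
      have hR : 0 ≤ R := div_nonneg (hsinh _ (by linarith)).le (hsinh _ (by linarith)).le
      have h1 := Real.rpow_le_rpow (by positivity) (limC x y hax hxy hyb) hN1.le
      rw [Real.mul_rpow hR (Real.rpow_nonneg hhx.le _),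
        ← Real.rpow_mul hhx.le, ← Real.rpow_mul hhy.le, hα, Real.rpow_one,
        Real.rpow_one] at h1
      exact (le_div_iff₀ hhx).mpr h1
    · set R := Real.sinh (c * (x - a)) / Real.sinh (c * (y - a)) with hR_def
      have hRpos : 0 < R := div_pos (hsinh _ (by linarith)) (hsinh _ (by linarith))
      have h1 := Real.rpow_le_rpow (by positivity) (limB x y hax hxy hyb) hN1.le
      rw [Real.mul_rpow hRpos.le (Real.rpow_nonneg hhy.le _),
        ← Real.rpow_mul hhy.le, ← Real.rpow_mul hhx.le, hα, Real.rpow_one,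
        Real.rpow_one] at h1
      have hRp : 0 < R ^ (N - 1) := Real.rpow_pos_of_pos hRpos _
      have h2 : h y / h x ≤ (R ^ (N - 1))⁻¹ := by
        rw [div_le_iff₀ hhx]
        have := mul_le_mul_of_nonneg_left h1 (inv_pos.mpr hRp).le
        rw [← mul_assoc, inv_mul_cancel₀ hRp.ne', one_mul] at this
        exact this
      rw [← Real.inv_rpow hRpos.le, hR_def, inv_div] at h2
      exact h2
  refine ⟨part1, ?_⟩
  -- part (ii)
  rintro x ⟨hax, hxb⟩ d hd
  have hhx : 0 < h x := hpos x ⟨hax, hxb⟩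
  have hKa : 0 < Real.sinh (c * (x - a)) := hsinh _ (by linarith)
  have hKb : 0 < Real.sinh (c * (b - x)) := hsinh _ (by linarith)
  set Ka := Real.sinh (c * (x - a)) with hKa_def
  set Kb := Real.sinh (c * (b - x)) with hKb_def
  constructor
  · -- lower bound on d / h x
    set G : ℝ → ℝ := fun y => (Real.sinh (c * (b - y)) / Kb) ^ (N - 1) * h x with hG_def
    have hv1 : Real.sinh (c * (b - x)) / Kb = 1 := div_self hKb.ne'
    have d1 : HasDerivAt (fun y => c * (b - y)) (-c) x := by
      simpa using ((hasDerivAt_id x).const_sub b).const_mul c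
    have d2 : HasDerivAt (fun y => Real.sinh (c * (b - y)) / Kb)
        (Real.cosh (c * (b - x)) * (-c) / Kb) x := d1.sinh.div_const Kb
    have d4 : HasDerivAt G
        ((Real.cosh (c * (b - x)) * (-c) / Kb) * (N - 1) * h x) x := by
      have := (d2.rpow_const (p := N - 1) (Or.inl (by rw [hv1]; exact one_ne_zero))).mul_const
        (h x)
      simpa [hv1] using this
    have hG0 : h x - G x = 0 := by simp [hG_def, hv1]
    have hF : HasDerivAt (fun y => h y - G y)
        (d - (Real.cosh (c * (b - x)) * (-c) / Kb) * (N - 1) * h x) x := hd.sub d4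
    have hright : ∀ᶠ y in 𝓝[>] x, 0 ≤ h y - G y := by
      filter_upwards [Ioo_mem_nhdsGT hxb] with y hy
      have := (part1 x y hax hy.1 hy.2).1
      have h2 : G y ≤ h y := by
        rw [hG_def]
        calc (Real.sinh (c * (b - y)) / Kb) ^ (N - 1) * h x ≤ h y / h x * h x :=
              mul_le_mul_of_nonneg_right this hhx.le
          _ = h y := by field_simp
      linarith
    have hleft : ∀ᶠ y in 𝓝[<] x, h y - G y ≤ 0 := by
      filter_upwards [Ioo_mem_nhdsLT hax] with y hy
      have hhy : 0 < h y := hpos y ⟨hy.1, hy.2.trans hxb⟩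
      have hSy : 0 < Real.sinh (c * (b - y)) := hsinh _ (by linarith [hy.2])
      have h1 := (part1 y x hy.1 hy.2 hxb).1
      -- (Kb/Sy)^(N-1) ≤ h x / h y  ⟹  h y ≤ (Sy/Kb)^(N-1) * h x
      have hprod : (Real.sinh (c * (b - y)) / Kb) ^ (N - 1) * (Kb / Real.sinh (c * (b - y))) ^ (N - 1) = 1 := by
        rw [← Real.mul_rpow (div_nonneg hSy.le hKb.le) (div_nonneg hKb.le hSy.le),
          show Real.sinh (c * (b - y)) / Kb * (Kb / Real.sinh (c * (b - y))) = 1 by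
            field_simp]
        exact Real.one_rpow _
      have h2 : G y ≥ h y := by
        rw [hG_def]
        have h3 : (Kb / Real.sinh (c * (b - y))) ^ (N - 1) * h y ≤ h x := by
          calc (Kb / Real.sinh (c * (b - y))) ^ (N - 1) * h y ≤ h x / h y * h y :=
                mul_le_mul_of_nonneg_right h1 hhy.le
            _ = h x := by field_simp
        calc h y = (Real.sinh (c * (b - y)) / Kb) ^ (N - 1) *
              ((Kb / Real.sinh (c * (b - y))) ^ (N - 1) * h y) := by
                rw [← mul_assoc, hprod, one_mul]
          _ ≤ (Real.sinh (c * (b - y)) / Kb) ^ (N - 1) * h x :=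
                mul_le_mul_of_nonneg_left h3 (Real.rpow_nonneg (div_nonneg hSy.le hKb.le) _)
      linarith
    have hd0 := mcp_deriv_nonneg_aux hF hG0 hright hleft
    have h5 : (Real.cosh (c * (b - x)) * (-c) / Kb) * (N - 1) * h x ≤ d := by linarith
    rw [hsq]
    calc -((N - 1) * c) * (Real.cosh (c * (b - x)) / Kb)
        = ((Real.cosh (c * (b - x)) * (-c) / Kb) * (N - 1) * h x) / h x := by
          field_simp [hhx.ne', hKb.ne']
      _ ≤ d / h x := (div_le_div_iff_of_pos_right hhx).mpr h5
  · -- upper bound on d / h x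
    set G : ℝ → ℝ := fun y => (Real.sinh (c * (y - a)) / Ka) ^ (N - 1) * h x with hG_def
    have hv1 : Real.sinh (c * (x - a)) / Ka = 1 := div_self hKa.ne'
    have d1 : HasDerivAt (fun y => c * (y - a)) c x := by
      simpa using ((hasDerivAt_id x).sub_const a).const_mul c
    have d2 : HasDerivAt (fun y => Real.sinh (c * (y - a)) / Ka)
        (Real.cosh (c * (x - a)) * c / Ka) x := d1.sinh.div_const Ka
    have d4 : HasDerivAt G
        ((Real.cosh (c * (x - a)) * c / Ka) * (N - 1) * h x) x := by
      have := (d2.rpow_const (p := N - 1) (Or.inl (by rw [hv1]; exact one_ne_zero))).mul_const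
        (h x)
      simpa [hv1] using this
    have hG0 : h x - G x = 0 := by simp [hG_def, hv1]
    have hF : HasDerivAt (fun y => h y - G y)
        (d - (Real.cosh (c * (x - a)) * c / Ka) * (N - 1) * h x) x := hd.sub d4
    have hright : ∀ᶠ y in 𝓝[>] x, h y - G y ≤ 0 := by
      filter_upwards [Ioo_mem_nhdsGT hxb] with y hy
      have := (part1 x y hax hy.1 hy.2).2
      have h2 : h y ≤ G y := by
        rw [hG_def]
        calc h y = h y / h x * h x := by field_simp
          _ ≤ (Real.sinh (c * (y - a)) / Ka) ^ (N - 1) * h x :=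
              mul_le_mul_of_nonneg_right this hhx.le
      linarith
    have hleft : ∀ᶠ y in 𝓝[<] x, 0 ≤ h y - G y := by
      filter_upwards [Ioo_mem_nhdsLT hax] with y hy
      have hhy : 0 < h y := hpos y ⟨hy.1, hy.2.trans hxb⟩
      have hSy : 0 < Real.sinh (c * (y - a)) := hsinh _ (by linarith [hy.1])
      have h1 := (part1 y x hy.1 hy.2 hxb).2
      have hprod : (Real.sinh (c * (y - a)) / Ka) ^ (N - 1) * (Ka / Real.sinh (c * (y - a))) ^ (N - 1) = 1 := by
        rw [← Real.mul_rpow (div_nonneg hSy.le hKa.le) (div_nonneg hKa.le hSy.le),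
          show Real.sinh (c * (y - a)) / Ka * (Ka / Real.sinh (c * (y - a))) = 1 by
            field_simp]
        exact Real.one_rpow _
      have h2 : G y ≤ h y := by
        rw [hG_def]
        have h3 : h x ≤ (Ka / Real.sinh (c * (y - a))) ^ (N - 1) * h y := by
          calc h x = h x / h y * h y := by field_simp
            _ ≤ (Ka / Real.sinh (c * (y - a))) ^ (N - 1) * h y :=
                mul_le_mul_of_nonneg_right h1 hhy.le
        calc (Real.sinh (c * (y - a)) / Ka) ^ (N - 1) * h x
            ≤ (Real.sinh (c * (y - a)) / Ka) ^ (N - 1) *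
              ((Ka / Real.sinh (c * (y - a))) ^ (N - 1) * h y) :=
                mul_le_mul_of_nonneg_left h3 (Real.rpow_nonneg (div_nonneg hSy.le hKa.le) _)
          _ = h y := by rw [← mul_assoc, hprod, one_mul]
      linarith
    have hd0 := mcp_deriv_nonpos_aux hF hG0 hright hleft
    have h5 : d ≤ (Real.cosh (c * (x - a)) * c / Ka) * (N - 1) * h x := by linarith
    rw [hsq]
    calc d / h x ≤ ((Real.cosh (c * (x - a)) * c / Ka) * (N - 1) * h x) / h x :=
          (div_le_div_iff_of_pos_right hhx).mpr h5
      _ = (N - 1) * c * (Real.cosh (c * (x - a)) / Ka) := by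
          field_simp [hhx.ne', hKa.ne']
end

section
/- Let κ > 0 and N > 1 be real, let (a,b) be a nonempty bounded open real interval with b−a ≤ π·√((N−1)/κ), and let h be an MCP(κ,N) density on (a,b) which is positive at every point of (a,b). Set c := √(κ/(N−1)). Then: (i) for all x, y with a < x < y < b one has (sin(c·(b−y))/sin(c·(b−x)))^{N−1} ≤ h(y)/h(x) ≤ (sin(c·(y−a))/sin(c·(x−a)))^{N−1}; and (ii) for every x ∈ (a,b) at which h is differentiable with derivative h'(x), one has −√(κ·(N−1))·cos(c·(b−x))/sin(c·(b−x)) ≤ h'(x)/h(x) ≤ √(κ·(N−1))·cos(c·(x−a))/sin(c·(x−a)). -/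
open Set

private lemma deriv_nonpos_aux {F : ℝ → ℝ} {x b d : ℝ} (hxb : x < b)
    (hd : HasDerivAt F d x) (hle : ∀ y ∈ Set.Ioo x b, F y ≤ F x) : d ≤ 0 := by
  have h1 : Filter.Tendsto (slope F x) (nhdsWithin x (Set.Ioi x)) (nhds d) :=
    (hasDerivAt_iff_tendsto_slope.mp hd).mono_left
      (nhdsWithin_mono x fun y hy => hy.ne')
  refine le_of_tendsto h1 ?_
  filter_upwards [Ioo_mem_nhdsGT hxb] with y hy
  rw [slope_def_field]
  exact div_nonpos_of_nonpos_of_nonneg (sub_nonpos.2 (hle y hy)) (sub_nonneg.2 hy.1.le)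

/-- An `MCP(κ,N)` density on the set `I ⊆ ℝ`, for a constant positive curvature
parameter `κ`, with the explicit trigonometric distortion coefficients. -/
def IsMCPPosDensity (κ N : ℝ) (I : Set ℝ) (h : ℝ → ℝ) : Prop :=
  (∀ x ∈ I, 0 ≤ h x) ∧
    ∀ x₀ ∈ I, ∀ x₁ ∈ I, x₀ ≠ x₁ → ∀ t ∈ Set.Icc (0 : ℝ) 1,
      Real.sin (Real.sqrt (κ / (N - 1)) * ((1 - t) * |x₁ - x₀|)) /
          Real.sin (Real.sqrt (κ / (N - 1)) * |x₁ - x₀|) * h x₀ ^ (1 / (N - 1)) ≤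
        h ((1 - t) * x₀ + t * x₁) ^ (1 / (N - 1))

/-- Comparison estimates for `MCP(κ,N)` densities (`κ > 0`) on a bounded
open interval `(a,b)` of length at most `π·√((N-1)/κ)`, with `c = √(κ/(N-1))`. -/
theorem mcp_pos_density_comparison (κ N a b : ℝ) (h : ℝ → ℝ)
    (hκ : 0 < κ) (hN : 1 < N) (hab : a < b)
    (hdiam : b - a ≤ Real.pi * Real.sqrt ((N - 1) / κ))
    (hMCP : IsMCPPosDensity κ N (Set.Ioo a b) h)
    (hpos : ∀ x ∈ Set.Ioo a b, 0 < h x) :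
    (∀ x y : ℝ, a < x → x < y → y < b →
      (Real.sin (Real.sqrt (κ / (N - 1)) * (b - y)) /
          Real.sin (Real.sqrt (κ / (N - 1)) * (b - x))) ^ (N - 1) ≤ h y / h x ∧
        h y / h x ≤
          (Real.sin (Real.sqrt (κ / (N - 1)) * (y - a)) /
              Real.sin (Real.sqrt (κ / (N - 1)) * (x - a))) ^ (N - 1)) ∧
    (∀ x ∈ Set.Ioo a b, ∀ d : ℝ, HasDerivAt h d x →
      -Real.sqrt (κ * (N - 1)) *
            (Real.cos (Real.sqrt (κ / (N - 1)) * (b - x)) /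
              Real.sin (Real.sqrt (κ / (N - 1)) * (b - x))) ≤ d / h x ∧
        d / h x ≤ Real.sqrt (κ * (N - 1)) *
            (Real.cos (Real.sqrt (κ / (N - 1)) * (x - a)) /
              Real.sin (Real.sqrt (κ / (N - 1)) * (x - a)))) := by
  obtain ⟨hMCP0, hMCP⟩ := hMCP
  set c := Real.sqrt (κ / (N - 1)) with hc_def
  have hN1 : (0:ℝ) < N - 1 := by linarith
  have hc : 0 < c := Real.sqrt_pos.2 (div_pos hκ hN1)
  have hcba : c * (b - a) ≤ Real.pi := by
    have h1 : c * Real.sqrt ((N - 1) / κ) = 1 := by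
      rw [hc_def, ← Real.sqrt_mul (div_pos hκ hN1).le]
      rw [show κ / (N - 1) * ((N - 1) / κ) = 1 by field_simp]
      exact Real.sqrt_one
    calc c * (b - a) ≤ c * (Real.pi * Real.sqrt ((N - 1) / κ)) :=
          mul_le_mul_of_nonneg_left hdiam hc.le
      _ = Real.pi * (c * Real.sqrt ((N - 1) / κ)) := by ring
      _ = Real.pi := by rw [h1, mul_one]
  have hsin : ∀ z : ℝ, 0 < z → z < b - a → 0 < Real.sin (c * z) := by
    intro z h1 h2
    apply Real.sin_pos_of_pos_of_lt_pi (by positivity)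
    calc c * z < c * (b - a) := mul_lt_mul_of_pos_left h2 hc
      _ ≤ Real.pi := hcba
  have hKc : Real.sqrt (κ * (N - 1)) = (N - 1) * c := by
    rw [show κ * (N - 1) = (κ / (N - 1)) * (N - 1) ^ 2 by field_simp]
    rw [Real.sqrt_mul (div_pos hκ hN1).le, Real.sqrt_sq hN1.le, ← hc_def, mul_comm]
  -- Step S1: left-endpoint comparison at the level of h^p
  have S1 : ∀ x y : ℝ, a < x → x < y → y < b →
      Real.sin (c * (x - a)) * h y ^ (1 / (N - 1)) ≤
        Real.sin (c * (y - a)) * h x ^ (1 / (N - 1)) := by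
    intro x y hax hxy hyb
    have step : ∀ u ∈ Set.Ioo a x,
        Real.sin (c * (x - u)) * h y ^ (1 / (N - 1)) ≤
          Real.sin (c * (y - u)) * h x ^ (1 / (N - 1)) := by
      intro u hu
      have hyu : (0:ℝ) < y - u := by linarith [hu.2]
      set t := (y - x) / (y - u) with ht_def
      have ht0 : 0 ≤ t := div_nonneg (by linarith) hyu.le
      have ht1 : t ≤ 1 := (div_le_one hyu).2 (by linarith [hu.2])
      have habs : |u - y| = y - u := by rw [abs_of_nonpos (by linarith)]; ring
      have htmul : t * (y - u) = y - x := div_mul_cancel₀ _ hyu.ne'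
      have e1 : (1 - t) * (y - u) = x - u := by nlinarith [htmul]
      have e2 : (1 - t) * y + t * u = x := by nlinarith [htmul]
      have key := hMCP y ⟨lt_trans hax hxy, hyb⟩ u ⟨hu.1, by linarith [hu.2]⟩
        (by intro hE; linarith [hu.2]) t ⟨ht0, ht1⟩
      rw [habs, e2] at key
      rw [show (1 - t) * (y - u) = x - u from e1] at key
      have hsinyu : 0 < Real.sin (c * (y - u)) := hsin _ hyu (by linarith [hu.1])
      rw [div_mul_eq_mul_div, div_le_iff₀ hsinyu] at key
      calc Real.sin (c * (x - u)) * h y ^ (1 / (N - 1))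
          ≤ h x ^ (1 / (N - 1)) * Real.sin (c * (y - u)) := key
        _ = Real.sin (c * (y - u)) * h x ^ (1 / (N - 1)) := by ring
    have tendL : Filter.Tendsto (fun u => Real.sin (c * (x - u)) * h y ^ (1 / (N - 1)))
        (nhdsWithin a (Set.Ioi a)) (nhds (Real.sin (c * (x - a)) * h y ^ (1 / (N - 1)))) :=
      Filter.Tendsto.mono_left
        ((((Real.continuous_sin.comp (continuous_const.mul
          (continuous_const.sub continuous_id))).mul continuous_const)).tendsto a)
        nhdsWithin_le_nhds
    have tendR : Filter.Tendsto (fun u => Real.sin (c * (y - u)) * h x ^ (1 / (N - 1)))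
        (nhdsWithin a (Set.Ioi a)) (nhds (Real.sin (c * (y - a)) * h x ^ (1 / (N - 1)))) :=
      Filter.Tendsto.mono_left
        ((((Real.continuous_sin.comp (continuous_const.mul
          (continuous_const.sub continuous_id))).mul continuous_const)).tendsto a)
        nhdsWithin_le_nhds
    refine le_of_tendsto_of_tendsto tendL tendR ?_
    filter_upwards [Ioo_mem_nhdsGT hax] with u hu using step u hu
  -- Step S2: right-endpoint comparison at the level of h^p
  have S2 : ∀ x y : ℝ, a < x → x < y → y < b →
      Real.sin (c * (b - y)) * h x ^ (1 / (N - 1)) ≤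
        Real.sin (c * (b - x)) * h y ^ (1 / (N - 1)) := by
    intro x y hax hxy hyb
    have step : ∀ v ∈ Set.Ioo y b,
        Real.sin (c * (v - y)) * h x ^ (1 / (N - 1)) ≤
          Real.sin (c * (v - x)) * h y ^ (1 / (N - 1)) := by
      intro v hv
      have hvx : (0:ℝ) < v - x := by linarith [hv.1]
      set t := (y - x) / (v - x) with ht_def
      have ht0 : 0 ≤ t := div_nonneg (by linarith) hvx.le
      have ht1 : t ≤ 1 := (div_le_one hvx).2 (by linarith [hv.1])
      have habs : |v - x| = v - x := abs_of_pos hvx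
      have htmul : t * (v - x) = y - x := div_mul_cancel₀ _ hvx.ne'
      have e1 : (1 - t) * (v - x) = v - y := by nlinarith [htmul]
      have e2 : (1 - t) * x + t * v = y := by nlinarith [htmul]
      have key := hMCP x ⟨hax, lt_trans hxy hyb⟩ v ⟨by linarith [hv.1], hv.2⟩
        (by intro hE; linarith [hv.1]) t ⟨ht0, ht1⟩
      rw [habs, e2] at key
      rw [show (1 - t) * (v - x) = v - y from e1] at key
      have hsinvx : 0 < Real.sin (c * (v - x)) := hsin _ hvx (by linarith [hv.2])
      rw [div_mul_eq_mul_div, div_le_iff₀ hsinvx] at key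
      calc Real.sin (c * (v - y)) * h x ^ (1 / (N - 1))
          ≤ h y ^ (1 / (N - 1)) * Real.sin (c * (v - x)) := key
        _ = Real.sin (c * (v - x)) * h y ^ (1 / (N - 1)) := by ring
    have tendL : Filter.Tendsto (fun v => Real.sin (c * (v - y)) * h x ^ (1 / (N - 1)))
        (nhdsWithin b (Set.Iio b)) (nhds (Real.sin (c * (b - y)) * h x ^ (1 / (N - 1)))) :=
      Filter.Tendsto.mono_left
        ((((Real.continuous_sin.comp (continuous_const.mul
          (continuous_id.sub continuous_const))).mul continuous_const)).tendsto b)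
        nhdsWithin_le_nhds
    have tendR : Filter.Tendsto (fun v => Real.sin (c * (v - x)) * h y ^ (1 / (N - 1)))
        (nhdsWithin b (Set.Iio b)) (nhds (Real.sin (c * (b - x)) * h y ^ (1 / (N - 1)))) :=
      Filter.Tendsto.mono_left
        ((((Real.continuous_sin.comp (continuous_const.mul
          (continuous_id.sub continuous_const))).mul continuous_const)).tendsto b)
        nhdsWithin_le_nhds
    refine le_of_tendsto_of_tendsto tendL tendR ?_
    filter_upwards [Ioo_mem_nhdsLT hyb] with v hv using step v hv
  -- raising to the power N - 1
  have T : ∀ A B X Y : ℝ, 0 ≤ A → 0 ≤ B → 0 < X → 0 < Y →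
      A * Y ^ (1 / (N - 1)) ≤ B * X ^ (1 / (N - 1)) →
      A ^ (N - 1) * Y ≤ B ^ (N - 1) * X := by
    intro A B X Y hA hB hX hY hle
    have h1 := Real.rpow_le_rpow (by positivity) hle hN1.le
    rw [Real.mul_rpow hA (by positivity), Real.mul_rpow hB (by positivity),
      ← Real.rpow_mul hY.le, ← Real.rpow_mul hX.le, one_div,
      inv_mul_cancel₀ hN1.ne', Real.rpow_one, Real.rpow_one] at h1
    exact h1
  have T1 : ∀ x y : ℝ, a < x → x < y → y < b →
      Real.sin (c * (x - a)) ^ (N - 1) * h y ≤ Real.sin (c * (y - a)) ^ (N - 1) * h x := by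
    intro x y hax hxy hyb
    exact T _ _ _ _ (hsin _ (by linarith) (by linarith)).le
      (hsin _ (by linarith) (by linarith)).le
      (hpos x ⟨hax, by linarith⟩) (hpos y ⟨by linarith, hyb⟩) (S1 x y hax hxy hyb)
  have T2 : ∀ x y : ℝ, a < x → x < y → y < b →
      Real.sin (c * (b - y)) ^ (N - 1) * h x ≤ Real.sin (c * (b - x)) ^ (N - 1) * h y := by
    intro x y hax hxy hyb
    exact T _ _ _ _ (hsin _ (by linarith) (by linarith)).le
      (hsin _ (by linarith) (by linarith)).le
      (hpos y ⟨by linarith, hyb⟩) (hpos x ⟨hax, by linarith⟩) (S2 x y hax hxy hyb)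
  constructor
  · -- part (i)
    intro x y hax hxy hyb
    have hhx : 0 < h x := hpos x ⟨hax, by linarith⟩
    have hsbx : 0 < Real.sin (c * (b - x)) := hsin _ (by linarith) (by linarith)
    have hsby : 0 < Real.sin (c * (b - y)) := hsin _ (by linarith) (by linarith)
    have hsxa : 0 < Real.sin (c * (x - a)) := hsin _ (by linarith) (by linarith)
    have hsya : 0 < Real.sin (c * (y - a)) := hsin _ (by linarith) (by linarith)
    constructor
    · rw [Real.div_rpow hsby.le hsbx.le,
        div_le_div_iff₀ (Real.rpow_pos_of_pos hsbx _) hhx]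
      have := T2 x y hax hxy hyb
      linarith
    · rw [Real.div_rpow hsya.le hsxa.le,
        div_le_div_iff₀ hhx (Real.rpow_pos_of_pos hsxa _)]
      have := T1 x y hax hxy hyb
      linarith
  · -- part (ii)
    rintro x ⟨hax, hxb⟩ d hd
    have hhx : 0 < h x := hpos x ⟨hax, hxb⟩
    have hsxa : 0 < Real.sin (c * (x - a)) := hsin _ (by linarith) (by linarith)
    have hsbx : 0 < Real.sin (c * (b - x)) := hsin _ (by linarith) (by linarith)
    constructor
    · -- lower bound on d / h x
      have hlin : HasDerivAt (fun y : ℝ => c * (b - y)) (-c) x := by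
        simpa using ((hasDerivAt_id x).const_sub b).const_mul c
      have hsin' : HasDerivAt (fun y => Real.sin (c * (b - y)))
          (Real.cos (c * (b - x)) * -c) x :=
        by have := (Real.hasDerivAt_sin (c * (b - x))).comp x hlin; exact this
      have hrpow : HasDerivAt (fun y => Real.sin (c * (b - y)) ^ (N - 1))
          ((N - 1) * Real.sin (c * (b - x)) ^ (N - 1 - 1) *
            (Real.cos (c * (b - x)) * -c)) x :=
        by have := (Real.hasDerivAt_rpow_const (p := N - 1) (Or.inl hsbx.ne')).comp x hsin'; exact this
      have hG : HasDerivAt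
          (fun y => Real.sin (c * (b - y)) ^ (N - 1) * h x -
            Real.sin (c * (b - x)) ^ (N - 1) * h y)
          ((N - 1) * Real.sin (c * (b - x)) ^ (N - 1 - 1) *
            (Real.cos (c * (b - x)) * -c) * h x -
            Real.sin (c * (b - x)) ^ (N - 1) * d) x :=
        (hrpow.mul_const (h x)).sub (hd.const_mul _)
      have hder := deriv_nonpos_aux hxb hG ?_
      · have hq : 0 < Real.sin (c * (b - x)) ^ (N - 1 - 1) :=
          Real.rpow_pos_of_pos hsbx _
        have hsplit : Real.sin (c * (b - x)) ^ (N - 1) =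
            Real.sin (c * (b - x)) ^ (N - 1 - 1) * Real.sin (c * (b - x)) := by
          rw [← Real.rpow_add_one hsbx.ne' (N - 1 - 1)]; congr 1; ring
        rw [hKc, ← mul_div_assoc, div_le_div_iff₀ hsbx hhx]
        rw [hsplit] at hder
        nlinarith [hder, hq, mul_pos hq hhx, mul_pos hq hsbx]
      · intro y hy
        have hT := T2 x y hax hy.1 hy.2
        linarith
    · -- upper bound on d / h x
      have hlin : HasDerivAt (fun y : ℝ => c * (y - a)) c x := by
        simpa using ((hasDerivAt_id x).sub_const a).const_mul c
      have hsin' : HasDerivAt (fun y => Real.sin (c * (y - a)))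
          (Real.cos (c * (x - a)) * c) x :=
        by have := (Real.hasDerivAt_sin (c * (x - a))).comp x hlin; exact this
      have hrpow : HasDerivAt (fun y => Real.sin (c * (y - a)) ^ (N - 1))
          ((N - 1) * Real.sin (c * (x - a)) ^ (N - 1 - 1) *
            (Real.cos (c * (x - a)) * c)) x :=
        by have := (Real.hasDerivAt_rpow_const (p := N - 1) (Or.inl hsxa.ne')).comp x hsin'; exact this
      have hF : HasDerivAt
          (fun y => Real.sin (c * (x - a)) ^ (N - 1) * h y -
            Real.sin (c * (y - a)) ^ (N - 1) * h x)
          (Real.sin (c * (x - a)) ^ (N - 1) * d -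
            (N - 1) * Real.sin (c * (x - a)) ^ (N - 1 - 1) *
              (Real.cos (c * (x - a)) * c) * h x) x :=
        (hd.const_mul _).sub (hrpow.mul_const (h x))
      have hder := deriv_nonpos_aux hxb hF ?_
      · have hq : 0 < Real.sin (c * (x - a)) ^ (N - 1 - 1) :=
          Real.rpow_pos_of_pos hsxa _
        have hsplit : Real.sin (c * (x - a)) ^ (N - 1) =
            Real.sin (c * (x - a)) ^ (N - 1 - 1) * Real.sin (c * (x - a)) := by
          rw [← Real.rpow_add_one hsxa.ne' (N - 1 - 1)]; congr 1; ring
        rw [hKc, ← mul_div_assoc, div_le_div_iff₀ hhx hsxa]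
        rw [hsplit] at hder
        nlinarith [hder, hq, mul_pos hq hhx, mul_pos hq hsxa]
      · intro y hy
        have hT := T1 x y hax hy.1 hy.2
        linarith
end

section
/- Let κ < 0 and N > 1 be real, let (a,b) be a nonempty bounded open real interval, and let h be an MCP(κ,N) density on (a,b). Set c := √(−κ/(N−1)). Then for every x ∈ (a,b) one has h(x) ≤ (1/(b−a)) · (∫₀¹ (sinh(c·r·(b−a))/sinh(c·(b−a)))^{N−1} dr)^{−1} · ∫_{(a,b)} h(s) ds, where the integrals are Lebesgue integrals. -/
open Set MeasureTheory

lemma aux_g_nonpos {r : ℝ} (hr0 : 0 ≤ r) (hr1 : r ≤ 1) {u : ℝ} (hu : 0 ≤ u) :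
    r * Real.cosh (r * u) * Real.sinh u - Real.sinh (r * u) * Real.cosh u ≤ 0 := by
  set g : ℝ → ℝ := fun u => r * Real.cosh (r * u) * Real.sinh u - Real.sinh (r * u) * Real.cosh u
    with hg
  have hderiv : ∀ v : ℝ, HasDerivAt g ((r ^ 2 - 1) * (Real.sinh (r * v) * Real.sinh v)) v := by
    intro v
    have hm : HasDerivAt (fun w : ℝ => r * w) r v :=
      (hasDerivAt_id v).const_mul r |>.congr_deriv (by ring)
    have hsc : HasDerivAt (fun w : ℝ => Real.sinh (r * w)) (Real.cosh (r * v) * r) v :=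
      (Real.hasDerivAt_sinh (r * v)).comp v hm
    have hcc : HasDerivAt (fun w : ℝ => Real.cosh (r * w)) (Real.sinh (r * v) * r) v :=
      (Real.hasDerivAt_cosh (r * v)).comp v hm
    have := (((hcc.const_mul r).mul (Real.hasDerivAt_sinh v)).sub
      (hsc.mul (Real.hasDerivAt_cosh v)))
    refine this.congr_deriv ?_
    ring
  have hanti : AntitoneOn g (Ici (0:ℝ)) := by
    apply antitoneOn_of_deriv_nonpos (convex_Ici 0)
    · exact fun v _ => ((hderiv v).continuousAt).continuousWithinAt
    · exact fun v _ => ((hderiv v).differentiableAt).differentiableWithinAt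
    · intro v hv
      rw [interior_Ici] at hv
      rw [(hderiv v).deriv]
      rw [mem_Ioi] at hv
      have h1 : 0 ≤ Real.sinh (r * v) := by
        rw [Real.sinh_nonneg_iff]; exact mul_nonneg hr0 (le_of_lt hv)
      have h2 : 0 ≤ Real.sinh v := by
        rw [Real.sinh_nonneg_iff]; exact le_of_lt hv
      have h3 : r ^ 2 ≤ 1 := by nlinarith
      nlinarith [mul_nonneg h1 h2]
  have h0 : g 0 = 0 := by simp [hg]
  have := hanti (self_mem_Ici) hu hu
  rw [h0] at this
  exact this

lemma sinh_cross {r L D : ℝ} (hr0 : 0 ≤ r) (hr1 : r ≤ 1) (hL : 0 ≤ L) (hLD : L ≤ D) :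
    Real.sinh (r * D) * Real.sinh L ≤ Real.sinh (r * L) * Real.sinh D := by
  rcases eq_or_lt_of_le hL with h0 | h0
  · simp [← h0]
  set f : ℝ → ℝ := fun u => Real.sinh (r * u) / Real.sinh u with hf
  have hsinh_pos : ∀ u : ℝ, 0 < u → 0 < Real.sinh u := fun u hu => Real.sinh_pos_iff.mpr hu
  have hderiv : ∀ v : ℝ, 0 < v → HasDerivAt f
      ((Real.cosh (r * v) * r * Real.sinh v - Real.sinh (r * v) * Real.cosh v) /
        (Real.sinh v) ^ 2) v := by
    intro v hv
    have hm : HasDerivAt (fun w : ℝ => r * w) r v :=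
      (hasDerivAt_id v).const_mul r |>.congr_deriv (by ring)
    have hsc : HasDerivAt (fun w : ℝ => Real.sinh (r * w)) (Real.cosh (r * v) * r) v :=
      (Real.hasDerivAt_sinh (r * v)).comp v hm
    exact hsc.div (Real.hasDerivAt_sinh v) (ne_of_gt (hsinh_pos v hv))
  have hanti : AntitoneOn f (Ioi (0:ℝ)) := by
    apply antitoneOn_of_deriv_nonpos (convex_Ioi 0)
    · exact fun v hv => ((hderiv v hv).continuousAt).continuousWithinAt
    · intro v hv
      rw [interior_Ioi] at hv
      exact ((hderiv v hv).differentiableAt).differentiableWithinAt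
    · intro v hv
      rw [interior_Ioi] at hv
      rw [(hderiv v hv).deriv]
      apply div_nonpos_of_nonpos_of_nonneg
      · have := aux_g_nonpos hr0 hr1 (le_of_lt hv)
        nlinarith
      · positivity
  have h2 := hanti (mem_Ioi.mpr h0) (mem_Ioi.mpr (lt_of_lt_of_le h0 hLD)) hLD
  rw [hf] at h2
  simp only at h2
  rw [div_le_div_iff₀ (hsinh_pos D (lt_of_lt_of_le h0 hLD)) (hsinh_pos L h0)] at h2
  exact h2

set_option maxHeartbeats 2000000 in
/-- Zeroth-order uniform a priori estimate for `MCP(κ,N)` densities (`κ < 0`)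
on a bounded open interval `(a,b)`, with `c = √(-κ/(N-1))`. -/
theorem mcp_neg_density_sup_bound (κ N a b : ℝ) (h : ℝ → ℝ)
    (hκ : κ < 0) (hN : 1 < N) (hab : a < b)
    (hMCP : IsMCPNegDensity κ N (Set.Ioo a b) h) :
    ∀ x ∈ Set.Ioo a b,
      h x ≤ (1 / (b - a)) *
          (∫ r in (0:ℝ)..1,
              (Real.sinh (Real.sqrt (-κ / (N - 1)) * (r * (b - a))) /
                Real.sinh (Real.sqrt (-κ / (N - 1)) * (b - a))) ^ (N - 1))⁻¹ *
          ∫ s in Set.Ioo a b, h s := by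
  set c := Real.sqrt (-κ / (N - 1)) with hcdef
  obtain ⟨hpos, hineq⟩ := hMCP
  have hN1 : (0:ℝ) < N - 1 := by linarith
  have hc : 0 < c := Real.sqrt_pos.mpr (div_pos (by linarith) hN1)
  clear_value c
  have hNexp : (0:ℝ) ≤ N - 1 := le_of_lt hN1
  have hp1 : (1 / (N - 1)) * (N - 1) = 1 := by field_simp
  have hsinh_pos : ∀ u : ℝ, 0 < u → 0 < Real.sinh (c * u) := fun u hu =>
    Real.sinh_pos_iff.mpr (by positivity)
  -- key pointwise consequence of MCP, at the level of h itself
  have hstep : ∀ x₀ ∈ Ioo a b, ∀ x₁ ∈ Ioo a b, ∀ y : ℝ, x₀ ≠ x₁ →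
      ((x₀ ≤ y ∧ y ≤ x₁) ∨ (x₁ ≤ y ∧ y ≤ x₀)) →
      (Real.sinh (c * |x₁ - y|) / Real.sinh (c * |x₁ - x₀|)) ^ (N - 1) * h x₀ ≤ h y := by
    intro x₀ hx₀ x₁ hx₁ y hne hbet
    have hsub : x₁ - x₀ ≠ 0 := sub_ne_zero.mpr (Ne.symm hne)
    set t := (y - x₀) / (x₁ - x₀) with htdef
    have hyIoo : y ∈ Ioo a b := by
      rcases hbet with ⟨h1, h2⟩ | ⟨h1, h2⟩
      · exact ⟨lt_of_lt_of_le hx₀.1 h1, lt_of_le_of_lt h2 hx₁.2⟩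
      · exact ⟨lt_of_lt_of_le hx₁.1 h1, lt_of_le_of_lt h2 hx₀.2⟩
    have ht : t ∈ Icc (0:ℝ) 1 := by
      rcases hbet with ⟨h1, h2⟩ | ⟨h1, h2⟩
      · have hlt : x₀ < x₁ := lt_of_le_of_ne (le_trans h1 h2) hne
        constructor
        · exact div_nonneg (by linarith) (by linarith)
        · rw [div_le_one (by linarith)]; linarith
      · have hlt : x₁ < x₀ := lt_of_le_of_ne (le_trans h1 h2) (Ne.symm hne)
        constructor
        · rw [htdef, le_div_iff_of_neg (by linarith : x₁ - x₀ < 0)]; linarith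
        · rw [htdef, div_le_iff_of_neg (by linarith : x₁ - x₀ < 0)]; linarith
    have hpt : (1 - t) * x₀ + t * x₁ = y := by
      rw [htdef]; field_simp; try ring
    have habs : (1 - t) * |x₁ - x₀| = |x₁ - y| := by
      rcases hbet with ⟨h1, h2⟩ | ⟨h1, h2⟩
      · have hlt : x₀ < x₁ := lt_of_le_of_ne (le_trans h1 h2) hne
        rw [abs_of_pos (by linarith : (0:ℝ) < x₁ - x₀), abs_of_nonneg (by linarith : (0:ℝ) ≤ x₁ - y)]
        rw [htdef]; field_simp; try ring
      · have hlt : x₁ < x₀ := lt_of_le_of_ne (le_trans h1 h2) (Ne.symm hne)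
        rw [abs_of_neg (by linarith : x₁ - x₀ < 0), abs_of_nonpos (by linarith : x₁ - y ≤ 0)]
        rw [htdef]; field_simp; try ring
    have hkey := hineq x₀ hx₀ x₁ hx₁ hne t ht
    rw [← hcdef] at hkey
    rw [habs, hpt] at hkey
    have hA0 : 0 ≤ Real.sinh (c * |x₁ - y|) / Real.sinh (c * |x₁ - x₀|) := by
      apply div_nonneg
      · rw [Real.sinh_nonneg_iff]; positivity
      · exact le_of_lt (hsinh_pos _ (abs_pos.mpr hsub))
    have h₀ : 0 ≤ h x₀ := hpos x₀ hx₀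
    have hy0 : 0 ≤ h y := hpos y hyIoo
    have hlhs : 0 ≤ Real.sinh (c * |x₁ - y|) / Real.sinh (c * |x₁ - x₀|) * h x₀ ^ (1/(N-1)) :=
      mul_nonneg hA0 (Real.rpow_nonneg h₀ _)
    have hfin := Real.rpow_le_rpow hlhs hkey hNexp
    rw [Real.mul_rpow hA0 (Real.rpow_nonneg h₀ _), ← Real.rpow_mul h₀, ← Real.rpow_mul hy0,
      hp1, Real.rpow_one, Real.rpow_one] at hfin
    exact hfin
  -- continuity of h on (a,b)
  have hcont : ContinuousOn h (Ioo a b) := by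
    intro x hx
    have hx1 : a < x := hx.1
    have hx2 : x < b := hx.2
    set m1 := (a + x)/2 with hm1
    set m2 := (x + b)/2 with hm2
    have hm1x : m1 < x := by rw [hm1]; linarith
    have hm1a : a < m1 := by rw [hm1]; linarith
    have hxm2 : x < m2 := by rw [hm2]; linarith
    have hm2b : m2 < b := by rw [hm2]; linarith
    have hm1I : m1 ∈ Ioo a b := ⟨hm1a, by linarith⟩
    have hm2I : m2 ∈ Ioo a b := ⟨by linarith, hm2b⟩
    set A : ℝ → ℝ :=
      fun y => (Real.sinh (c*(y - m1)) / Real.sinh (c*(x - m1))) ^ (N-1) * h x with hA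
    set B : ℝ → ℝ :=
      fun y => (Real.sinh (c*(m2 - y)) / Real.sinh (c*(m2 - x))) ^ (N-1) * h x with hB
    have hAx : A x = h x := by
      rw [hA]; simp only
      rw [div_self (ne_of_gt (hsinh_pos _ (by linarith))), Real.one_rpow, one_mul]
    have hBx : B x = h x := by
      rw [hB]; simp only
      rw [div_self (ne_of_gt (hsinh_pos _ (by linarith))), Real.one_rpow, one_mul]
    have hlow : ∀ y ∈ Ioo m1 m2, min (A y) (B y) ≤ h y := by
      intro y hy
      rcases lt_trichotomy y x with hlt | heq | hgt
      · refine le_trans (min_le_left _ _) ?_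
        have hst := hstep x hx m1 hm1I y (ne_of_gt hm1x)
          (Or.inr ⟨le_of_lt hy.1, le_of_lt hlt⟩)
        have e1 : |m1 - y| = y - m1 := by
          rw [abs_sub_comm]; exact abs_of_nonneg (by linarith [hy.1])
        have e2 : |m1 - x| = x - m1 := by
          rw [abs_sub_comm]; exact abs_of_nonneg (by linarith)
        rw [e1, e2] at hst
        simpa [hA] using hst
      · subst heq; rw [hAx, hBx, min_self]
      · refine le_trans (min_le_right _ _) ?_
        have hst := hstep x hx m2 hm2I y (ne_of_lt hxm2)
          (Or.inl ⟨le_of_lt hgt, le_of_lt hy.2⟩)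
        have e1 : |m2 - y| = m2 - y := abs_of_nonneg (by linarith [hy.2])
        have e2 : |m2 - x| = m2 - x := abs_of_nonneg (by linarith)
        rw [e1, e2] at hst
        simpa [hB] using hst
    have hupp : ∀ y ∈ Ioo m1 m2, h y ≤ max (A y) (B y) := by
      intro y hy
      have hyI : y ∈ Ioo a b := ⟨by linarith [hy.1], by linarith [hy.2]⟩
      rcases lt_trichotomy y x with hlt | heq | hgt
      · refine le_trans ?_ (le_max_right _ _)
        have hst := hstep y hyI m2 hm2I x (ne_of_lt (by linarith : y < m2))
          (Or.inl ⟨le_of_lt hlt, le_of_lt hxm2⟩)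
        have e1 : |m2 - x| = m2 - x := abs_of_nonneg (by linarith)
        have e2 : |m2 - y| = m2 - y := abs_of_nonneg (by linarith [hy.1])
        rw [e1, e2] at hst
        have hS1 : 0 < Real.sinh (c*(m2 - y)) := hsinh_pos _ (by linarith [hy.1])
        have hS2 : 0 < Real.sinh (c*(m2 - x)) := hsinh_pos _ (by linarith)
        have hBcoef : (0:ℝ) ≤ (Real.sinh (c*(m2 - y)) / Real.sinh (c*(m2 - x))) ^ (N-1) :=
          Real.rpow_nonneg (le_of_lt (div_pos hS1 hS2)) _
        have hprod : (Real.sinh (c*(m2 - y)) / Real.sinh (c*(m2 - x))) ^ (N-1) *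
            (Real.sinh (c*(m2 - x)) / Real.sinh (c*(m2 - y))) ^ (N-1) = 1 := by
          rw [← Real.mul_rpow (le_of_lt (div_pos hS1 hS2)) (le_of_lt (div_pos hS2 hS1))]
          rw [div_mul_div_comm, mul_comm (Real.sinh (c*(m2 - y))),
            div_self (by positivity), Real.one_rpow]
        calc h y = (Real.sinh (c*(m2 - y)) / Real.sinh (c*(m2 - x))) ^ (N-1) *
              ((Real.sinh (c*(m2 - x)) / Real.sinh (c*(m2 - y))) ^ (N-1) * h y) := by
              rw [← mul_assoc, hprod, one_mul]
          _ ≤ (Real.sinh (c*(m2 - y)) / Real.sinh (c*(m2 - x))) ^ (N-1) * h x :=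
              mul_le_mul_of_nonneg_left hst hBcoef
          _ = B y := by rw [hB]
      · subst heq; rw [hAx]; exact le_max_left _ _
      · refine le_trans ?_ (le_max_left _ _)
        have hst := hstep y hyI m1 hm1I x (ne_of_gt (by linarith : m1 < y))
          (Or.inr ⟨le_of_lt hm1x, le_of_lt hgt⟩)
        have e1 : |m1 - x| = x - m1 := by
          rw [abs_sub_comm]; exact abs_of_nonneg (by linarith)
        have e2 : |m1 - y| = y - m1 := by
          rw [abs_sub_comm]; exact abs_of_nonneg (by linarith [hy.1])
        rw [e1, e2] at hst
        have hS1 : 0 < Real.sinh (c*(y - m1)) := hsinh_pos _ (by linarith)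
        have hS2 : 0 < Real.sinh (c*(x - m1)) := hsinh_pos _ (by linarith)
        have hAcoef : (0:ℝ) ≤ (Real.sinh (c*(y - m1)) / Real.sinh (c*(x - m1))) ^ (N-1) :=
          Real.rpow_nonneg (le_of_lt (div_pos hS1 hS2)) _
        have hprod : (Real.sinh (c*(y - m1)) / Real.sinh (c*(x - m1))) ^ (N-1) *
            (Real.sinh (c*(x - m1)) / Real.sinh (c*(y - m1))) ^ (N-1) = 1 := by
          rw [← Real.mul_rpow (le_of_lt (div_pos hS1 hS2)) (le_of_lt (div_pos hS2 hS1))]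
          rw [div_mul_div_comm, mul_comm (Real.sinh (c*(y - m1))),
            div_self (by positivity), Real.one_rpow]
        calc h y = (Real.sinh (c*(y - m1)) / Real.sinh (c*(x - m1))) ^ (N-1) *
              ((Real.sinh (c*(x - m1)) / Real.sinh (c*(y - m1))) ^ (N-1) * h y) := by
              rw [← mul_assoc, hprod, one_mul]
          _ ≤ (Real.sinh (c*(y - m1)) / Real.sinh (c*(x - m1))) ^ (N-1) * h x :=
              mul_le_mul_of_nonneg_left hst hAcoef
          _ = A y := by rw [hA]
    have hEv : Ioo m1 m2 ∈ nhdsWithin x (Ioo a b) :=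
      mem_nhdsWithin_of_mem_nhds (Ioo_mem_nhds hm1x hxm2)
    have htendA : Filter.Tendsto A (nhdsWithin x (Ioo a b)) (nhds (h x)) := by
      have hca : ContinuousAt A x := by
        rw [hA]
        apply ContinuousAt.mul ?_ continuousAt_const
        apply ContinuousAt.rpow_const ?_ (Or.inr hNexp)
        exact (Continuous.div_const (by fun_prop) _).continuousAt
      rw [← hAx]
      exact hca.continuousWithinAt
    have htendB : Filter.Tendsto B (nhdsWithin x (Ioo a b)) (nhds (h x)) := by
      have hcb : ContinuousAt B x := by
        rw [hB]
        apply ContinuousAt.mul ?_ continuousAt_const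
        apply ContinuousAt.rpow_const ?_ (Or.inr hNexp)
        exact (Continuous.div_const (by fun_prop) _).continuousAt
      rw [← hBx]
      exact hcb.continuousWithinAt
    have htmin : Filter.Tendsto (fun y => min (A y) (B y)) (nhdsWithin x (Ioo a b))
        (nhds (h x)) := by
      have := htendA.min htendB
      rwa [min_self] at this
    have htmax : Filter.Tendsto (fun y => max (A y) (B y)) (nhdsWithin x (Ioo a b))
        (nhds (h x)) := by
      have := htendA.max htendB
      rwa [max_self] at this
    exact tendsto_of_tendsto_of_tendsto_of_le_of_le' htmin htmax
      (Filter.eventually_of_mem hEv hlow) (Filter.eventually_of_mem hEv hupp)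
  -- now fix x
  intro x hx
  have hx1 : a < x := hx.1
  have hx2 : x < b := hx.2
  have hba : (0:ℝ) < b - a := sub_pos.mpr hab
  set m1 := (a + x)/2 with hm1
  set m2 := (x + b)/2 with hm2
  have hm1x : m1 < x := by rw [hm1]; linarith
  have hm1a : a < m1 := by rw [hm1]; linarith
  have hxm2 : x < m2 := by rw [hm2]; linarith
  have hm2b : m2 < b := by rw [hm2]; linarith
  have hm1I : m1 ∈ Ioo a b := ⟨hm1a, by linarith⟩
  have hm2I : m2 ∈ Ioo a b := ⟨by linarith, hm2b⟩
  set d1 : ℝ := (Real.sinh (c*(m2 - x)) / Real.sinh (c*(b - a))) ^ (N-1) with hd1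
  set d2 : ℝ := (Real.sinh (c*(x - m1)) / Real.sinh (c*(b - a))) ^ (N-1) with hd2
  clear_value m1 m2
  have hd1pos : 0 < d1 := Real.rpow_pos_of_pos
    (div_pos (hsinh_pos _ (by linarith)) (hsinh_pos _ hba)) _
  have hd2pos : 0 < d2 := Real.rpow_pos_of_pos
    (div_pos (hsinh_pos _ (by linarith)) (hsinh_pos _ hba)) _
  clear_value d1 d2
  have hbound : ∀ y ∈ Ioo a b, h y ≤ max (h x) (max (d1⁻¹ * h x) (d2⁻¹ * h x)) := by
    intro y hy
    rcases lt_trichotomy y x with hlt | heq | hgt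
    · refine le_trans ?_ (le_trans (le_max_left _ _) (le_max_right _ _))
      have hst := hstep y hy m2 hm2I x (ne_of_lt (by linarith : y < m2))
        (Or.inl ⟨le_of_lt hlt, le_of_lt hxm2⟩)
      have e1 : |m2 - x| = m2 - x := abs_of_nonneg (by linarith)
      have e2 : |m2 - y| = m2 - y := abs_of_nonneg (by linarith)
      rw [e1, e2] at hst
      have hq : d1 ≤ (Real.sinh (c*(m2 - x)) / Real.sinh (c*(m2 - y))) ^ (N-1) := by
        rw [hd1]
        apply Real.rpow_le_rpow (le_of_lt (div_pos (hsinh_pos _ (by linarith)) (hsinh_pos _ hba)))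
          ?_ hNexp
        apply div_le_div_of_nonneg_left (le_of_lt (hsinh_pos _ (by linarith)))
          (hsinh_pos _ (by linarith))
        rw [Real.sinh_le_sinh]
        have : m2 - y ≤ b - a := by linarith [hy.1]
        nlinarith
      have hd1hy : d1 * h y ≤ h x := le_trans
        (mul_le_mul_of_nonneg_right hq (hpos y hy)) hst
      calc h y = d1⁻¹ * (d1 * h y) := by
            rw [← mul_assoc, inv_mul_cancel₀ (ne_of_gt hd1pos), one_mul]
        _ ≤ d1⁻¹ * h x := mul_le_mul_of_nonneg_left hd1hy (le_of_lt (inv_pos.mpr hd1pos))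
    · subst heq; exact le_max_left _ _
    · refine le_trans ?_ (le_trans (le_max_right _ _) (le_max_right _ _))
      have hst := hstep y hy m1 hm1I x (ne_of_gt (by linarith : m1 < y))
        (Or.inr ⟨le_of_lt hm1x, le_of_lt hgt⟩)
      have e1 : |m1 - x| = x - m1 := by rw [abs_sub_comm]; exact abs_of_nonneg (by linarith)
      have e2 : |m1 - y| = y - m1 := by rw [abs_sub_comm]; exact abs_of_nonneg (by linarith)
      rw [e1, e2] at hst
      have hq : d2 ≤ (Real.sinh (c*(x - m1)) / Real.sinh (c*(y - m1))) ^ (N-1) := by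
        rw [hd2]
        apply Real.rpow_le_rpow (le_of_lt (div_pos (hsinh_pos _ (by linarith)) (hsinh_pos _ hba)))
          ?_ hNexp
        apply div_le_div_of_nonneg_left (le_of_lt (hsinh_pos _ (by linarith)))
          (hsinh_pos _ (by linarith))
        rw [Real.sinh_le_sinh]
        have : y - m1 ≤ b - a := by linarith [hy.2]
        nlinarith
      have hd2hy : d2 * h y ≤ h x := le_trans
        (mul_le_mul_of_nonneg_right hq (hpos y hy)) hst
      calc h y = d2⁻¹ * (d2 * h y) := by
            rw [← mul_assoc, inv_mul_cancel₀ (ne_of_gt hd2pos), one_mul]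
        _ ≤ d2⁻¹ * h x := mul_le_mul_of_nonneg_left hd2hy (le_of_lt (inv_pos.mpr hd2pos))
  -- integrability of h
  have hmeasIoo : MeasurableSet (Ioo a b) := measurableSet_Ioo
  have hInt : IntegrableOn h (Ioo a b) volume := by
    apply Integrable.mono' (integrable_const (max (h x) (max (d1⁻¹ * h x) (d2⁻¹ * h x))))
      (hcont.aestronglyMeasurable hmeasIoo)
    rw [ae_restrict_iff' hmeasIoo]
    apply Filter.Eventually.of_forall
    intro y hy
    rw [Real.norm_eq_abs, abs_of_nonneg (hpos y hy)]
    exact hbound y hy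
  -- pointwise minorants via limits towards the endpoints
  have hbx : (0:ℝ) < b - x := by linarith
  have hxa : (0:ℝ) < x - a := by linarith
  have hlow2 : ∀ s ∈ Ioo x b,
      (Real.sinh (c*(b - s)) / Real.sinh (c*(b - x))) ^ (N-1) * h x ≤ h s := by
    intro s hs
    have hTend : Filter.Tendsto
        (fun x₁ => (Real.sinh (c*(x₁ - s)) / Real.sinh (c*(x₁ - x))) ^ (N-1) * h x)
        (nhdsWithin b (Iio b))
        (nhds ((Real.sinh (c*(b - s)) / Real.sinh (c*(b - x))) ^ (N-1) * h x)) := by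
      apply Filter.Tendsto.mono_left ?_ nhdsWithin_le_nhds
      have hca : ContinuousAt
          (fun x₁ => (Real.sinh (c*(x₁ - s)) / Real.sinh (c*(x₁ - x))) ^ (N-1) * h x) b := by
        apply ContinuousAt.mul ?_ continuousAt_const
        apply ContinuousAt.rpow_const ?_ (Or.inr hNexp)
        exact ContinuousAt.div (by fun_prop) (by fun_prop) (ne_of_gt (hsinh_pos _ hbx))
      exact hca
    apply le_of_tendsto hTend
    filter_upwards [Ioo_mem_nhdsLT_of_mem (⟨hs.2, le_refl b⟩ : b ∈ Ioc s b)] with x₁ hx₁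
    have hst := hstep x hx x₁ ⟨by linarith [hs.1, hx₁.1], hx₁.2⟩ s
      (ne_of_lt (by linarith [hs.1, hx₁.1] : x < x₁))
      (Or.inl ⟨le_of_lt hs.1, le_of_lt hx₁.1⟩)
    have e1 : |x₁ - s| = x₁ - s := abs_of_nonneg (by linarith [hx₁.1])
    have e2 : |x₁ - x| = x₁ - x := abs_of_nonneg (by linarith [hs.1, hx₁.1])
    rw [e1, e2] at hst
    exact hst
  have hlow1 : ∀ s ∈ Ioo a x,
      (Real.sinh (c*(s - a)) / Real.sinh (c*(x - a))) ^ (N-1) * h x ≤ h s := by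
    intro s hs
    have hTend : Filter.Tendsto
        (fun x₁ => (Real.sinh (c*(s - x₁)) / Real.sinh (c*(x - x₁))) ^ (N-1) * h x)
        (nhdsWithin a (Ioi a))
        (nhds ((Real.sinh (c*(s - a)) / Real.sinh (c*(x - a))) ^ (N-1) * h x)) := by
      apply Filter.Tendsto.mono_left ?_ nhdsWithin_le_nhds
      have hca : ContinuousAt
          (fun x₁ => (Real.sinh (c*(s - x₁)) / Real.sinh (c*(x - x₁))) ^ (N-1) * h x) a := by
        apply ContinuousAt.mul ?_ continuousAt_const
        apply ContinuousAt.rpow_const ?_ (Or.inr hNexp)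
        exact ContinuousAt.div (by fun_prop) (by fun_prop) (ne_of_gt (hsinh_pos _ hxa))
      exact hca
    apply le_of_tendsto hTend
    filter_upwards [Ioo_mem_nhdsGT_of_mem (⟨le_refl a, hs.1⟩ : a ∈ Ico a s)] with x₁ hx₁
    have hst := hstep x hx x₁ ⟨hx₁.1, by linarith [hs.2, hx₁.2]⟩ s
      (ne_of_gt (by linarith [hs.2, hx₁.2] : x₁ < x))
      (Or.inr ⟨le_of_lt hx₁.2, le_of_lt hs.2⟩)
    have e1 : |x₁ - s| = s - x₁ := by rw [abs_sub_comm]; exact abs_of_nonneg (by linarith [hx₁.2])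
    have e2 : |x₁ - x| = x - x₁ := by
      rw [abs_sub_comm]; exact abs_of_nonneg (by linarith [hs.2, hx₁.2])
    rw [e1, e2] at hst
    exact hst
  -- integrability of the minorants and comparison
  have hIb : IntegrableOn h (Ioo x b) volume := hInt.mono_set (Ioo_subset_Ioo_left (le_of_lt hx1))
  have hIa : IntegrableOn h (Ioo a x) volume := hInt.mono_set (Ioo_subset_Ioo_right (le_of_lt hx2))
  have hg2cont : Continuous (fun s => (Real.sinh (c*(b - s)) / Real.sinh (c*(b - x))) ^ (N-1) * h x) := by
    apply Continuous.mul ?_ continuous_const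
    apply Continuous.rpow_const ?_ (fun _ => Or.inr hNexp)
    fun_prop
  have hg1cont : Continuous (fun s => (Real.sinh (c*(s - a)) / Real.sinh (c*(x - a))) ^ (N-1) * h x) := by
    apply Continuous.mul ?_ continuous_const
    apply Continuous.rpow_const ?_ (fun _ => Or.inr hNexp)
    fun_prop
  have hg2int : IntegrableOn (fun s => (Real.sinh (c*(b - s)) / Real.sinh (c*(b - x))) ^ (N-1) * h x) (Ioo x b) volume :=
    (hg2cont.integrableOn_Icc (a := x) (b := b)).mono_set Ioo_subset_Icc_self
  have hg1int : IntegrableOn (fun s => (Real.sinh (c*(s - a)) / Real.sinh (c*(x - a))) ^ (N-1) * h x) (Ioo a x) volume :=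
    (hg1cont.integrableOn_Icc (a := a) (b := x)).mono_set Ioo_subset_Icc_self
  have hcmp2 : ∫ s in Ioo x b, (Real.sinh (c*(b - s)) / Real.sinh (c*(b - x))) ^ (N-1) * h x
      ≤ ∫ s in Ioo x b, h s :=
    setIntegral_mono_on hg2int hIb measurableSet_Ioo hlow2
  have hcmp1 : ∫ s in Ioo a x, (Real.sinh (c*(s - a)) / Real.sinh (c*(x - a))) ^ (N-1) * h x
      ≤ ∫ s in Ioo a x, h s :=
    setIntegral_mono_on hg1int hIa measurableSet_Ioo hlow1
  -- computing the minorant integrals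
  have hval2 : ∫ s in Ioo x b, (Real.sinh (c*(b - s)) / Real.sinh (c*(b - x))) ^ (N-1) * h x
      = ((b - x) * ∫ r in (0:ℝ)..1, (Real.sinh (c*(r*(b - x))) / Real.sinh (c*(b - x))) ^ (N-1)) * h x := by
    rw [← MeasureTheory.integral_Ioc_eq_integral_Ioo,
      ← intervalIntegral.integral_of_le (le_of_lt hx2)]
    rw [intervalIntegral.integral_mul_const]
    congr 1
    have h1 := intervalIntegral.integral_comp_sub_left
      (a := x) (b := b) (fun u => (Real.sinh (c*u) / Real.sinh (c*(b - x))) ^ (N-1)) b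
    rw [h1, sub_self]
    have h2 := intervalIntegral.integral_comp_mul_right
      (a := (0:ℝ)) (b := 1) (fun u => (Real.sinh (c*u) / Real.sinh (c*(b - x))) ^ (N-1)) (ne_of_gt hbx)
    simp only [zero_mul, one_mul, smul_eq_mul] at h2
    rw [h2, ← mul_assoc, mul_inv_cancel₀ (ne_of_gt hbx), one_mul]
  have hval1 : ∫ s in Ioo a x, (Real.sinh (c*(s - a)) / Real.sinh (c*(x - a))) ^ (N-1) * h x
      = ((x - a) * ∫ r in (0:ℝ)..1, (Real.sinh (c*(r*(x - a))) / Real.sinh (c*(x - a))) ^ (N-1)) * h x := by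
    rw [← MeasureTheory.integral_Ioc_eq_integral_Ioo,
      ← intervalIntegral.integral_of_le (le_of_lt hx1)]
    rw [intervalIntegral.integral_mul_const]
    congr 1
    have h1 := intervalIntegral.integral_comp_sub_right
      (a := a) (b := x) (fun u => (Real.sinh (c*u) / Real.sinh (c*(x - a))) ^ (N-1)) a
    rw [h1, sub_self]
    have h2 := intervalIntegral.integral_comp_mul_right
      (a := (0:ℝ)) (b := 1) (fun u => (Real.sinh (c*u) / Real.sinh (c*(x - a))) ^ (N-1)) (ne_of_gt hxa)
    simp only [zero_mul, one_mul, smul_eq_mul] at h2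
    rw [h2, ← mul_assoc, mul_inv_cancel₀ (ne_of_gt hxa), one_mul]
  -- monotonicity and positivity of the reference integral
  have hcontF : ∀ L : ℝ, Continuous (fun r : ℝ => (Real.sinh (c*(r*L)) / Real.sinh (c*L)) ^ (N-1)) := by
    intro L
    apply Continuous.rpow_const ?_ (fun _ => Or.inr hNexp)
    fun_prop
  have hFmono : ∀ L : ℝ, 0 < L → L ≤ b - a →
      (∫ r in (0:ℝ)..1, (Real.sinh (c * (r * (b - a))) / Real.sinh (c * (b - a))) ^ (N - 1))
        ≤ ∫ r in (0:ℝ)..1, (Real.sinh (c*(r*L)) / Real.sinh (c*L)) ^ (N-1) := by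
    intro L hL hLba
    apply intervalIntegral.integral_mono_on zero_le_one
      ((hcontF (b - a)).intervalIntegrable 0 1) ((hcontF L).intervalIntegrable 0 1)
    intro r hr
    have key := sinh_cross (r := r) (L := c*L) (D := c*(b - a)) hr.1 hr.2
      (le_of_lt (mul_pos hc hL)) (mul_le_mul_of_nonneg_left hLba (le_of_lt hc))
    apply Real.rpow_le_rpow (div_nonneg
      (by rw [Real.sinh_nonneg_iff]; exact mul_nonneg (le_of_lt hc) (mul_nonneg hr.1 (le_of_lt hba)))
      (le_of_lt (hsinh_pos _ hba))) ?_ hNexp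
    rw [div_le_div_iff₀ (hsinh_pos _ hba) (hsinh_pos _ hL)]
    have e1 : c * (r * (b - a)) = r * (c * (b - a)) := by ring
    have e2 : c * (r * L) = r * (c * L) := by ring
    rw [e1, e2]
    linarith [key]
  have hFpos : 0 < ∫ r in (0:ℝ)..1,
      (Real.sinh (c * (r * (b - a))) / Real.sinh (c * (b - a))) ^ (N - 1) := by
    apply intervalIntegral.intervalIntegral_pos_of_pos_on
      ((hcontF (b - a)).intervalIntegrable 0 1) ?_ zero_lt_one
    intro r hr
    exact Real.rpow_pos_of_pos (div_pos (hsinh_pos _ (mul_pos hr.1 hba)) (hsinh_pos _ hba)) _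
  -- splitting the integral
  have hdisj : Disjoint (Ioo a x) (Ioo x b) := by
    rw [Set.disjoint_left]
    intro s hs hs'
    exact absurd hs.2 (not_lt.mpr (le_of_lt hs'.1))
  have hsplit : (∫ s in Ioo a x, h s) + (∫ s in Ioo x b, h s) ≤ ∫ s in Ioo a b, h s := by
    rw [← MeasureTheory.setIntegral_union hdisj measurableSet_Ioo hIa hIb]
    apply MeasureTheory.setIntegral_mono_set hInt
    · exact (ae_restrict_iff' hmeasIoo).mpr (Filter.Eventually.of_forall fun y hy => hpos y hy)
    · exact (Set.union_subset (Ioo_subset_Ioo_right (le_of_lt hx2))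
        (Ioo_subset_Ioo_left (le_of_lt hx1))).eventuallyLE
  -- final assembly
  set Fba := ∫ r in (0:ℝ)..1,
      (Real.sinh (c * (r * (b - a))) / Real.sinh (c * (b - a))) ^ (N - 1) with hFbadef
  have hmain : h x * ((b - a) * Fba) ≤ ∫ s in Ioo a b, h s := by
    have hF1 := hFmono (x - a) hxa (by linarith)
    have hF2 := hFmono (b - x) hbx (by linarith)
    have c1 : (x - a) * Fba * h x
        ≤ (x - a) * (∫ r in (0:ℝ)..1, (Real.sinh (c*(r*(x - a))) / Real.sinh (c*(x - a))) ^ (N-1)) * h x :=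
      mul_le_mul_of_nonneg_right (mul_le_mul_of_nonneg_left hF1 (le_of_lt hxa)) (hpos x hx)
    have c2 : (b - x) * Fba * h x
        ≤ (b - x) * (∫ r in (0:ℝ)..1, (Real.sinh (c*(r*(b - x))) / Real.sinh (c*(b - x))) ^ (N-1)) * h x :=
      mul_le_mul_of_nonneg_right (mul_le_mul_of_nonneg_left hF2 (le_of_lt hbx)) (hpos x hx)
    have e : h x * ((b - a) * Fba) = (x - a) * Fba * h x + (b - x) * Fba * h x := by ring
    rw [e]
    linarith [hcmp1, hcmp2, hsplit, hval1, hval2, c1, c2]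
  have hFne : Fba ≠ 0 := ne_of_gt hFpos
  have hbane : b - a ≠ 0 := ne_of_gt hba
  have hrw : h x = 1/(b - a) * Fba⁻¹ * (h x * ((b - a) * Fba)) := by
    field_simp
  rw [hrw]
  exact mul_le_mul_of_nonneg_left hmain
    (le_of_lt (mul_pos (div_pos one_pos hba) (inv_pos.mpr hFpos)))
end

section
/- Let κ < 0 and N > 1 be real. There exists a nondecreasing function C : (0,∞) → (0,∞) with C(r) → ∞ as r → ∞ such that for every nonempty bounded open real interval (a,b) and every MCP(κ,N) density h on (a,b) the following holds: h is differentiable at Lebesgue-almost every point of (a,b), and ∫_{(a,b)} |h'(s)| ds ≤ (1/(b−a)) · C(b−a) · ∫_{(a,b)} h(s) ds, where h' denotes the derivative of h (set equal to 0 at points of non-differentiability) and the integrals are Lebesgue integrals. -/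
open Set MeasureTheory

/-- Mean value bound for `sinh` on `[0, C]`. -/
lemma sinh_sub_le_aux {A B C : ℝ} (h0 : 0 ≤ A) (hAB : A ≤ B) (hBC : B ≤ C) :
    Real.sinh B - Real.sinh A ≤ (B - A) * Real.cosh C := by
  have hs : Convex ℝ (Icc (0:ℝ) C) := convex_Icc _ _
  have hC : 0 ≤ C := le_trans h0 (le_trans hAB hBC)
  have key := hs.norm_image_sub_le_of_norm_hasDerivWithin_le
    (f := Real.sinh) (f' := Real.cosh) (C := Real.cosh C)
    (fun x _ => (Real.hasDerivAt_sinh x).hasDerivWithinAt)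
    (fun x hx => by
      rw [Real.norm_eq_abs, abs_of_pos (Real.cosh_pos _)]
      exact Real.cosh_le_cosh.2 (by
        rw [abs_of_nonneg hx.1, abs_of_nonneg hC]; exact hx.2))
    ⟨h0, le_trans hAB hBC⟩ ⟨le_trans h0 hAB, hBC⟩
  rw [Real.norm_eq_abs, Real.norm_eq_abs] at key
  have h1 : Real.sinh B - Real.sinh A ≤ |Real.sinh B - Real.sinh A| := le_abs_self _
  have h2 : |B - A| = B - A := abs_of_nonneg (by linarith)
  calc Real.sinh B - Real.sinh A ≤ |Real.sinh B - Real.sinh A| := h1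
    _ ≤ Real.cosh C * |B - A| := key
    _ = (B - A) * Real.cosh C := by rw [h2]; ring

/-- Bernoulli-type lower bound for `r ^ n`, `0 < r ≤ 1`. -/
lemma rpow_ge_one_sub {r n : ℝ} (hr0 : 0 < r) (hr1 : r ≤ 1) :
    1 - max n 1 * (1 - r) ≤ r ^ n := by
  have h1 : r ^ (max n 1) ≤ r ^ n :=
    Real.rpow_le_rpow_of_exponent_ge hr0 hr1 (le_max_left n 1)
  have h2 : 1 + (max n 1) * (r - 1) ≤ (1 + (r - 1)) ^ (max n 1) :=
    one_add_mul_self_le_rpow_one_add (by linarith) (le_max_right n 1)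
  have h3 : (1 : ℝ) + (r - 1) = r := by ring
  rw [h3] at h2
  nlinarith [h2, h1]


/-- Raising the MCP inequality to the power `n`, ordered version with a reference point
to the right. -/
lemma mcp_pow_right {c n a b : ℝ} {h : ℝ → ℝ} (hc : 0 < c) (hn : 0 < n)
    (hpos : ∀ x ∈ Ioo a b, 0 ≤ h x)
    (hmcp : ∀ x₀ ∈ Ioo a b, ∀ x₁ ∈ Ioo a b, x₀ ≠ x₁ → ∀ t ∈ Icc (0:ℝ) 1,
      Real.sinh (c * ((1 - t) * |x₁ - x₀|)) / Real.sinh (c * |x₁ - x₀|) * h x₀ ^ (1/n) ≤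
        h ((1 - t) * x₀ + t * x₁) ^ (1/n))
    {x y R : ℝ} (hax : a < x) (hxy : x ≤ y) (hyR : y < R) (hRb : R < b) :
    (Real.sinh (c * (R - y)) / Real.sinh (c * (R - x))) ^ n * h x ≤ h y := by
  have hxR : x < R := lt_of_le_of_lt hxy hyR
  have hRx : (0:ℝ) < R - x := by linarith
  have hxb : x < b := lt_trans hxR hRb
  have hyIoo : y ∈ Ioo a b := ⟨lt_of_lt_of_le hax hxy, lt_trans hyR hRb⟩
  have key := hmcp x ⟨hax, hxb⟩ R ⟨lt_trans hax hxR, hRb⟩ (ne_of_lt hxR)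
    ((y - x)/(R - x)) ⟨div_nonneg (by linarith) hRx.le, (div_le_one hRx).2 (by linarith)⟩
  have e0 : |R - x| = R - x := abs_of_pos hRx
  have e1 : (1 - (y - x)/(R - x)) * |R - x| = R - y := by
    rw [e0]; field_simp; ring
  have e2 : (1 - (y - x)/(R - x)) * x + (y - x)/(R - x) * R = y := by
    field_simp; ring
  rw [e1, e2, e0] at key
  -- now raise both sides to the power n
  have hq0 : 0 ≤ Real.sinh (c * (R - y)) / Real.sinh (c * (R - x)) :=
    div_nonneg (Real.sinh_nonneg_iff.2 (by nlinarith)) (Real.sinh_nonneg_iff.2 (by nlinarith))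
  have hx0 : 0 ≤ h x := hpos x ⟨hax, hxb⟩
  have hy0 : 0 ≤ h y := hpos y hyIoo
  have hL0 : 0 ≤ Real.sinh (c * (R - y)) / Real.sinh (c * (R - x)) * h x ^ (1/n) :=
    mul_nonneg hq0 (Real.rpow_nonneg hx0 _)
  have key2 := Real.rpow_le_rpow hL0 key hn.le
  rw [Real.mul_rpow hq0 (Real.rpow_nonneg hx0 _), ← Real.rpow_mul hx0,
    ← Real.rpow_mul hy0, one_div_mul_cancel (ne_of_gt hn), Real.rpow_one, Real.rpow_one] at key2
  exact key2

/-- Raising the MCP inequality to the power `n`, ordered version with a reference point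
to the left. -/
lemma mcp_pow_left {c n a b : ℝ} {h : ℝ → ℝ} (hc : 0 < c) (hn : 0 < n)
    (hpos : ∀ x ∈ Ioo a b, 0 ≤ h x)
    (hmcp : ∀ x₀ ∈ Ioo a b, ∀ x₁ ∈ Ioo a b, x₀ ≠ x₁ → ∀ t ∈ Icc (0:ℝ) 1,
      Real.sinh (c * ((1 - t) * |x₁ - x₀|)) / Real.sinh (c * |x₁ - x₀|) * h x₀ ^ (1/n) ≤
        h ((1 - t) * x₀ + t * x₁) ^ (1/n))
    {L x y : ℝ} (haL : a < L) (hLx : L < x) (hxy : x ≤ y) (hyb : y < b) :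
    (Real.sinh (c * (x - L)) / Real.sinh (c * (y - L))) ^ n * h y ≤ h x := by
  have hLy : L < y := lt_of_lt_of_le hLx hxy
  have hyL : (0:ℝ) < y - L := by linarith
  have hya : a < y := lt_trans haL hLy
  have hxIoo : x ∈ Ioo a b := ⟨lt_trans haL hLx, lt_of_le_of_lt hxy hyb⟩
  have key := hmcp y ⟨hya, hyb⟩ L ⟨haL, lt_trans hLy hyb⟩ (ne_of_gt hLy)
    ((y - x)/(y - L)) ⟨div_nonneg (by linarith) hyL.le, (div_le_one hyL).2 (by linarith)⟩
  have e0 : |L - y| = y - L := by rw [abs_of_neg (by linarith)]; ring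
  have e1 : (1 - (y - x)/(y - L)) * |L - y| = x - L := by
    rw [e0]; field_simp; ring
  have e2 : (1 - (y - x)/(y - L)) * y + (y - x)/(y - L) * L = x := by
    field_simp; ring
  rw [e1, e2, e0] at key
  have hq0 : 0 ≤ Real.sinh (c * (x - L)) / Real.sinh (c * (y - L)) :=
    div_nonneg (Real.sinh_nonneg_iff.2 (by nlinarith)) (Real.sinh_nonneg_iff.2 (by nlinarith))
  have hy0 : 0 ≤ h y := hpos y ⟨hya, hyb⟩
  have hx0 : 0 ≤ h x := hpos x hxIoo
  have hL0 : 0 ≤ Real.sinh (c * (x - L)) / Real.sinh (c * (y - L)) * h y ^ (1/n) :=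
    mul_nonneg hq0 (Real.rpow_nonneg hy0 _)
  have key2 := Real.rpow_le_rpow hL0 key hn.le
  rw [Real.mul_rpow hq0 (Real.rpow_nonneg hy0 _), ← Real.rpow_mul hy0,
    ← Real.rpow_mul hx0, one_div_mul_cancel (ne_of_gt hn), Real.rpow_one, Real.rpow_one] at key2
  exact key2


/-- For a function monotone on `[α,β]`, there is a nonnegative measurable "density" `ρ`
which is a.e. the derivative on `(α,β)`, with integral at most the total increment. -/
lemma monotoneOn_exists_density {φ : ℝ → ℝ} {α β : ℝ} (hαβ : α ≤ β)
    (hmono : MonotoneOn φ (Icc α β)) :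
    ∃ ρ : ℝ → ENNReal, Measurable ρ ∧
      (∀ᵐ x ∂(volume : Measure ℝ), x ∈ Ioo α β → HasDerivAt φ (ρ x).toReal x) ∧
      (∀ᵐ x ∂(volume : Measure ℝ), ρ x < ⊤) ∧
      ∫⁻ x in Ioo α β, ρ x ≤ ENNReal.ofReal (φ β - φ α) := by
  set ψ : ℝ → ℝ := fun x => φ (max α (min x β)) with hψdef
  have hmemc : ∀ x : ℝ, max α (min x β) ∈ Icc α β := fun x =>
    ⟨le_max_left _ _, max_le hαβ (min_le_right _ _)⟩
  have hψ : Monotone ψ := by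
    intro u v huv
    exact hmono (hmemc u) (hmemc v)
      (max_le_max le_rfl (min_le_min_right _ huv))
  set μ := hψ.stieltjesFunction.measure with hμdef
  refine ⟨μ.rnDeriv volume, Measure.measurable_rnDeriv _ _, ?_, Measure.rnDeriv_lt_top _ _, ?_⟩
  · filter_upwards [hψ.ae_hasDerivAt] with x hx hmem
    apply hx.congr_of_eventuallyEq
    filter_upwards [Ioo_mem_nhds hmem.1 hmem.2] with y hy
    have : max α (min y β) = y := by
      rw [min_eq_left hy.2.le, max_eq_right hy.1.le]
    simp only [hψdef, this]
  · have h1 : (volume.withDensity (μ.rnDeriv volume)) (Ioo α β) ≤ μ (Ioo α β) :=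
      Measure.withDensity_rnDeriv_le μ volume (Ioo α β)
    rw [withDensity_apply _ measurableSet_Ioo] at h1
    refine h1.trans ?_
    have h2 : μ (Ioo α β) ≤ μ (Ioc α β) := measure_mono Ioo_subset_Ioc_self
    refine h2.trans ?_
    rw [hμdef, StieltjesFunction.measure_Ioc]
    apply ENNReal.ofReal_le_ofReal
    have hβ : hψ.stieltjesFunction β = φ β := by
      apply le_antisymm
      · have := hψ.rightLim_le (show β < β + 1 by linarith)
        rw [hψ.stieltjesFunction_eq]
        refine this.trans ?_
        have : max α (min (β + 1) β) = β := by
          rw [min_eq_right (by linarith), max_eq_right hαβ]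
        simp only [hψdef, this, le_refl]
      · have := hψ.le_rightLim (le_refl β)
        rw [hψ.stieltjesFunction_eq]
        refine le_trans ?_ this
        have : max α (min β β) = β := by rw [min_self, max_eq_right hαβ]
        simp only [hψdef, this, le_refl]
    have hα : φ α ≤ hψ.stieltjesFunction α := by
      have := hψ.le_rightLim (le_refl α)
      rw [hψ.stieltjesFunction_eq]
      refine le_trans ?_ this
      have : max α (min α β) = α := by rw [min_eq_left hαβ, max_self]
      simp only [hψdef, this, le_refl]
    rw [hβ]
    linarith


set_option maxHeartbeats 4000000 in
/-- First-order integral a priori estimate for `MCP(κ,N)` densities (`κ < 0`):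
there is a nondecreasing positive function `C` on `(0,∞)` blowing up at infinity such
that the total variation of any such density on a bounded open interval is controlled
by its integral.  Here `deriv h` is the derivative of `h`, which in Lean is `0` by
convention at points of non-differentiability. -/
theorem mcp_neg_density_first_order_bound (κ N : ℝ) (hκ : κ < 0) (hN : 1 < N) :
    ∃ C : ℝ → ℝ, (∀ r : ℝ, 0 < r → 0 < C r) ∧ MonotoneOn C (Set.Ioi 0) ∧
      Filter.Tendsto C Filter.atTop Filter.atTop ∧
      ∀ (a b : ℝ) (h : ℝ → ℝ), a < b → IsMCPNegDensity κ N (Set.Ioo a b) h →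
        (∀ᵐ x ∂(volume.restrict (Set.Ioo a b)), DifferentiableAt ℝ h x) ∧
        ∫ x in Set.Ioo a b, |deriv h x| ≤
          (1 / (b - a)) * C (b - a) * ∫ x in Set.Ioo a b, h x := by
  set n := N - 1 with hndef
  have hn : 0 < n := by rw [hndef]; linarith
  set c := Real.sqrt (-κ / n) with hcdef
  have hc : 0 < c := by
    rw [hcdef]
    exact Real.sqrt_pos.2 (div_pos (by linarith) hn)
  set n' := max n 1 with hn'def
  have hn'1 : (1:ℝ) ≤ n' := le_max_right _ _
  have hn'0 : (0:ℝ) ≤ n' := by linarith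
  set Λf : ℝ → ℝ := fun r => (4 * Real.cosh (c*r/4) * Real.cosh (c*r/2)) ^ n with hΛdef
  set Cf : ℝ → ℝ := fun r => 16 * Λf r + 128 * n' * (Λf r * Λf r) * Real.cosh (c*r)
    with hCdef
  have hbase : ∀ r : ℝ, (1:ℝ) ≤ 4 * Real.cosh (c*r/4) * Real.cosh (c*r/2) := by
    intro r
    nlinarith [Real.one_le_cosh (c*r/4), Real.one_le_cosh (c*r/2)]
  have hΛ1 : ∀ r : ℝ, (1:ℝ) ≤ Λf r := by
    intro r
    have := Real.rpow_le_rpow (zero_le_one) (hbase r) hn.le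
    rwa [Real.one_rpow] at this
  have hΛ0 : ∀ r : ℝ, (0:ℝ) < Λf r := fun r => lt_of_lt_of_le one_pos (hΛ1 r)
  have hΛmono : ∀ r s : ℝ, 0 ≤ r → r ≤ s → Λf r ≤ Λf s := by
    intro r s hr hrs
    have hs : 0 ≤ s := le_trans hr hrs
    apply Real.rpow_le_rpow (by linarith [hbase r]) _ hn.le
    have h1 : Real.cosh (c*r/4) ≤ Real.cosh (c*s/4) := by
      rw [Real.cosh_le_cosh,
        abs_of_nonneg (by nlinarith : (0:ℝ) ≤ c*r/4),
        abs_of_nonneg (by nlinarith : (0:ℝ) ≤ c*s/4)]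
      nlinarith
    have h2 : Real.cosh (c*r/2) ≤ Real.cosh (c*s/2) := by
      rw [Real.cosh_le_cosh,
        abs_of_nonneg (by nlinarith : (0:ℝ) ≤ c*r/2),
        abs_of_nonneg (by nlinarith : (0:ℝ) ≤ c*s/2)]
      nlinarith
    nlinarith [Real.one_le_cosh (c*r/4), Real.one_le_cosh (c*r/2),
      Real.one_le_cosh (c*s/4), Real.one_le_cosh (c*s/2)]
  have hCpos : ∀ r : ℝ, 0 < r → 0 < Cf r := by
    intro r _
    rw [hCdef]
    show 0 < 16 * Λf r + 128 * n' * (Λf r * Λf r) * Real.cosh (c*r)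
    have h1 := hΛ0 r
    have h2 : (0:ℝ) ≤ 128 * n' * (Λf r * Λf r) * Real.cosh (c*r) :=
      mul_nonneg (mul_nonneg (mul_nonneg (by norm_num) hn'0)
        (mul_nonneg h1.le h1.le)) (Real.cosh_pos _).le
    linarith
  have hCmono : MonotoneOn Cf (Set.Ioi 0) := by
    intro r hr s hs hrs
    have h1 := hΛmono r s (le_of_lt hr) hrs
    have h2 : Real.cosh (c*r) ≤ Real.cosh (c*s) := by
      rw [Real.cosh_le_cosh,
        abs_of_nonneg (by nlinarith [le_of_lt (Set.mem_Ioi.1 hr)] : (0:ℝ) ≤ c*r),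
        abs_of_nonneg (by nlinarith [le_of_lt (lt_of_lt_of_le (Set.mem_Ioi.1 hr) hrs)] :
          (0:ℝ) ≤ c*s)]
      nlinarith [le_of_lt (Set.mem_Ioi.1 hr)]
    have h3 := hΛ1 r
    have h4 := hΛ1 s
    have h5 := Real.one_le_cosh (c*r)
    have h6 := Real.one_le_cosh (c*s)
    rw [hCdef]
    show 16 * Λf r + 128 * n' * (Λf r * Λf r) * Real.cosh (c*r) ≤
      16 * Λf s + 128 * n' * (Λf s * Λf s) * Real.cosh (c*s)
    have p1 : Λf r * Λf r ≤ Λf s * Λf s := mul_le_mul h1 h1 (by linarith) (by linarith)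
    have p2 : (Λf r * Λf r) * Real.cosh (c*r) ≤ (Λf s * Λf s) * Real.cosh (c*s) :=
      mul_le_mul p1 h2 (by linarith) (by nlinarith)
    have p3 : 128 * n' * ((Λf r * Λf r) * Real.cosh (c*r)) ≤
        128 * n' * ((Λf s * Λf s) * Real.cosh (c*s)) :=
      mul_le_mul_of_nonneg_left p2 (by linarith)
    ring_nf at p3 ⊢
    linarith
  have hCtop : Filter.Tendsto Cf Filter.atTop Filter.atTop := by
    apply Filter.tendsto_atTop_mono' _ _ (Filter.Tendsto.const_mul_atTop hc Filter.tendsto_id)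
    filter_upwards [Filter.eventually_ge_atTop (0:ℝ)] with r hr
    have h1 := hΛ1 r
    have h2 : c * r ≤ Real.sinh (c*r) := Real.self_le_sinh_iff.2 (by nlinarith)
    have h3 : Real.sinh (c*r) < Real.cosh (c*r) := Real.sinh_lt_cosh _
    have h5 := Real.one_le_cosh (c*r)
    have q1 : Real.cosh (c*r) ≤ (Λf r * Λf r) * Real.cosh (c*r) :=
      le_mul_of_one_le_left (by linarith) (by nlinarith)
    have q2 : (Λf r * Λf r) * Real.cosh (c*r) ≤ n' * ((Λf r * Λf r) * Real.cosh (c*r)) :=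
      le_mul_of_one_le_left (by nlinarith) hn'1
    show c * id r ≤ Cf r
    rw [hCdef]
    show c * id r ≤ 16 * Λf r + 128 * n' * (Λf r * Λf r) * Real.cosh (c*r)
    simp only [id]
    ring_nf at q2 ⊢
    nlinarith [q1, q2]
  clear_value Λf Cf
  refine ⟨Cf, hCpos, hCmono, hCtop, ?_⟩
  clear_value n c n'
  intro a b h hab hdens
  obtain ⟨hpos, hmcp⟩ := hdens
  have hmcp' : ∀ x₀ ∈ Ioo a b, ∀ x₁ ∈ Ioo a b, x₀ ≠ x₁ → ∀ t ∈ Icc (0:ℝ) 1,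
      Real.sinh (c * ((1 - t) * |x₁ - x₀|)) / Real.sinh (c * |x₁ - x₀|) * h x₀ ^ (1/n) ≤
        h ((1 - t) * x₀ + t * x₁) ^ (1/n) := by
    rw [hcdef, hndef]
    exact hmcp
  simp only [hCdef]

  set L := b - a with hLdef
  clear_value L
  have hL : 0 < L := by rw [hLdef]; linarith
  set m := (a+b)/2 with hmdef
  clear_value m
  have ham : a < m := by rw [hmdef]; linarith
  have hmb : m < b := by rw [hmdef]; linarith
  have hma : m - a = L/2 := by rw [hmdef, hLdef]; ring
  have hbm : b - m = L/2 := by rw [hmdef, hLdef]; ring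
  have hm0 : 0 ≤ h m := hpos m ⟨ham, hmb⟩
  have hcL : 0 < c * L := mul_pos hc hL
  have hsL4 : 0 < Real.sinh (c*L/4) := Real.sinh_pos_iff.2 (by linarith)
  have hsL : 0 < Real.sinh (c*L) := Real.sinh_pos_iff.2 (by linarith)
  set Λ := Λf L with hΛLdef
  clear_value Λ
  set M := Λ * h m with hMdef
  clear_value M
  set K := n' * (c * Real.cosh (c*L) / Real.sinh (c*L/4)) * M with hKdef
  clear_value K
  have hΛpos : 0 < Λ := by rw [hΛLdef]; exact hΛ0 L
  have hM0 : 0 ≤ M := by rw [hMdef]; exact mul_nonneg hΛpos.le hm0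
  have hK0 : 0 ≤ K := by
    rw [hKdef]
    apply mul_nonneg (mul_nonneg hn'0 _) hM0
    exact div_nonneg (mul_nonneg hc.le (Real.cosh_pos _).le) hsL4.le
  -- the basic ratio bound
  have hsinh4id : ∀ u : ℝ, Real.sinh (4*u) = Real.sinh u * (4 * Real.cosh u * Real.cosh (2*u)) := by
    intro u
    rw [show (4:ℝ)*u = 2*(2*u) by ring, Real.sinh_two_mul, Real.sinh_two_mul]
    ring
  have hid : Real.sinh (c*L) = Real.sinh (c*L/4) * (4 * Real.cosh (c*L/4) * Real.cosh (c*L/2)) := by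
    have h4 := hsinh4id (c*L/4)
    rw [show 4*(c*L/4) = c*L by ring, show 2*(c*L/4) = c*L/2 by ring] at h4
    exact h4
  have hratio : ∀ s d : ℝ, L/4 ≤ s → s ≤ d → d ≤ L →
      Λ⁻¹ ≤ (Real.sinh (c*s) / Real.sinh (c*d)) ^ n := by
    intro s d h1 h2 h3
    have hs0 : 0 < c * s := mul_pos hc (by linarith)
    have hd0 : 0 < c * d := mul_pos hc (by linarith)
    have hsp : 0 < Real.sinh (c*s) := Real.sinh_pos_iff.2 hs0
    have hdp : 0 < Real.sinh (c*d) := Real.sinh_pos_iff.2 hd0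
    have hq : Real.sinh (c*L/4) / Real.sinh (c*L) ≤ Real.sinh (c*s)/Real.sinh (c*d) := by
      apply div_le_div₀ hsp.le _ hdp _
      · apply Real.sinh_le_sinh.2; nlinarith
      · apply Real.sinh_le_sinh.2; nlinarith
    have hbpos : (0:ℝ) < 4 * Real.cosh (c*L/4) * Real.cosh (c*L/2) := by linarith [hbase L]
    have hq2 : (4 * Real.cosh (c*L/4) * Real.cosh (c*L/2))⁻¹ ≤
        Real.sinh (c*s)/Real.sinh (c*d) := by
      refine le_trans (le_of_eq ?_) hq
      rw [hid]
      field_simp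
    have := Real.rpow_le_rpow (inv_nonneg.2 hbpos.le) hq2 hn.le
    rw [Real.inv_rpow hbpos.le] at this
    refine le_trans (le_of_eq ?_) this
    rw [hΛLdef, hΛdef]
  have hinvmul : ∀ u v : ℝ, Λ⁻¹ * u ≤ v → u ≤ Λ * v := by
    intro u v huv
    have h2 := mul_le_mul_of_nonneg_left huv hΛpos.le
    rwa [← mul_assoc, mul_inv_cancel₀ (ne_of_gt hΛpos), one_mul] at h2
  -- Harnack upper bound
  have hup : ∀ x ∈ Ioo a b, h x ≤ M := by
    rintro x ⟨hax, hxb⟩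
    have hx0 : 0 ≤ h x := hpos x ⟨hax, hxb⟩
    rcases lt_trichotomy x m with hx | rfl | hx
    · have key := mcp_pow_right hc hn hpos hmcp' hax hx.le
        (show m < m + L/4 by linarith) (show m + L/4 < b by linarith)
      rw [show m + L/4 - m = L/4 by ring] at key
      have hr := hratio (L/4) (m + L/4 - x) le_rfl (by linarith) (by linarith)
      have h5 := mul_le_mul_of_nonneg_right hr hx0
      rw [hMdef]
      exact hinvmul _ _ (le_trans h5 key)
    · rw [hMdef]
      have h7 : 1 ≤ Λ := by rw [hΛLdef]; exact hΛ1 L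
      nlinarith
    · have key := mcp_pow_left hc hn hpos hmcp' (show a < m - L/4 by linarith)
        (show m - L/4 < m by linarith) hx.le hxb
      rw [show m - (m - L/4) = L/4 by ring] at key
      have hr := hratio (L/4) (x - (m - L/4)) le_rfl (by linarith) (by linarith)
      have h5 := mul_le_mul_of_nonneg_right hr hx0
      rw [hMdef]
      exact hinvmul _ _ (le_trans h5 key)
  -- Harnack lower bound near the midpoint
  have hlowJ : ∀ y ∈ Ioo m (m + L/8), h m ≤ Λ * h y := by
    rintro y ⟨hmy, hyJ⟩
    have key := mcp_pow_right hc hn hpos hmcp' ham hmy.le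
      (show y < m + 3*L/8 by linarith) (show m + 3*L/8 < b by linarith)
    rw [show m + 3*L/8 - m = 3*L/8 by ring] at key
    have hr := hratio (m + 3*L/8 - y) (3*L/8) (by linarith) (by linarith) (by linarith)
    have h5 := mul_le_mul_of_nonneg_right hr hm0
    exact hinvmul _ _ (le_trans h5 key)
  -- monotonicity on the left half
  have hmonoL : ∀ α : ℝ, a < α → MonotoneOn (fun z => h z + K * z) (Icc α m) := by
    intro α hα x hx y hy hxy
    show h x + K * x ≤ h y + K * y
    rcases eq_or_lt_of_le hxy with rfl | hxy'
    · exact le_rfl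
    have hax : a < x := lt_of_lt_of_le hα hx.1
    have hxb : x < b := by linarith [hx.2]
    have key := mcp_pow_right hc hn hpos hmcp' hax hxy
      (show y < m + L/4 by linarith [hy.2]) (show m + L/4 < b by linarith)
    set q := Real.sinh (c*(m + L/4 - y)) / Real.sinh (c*(m + L/4 - x)) with hqdef
    clear_value q
    have hdy : (0:ℝ) < c*(m + L/4 - y) := mul_pos hc (by linarith [hy.2])
    have hdx : (0:ℝ) < c*(m + L/4 - x) := mul_pos hc (by linarith [hx.2])
    have hsy : 0 < Real.sinh (c*(m + L/4 - y)) := Real.sinh_pos_iff.2 hdy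
    have hsx : 0 < Real.sinh (c*(m + L/4 - x)) := Real.sinh_pos_iff.2 hdx
    have hq1 : q ≤ 1 := by
      rw [hqdef]
      exact (div_le_one hsx).2 (Real.sinh_le_sinh.2
        (mul_le_mul_of_nonneg_left (by linarith) hc.le))
    have hq0 : 0 < q := by rw [hqdef]; exact div_pos hsy hsx
    have hnum : Real.sinh (c*(m + L/4 - x)) - Real.sinh (c*(m + L/4 - y)) ≤
        (c*(y-x)) * Real.cosh (c*L) := by
      have h6 := sinh_sub_le_aux hdy.le
        (mul_le_mul_of_nonneg_left (by linarith) hc.le)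
        (mul_le_mul_of_nonneg_left (by linarith [hx.2, hma]) hc.le : c*(m + L/4 - x) ≤ c*L)
      calc Real.sinh (c*(m + L/4 - x)) - Real.sinh (c*(m + L/4 - y)) ≤
          (c*(m + L/4 - x) - c*(m + L/4 - y)) * Real.cosh (c*L) := h6
        _ = (c*(y-x)) * Real.cosh (c*L) := by ring
    have hden : Real.sinh (c*L/4) ≤ Real.sinh (c*(m + L/4 - x)) := by
      apply Real.sinh_le_sinh.2
      rw [show c*L/4 = c*(L/4) by ring]
      exact mul_le_mul_of_nonneg_left (by linarith [hx.2]) hc.le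
    have h1q : 1 - q ≤ (c * Real.cosh (c*L) / Real.sinh (c*L/4)) * (y - x) := by
      have e : 1 - q = (Real.sinh (c*(m + L/4 - x)) - Real.sinh (c*(m + L/4 - y))) /
          Real.sinh (c*(m + L/4 - x)) := by
        rw [hqdef, eq_div_iff (ne_of_gt hsx), sub_mul, one_mul,
          div_mul_cancel₀ _ (ne_of_gt hsx)]
      rw [e]
      calc (Real.sinh (c*(m + L/4 - x)) - Real.sinh (c*(m + L/4 - y))) /
          Real.sinh (c*(m + L/4 - x)) ≤ ((c*(y-x)) * Real.cosh (c*L)) / Real.sinh (c*L/4) := by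
            apply div_le_div₀ (mul_nonneg (mul_nonneg hc.le (by linarith))
              (Real.cosh_pos _).le) hnum hsL4 hden
        _ = (c * Real.cosh (c*L) / Real.sinh (c*L/4)) * (y - x) := by
            ring
    have hx0 : 0 ≤ h x := hpos x ⟨hax, hxb⟩
    have hxM : h x ≤ M := hup x ⟨hax, hxb⟩
    have hber := rpow_ge_one_sub hq0 hq1 (n := n)
    rw [← hn'def] at hber
    have e2 : (1 - q^n) * h x = h x - q^n * h x := by ring
    have c1 : h x - h y ≤ (1 - q^n) * h x := by linarith [key, e2]
    have c2 : (1 - q^n) * h x ≤ (n' * (1-q)) * h x :=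
      mul_le_mul_of_nonneg_right (by linarith [hber]) hx0
    have c3 : (n'*(1-q)) * h x ≤ (n'*(1-q)) * M :=
      mul_le_mul_of_nonneg_left hxM (mul_nonneg hn'0 (by linarith))
    have c4 : (n'*(1-q)) * M ≤ (n' * ((c * Real.cosh (c*L) / Real.sinh (c*L/4))*(y-x))) * M :=
      mul_le_mul_of_nonneg_right (mul_le_mul_of_nonneg_left h1q hn'0) hM0
    have c5 : (n' * ((c * Real.cosh (c*L) / Real.sinh (c*L/4))*(y-x))) * M = K * (y-x) := by
      rw [hKdef]; ring
    linarith
  -- monotonicity on the right half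
  have hmonoR : ∀ β : ℝ, β < b → MonotoneOn (fun z => K * z - h z) (Icc m β) := by
    intro β hβ x hx y hy hxy
    show K * x - h x ≤ K * y - h y
    rcases eq_or_lt_of_le hxy with rfl | hxy'
    · exact le_rfl
    have hay : a < y := lt_of_lt_of_le ham hy.1
    have hyb : y < b := lt_of_le_of_lt hy.2 hβ
    have key := mcp_pow_left hc hn hpos hmcp' (show a < m - L/4 by linarith)
      (show m - L/4 < x by linarith [hx.1]) hxy hyb
    set q := Real.sinh (c*(x - (m - L/4))) / Real.sinh (c*(y - (m - L/4))) with hqdef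
    clear_value q
    have hdx : (0:ℝ) < c*(x - (m - L/4)) := mul_pos hc (by linarith [hx.1])
    have hdy : (0:ℝ) < c*(y - (m - L/4)) := mul_pos hc (by linarith [hy.1])
    have hsx : 0 < Real.sinh (c*(x - (m - L/4))) := Real.sinh_pos_iff.2 hdx
    have hsy : 0 < Real.sinh (c*(y - (m - L/4))) := Real.sinh_pos_iff.2 hdy
    have hq1 : q ≤ 1 := by
      rw [hqdef]
      exact (div_le_one hsy).2 (Real.sinh_le_sinh.2
        (mul_le_mul_of_nonneg_left (by linarith) hc.le))
    have hq0 : 0 < q := by rw [hqdef]; exact div_pos hsx hsy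
    have hnum : Real.sinh (c*(y - (m - L/4))) - Real.sinh (c*(x - (m - L/4))) ≤
        (c*(y-x)) * Real.cosh (c*L) := by
      have h6 := sinh_sub_le_aux hdx.le
        (mul_le_mul_of_nonneg_left (by linarith) hc.le)
        (mul_le_mul_of_nonneg_left (by linarith [hy.2, hbm]) hc.le : c*(y - (m - L/4)) ≤ c*L)
      calc Real.sinh (c*(y - (m - L/4))) - Real.sinh (c*(x - (m - L/4))) ≤
          (c*(y - (m - L/4)) - c*(x - (m - L/4))) * Real.cosh (c*L) := h6
        _ = (c*(y-x)) * Real.cosh (c*L) := by ring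
    have hden : Real.sinh (c*L/4) ≤ Real.sinh (c*(y - (m - L/4))) := by
      apply Real.sinh_le_sinh.2
      rw [show c*L/4 = c*(L/4) by ring]
      exact mul_le_mul_of_nonneg_left (by linarith [hy.1]) hc.le
    have h1q : 1 - q ≤ (c * Real.cosh (c*L) / Real.sinh (c*L/4)) * (y - x) := by
      have e : 1 - q = (Real.sinh (c*(y - (m - L/4))) - Real.sinh (c*(x - (m - L/4)))) /
          Real.sinh (c*(y - (m - L/4))) := by
        rw [hqdef, eq_div_iff (ne_of_gt hsy), sub_mul, one_mul,
          div_mul_cancel₀ _ (ne_of_gt hsy)]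
      rw [e]
      calc (Real.sinh (c*(y - (m - L/4))) - Real.sinh (c*(x - (m - L/4)))) /
          Real.sinh (c*(y - (m - L/4))) ≤ ((c*(y-x)) * Real.cosh (c*L)) / Real.sinh (c*L/4) := by
            apply div_le_div₀ (mul_nonneg (mul_nonneg hc.le (by linarith))
              (Real.cosh_pos _).le) hnum hsL4 hden
        _ = (c * Real.cosh (c*L) / Real.sinh (c*L/4)) * (y - x) := by
            ring
    have hy0 : 0 ≤ h y := hpos y ⟨hay, hyb⟩
    have hyM : h y ≤ M := hup y ⟨hay, hyb⟩
    have hber := rpow_ge_one_sub hq0 hq1 (n := n)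
    rw [← hn'def] at hber
    have e2 : (1 - q^n) * h y = h y - q^n * h y := by ring
    have c1 : h y - h x ≤ (1 - q^n) * h y := by linarith [key, e2]
    have c2 : (1 - q^n) * h y ≤ (n' * (1-q)) * h y :=
      mul_le_mul_of_nonneg_right (by linarith [hber]) hy0
    have c3 : (n'*(1-q)) * h y ≤ (n'*(1-q)) * M :=
      mul_le_mul_of_nonneg_left hyM (mul_nonneg hn'0 (by linarith))
    have c4 : (n'*(1-q)) * M ≤ (n' * ((c * Real.cosh (c*L) / Real.sinh (c*L/4))*(y-x))) * M :=
      mul_le_mul_of_nonneg_right (mul_le_mul_of_nonneg_left h1q hn'0) hM0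
    have c5 : (n' * ((c * Real.cosh (c*L) / Real.sinh (c*L/4))*(y-x))) * M = K * (y-x) := by
      rw [hKdef]; ring
    linarith

  set f : ℝ → ENNReal := fun x => ENNReal.ofReal |deriv h x| with hfdef
  have hfmeas : Measurable f := (measurable_deriv h).abs.ennreal_ofReal
  -- left half estimate
  have hleft : ∀ α : ℝ, a < α → α ≤ m →
      (∀ᵐ x ∂(volume.restrict (Ioo α m)), DifferentiableAt ℝ h x) ∧
      AEMeasurable h (volume.restrict (Ioo α m)) ∧
      (volume.withDensity f) (Ioo α m) ≤ ENNReal.ofReal (h m + 2*K*L) := by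
    intro α haα hαm
    have hαb : α < b := lt_of_le_of_lt hαm hmb
    have hα0 : 0 ≤ h α := hpos α ⟨haα, hαb⟩
    obtain ⟨ρ, hρm, hρd, hρfin, hρint⟩ := monotoneOn_exists_density hαm (hmonoL α haα)
    have hder : ∀ᵐ x ∂(volume : Measure ℝ), x ∈ Ioo α m →
        HasDerivAt h ((ρ x).toReal - K) x := by
      filter_upwards [hρd] with x hx hmem
      have hd := hx hmem
      have hlin : HasDerivAt (fun y : ℝ => K * y) K x := by
        simpa using (hasDerivAt_id x).const_mul K
      have h2 := hd.sub hlin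
      apply h2.congr_of_eventuallyEq
      apply Filter.Eventually.of_forall
      intro y
      simp only [Pi.sub_apply]
      ring
    refine ⟨?_, ?_, ?_⟩
    · rw [ae_restrict_iff' measurableSet_Ioo]
      filter_upwards [hder] with x hx hmem
      exact (hx hmem).differentiableAt
    · have hψ : Monotone (fun x : ℝ => h (max α (min x m)) + K * (max α (min x m))) := by
        intro u v huv
        exact (hmonoL α haα) ⟨le_max_left _ _, max_le hαm (min_le_right _ _)⟩
          ⟨le_max_left _ _, max_le hαm (min_le_right _ _)⟩
          (max_le_max le_rfl (min_le_min_right _ huv))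
      have hgm : Measurable (fun x : ℝ =>
          (h (max α (min x m)) + K * (max α (min x m))) - K * x) :=
        (hψ.measurable).sub (measurable_const.mul measurable_id)
      apply AEMeasurable.congr hgm.aemeasurable
      rw [Filter.EventuallyEq, ae_restrict_iff' measurableSet_Ioo]
      apply Filter.Eventually.of_forall
      intro x hmem
      rw [min_eq_left hmem.2.le, max_eq_right hmem.1.le]
      ring
    · rw [withDensity_apply _ measurableSet_Ioo]
      have step1 : ∫⁻ x in Ioo α m, f x ≤ ∫⁻ x in Ioo α m, (ρ x + ENNReal.ofReal K) := by
        apply lintegral_mono_ae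
        filter_upwards [ae_restrict_of_ae hder, ae_restrict_of_ae hρfin,
          ae_restrict_mem measurableSet_Ioo] with x hx hfin hmem
        have hdx := (hx hmem).deriv
        rw [hfdef]
        simp only
        rw [hdx]
        calc ENNReal.ofReal |(ρ x).toReal - K| ≤ ENNReal.ofReal ((ρ x).toReal + K) := by
              apply ENNReal.ofReal_le_ofReal
              calc |(ρ x).toReal - K| ≤ |(ρ x).toReal| + |K| := abs_sub _ _
                _ = (ρ x).toReal + K := by
                    rw [abs_of_nonneg ENNReal.toReal_nonneg, abs_of_nonneg hK0]
          _ = ENNReal.ofReal (ρ x).toReal + ENNReal.ofReal K :=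
              ENNReal.ofReal_add ENNReal.toReal_nonneg hK0
          _ ≤ ρ x + ENNReal.ofReal K := add_le_add_left ENNReal.ofReal_toReal_le _
      have step2 : ∫⁻ x in Ioo α m, (ρ x + ENNReal.ofReal K) =
          (∫⁻ x in Ioo α m, ρ x) + ENNReal.ofReal K * volume (Ioo α m) := by
        rw [lintegral_add_right _ measurable_const, setLIntegral_const]
      have step3 : (∫⁻ x in Ioo α m, ρ x) + ENNReal.ofReal K * volume (Ioo α m) ≤
          ENNReal.ofReal (h m + K*L) + ENNReal.ofReal (K*L) := by
        apply add_le_add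
        · refine hρint.trans (ENNReal.ofReal_le_ofReal ?_)
          have : K * α ≤ K * m := mul_le_mul_of_nonneg_left hαm hK0
          have hKm : K * (m - α) ≤ K * L := mul_le_mul_of_nonneg_left (by linarith) hK0
          nlinarith [hKm]
        · rw [Real.volume_Ioo, ← ENNReal.ofReal_mul hK0]
          apply ENNReal.ofReal_le_ofReal
          have : K * (m - α) ≤ K * L := mul_le_mul_of_nonneg_left (by linarith) hK0
          linarith
      refine (step1.trans (step2.trans_le step3)).trans ?_
      rw [← ENNReal.ofReal_add (by nlinarith) (by nlinarith)]
      apply ENNReal.ofReal_le_ofReal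
      linarith
  -- right half estimate
  have hright : ∀ β : ℝ, m ≤ β → β < b →
      (∀ᵐ x ∂(volume.restrict (Ioo m β)), DifferentiableAt ℝ h x) ∧
      AEMeasurable h (volume.restrict (Ioo m β)) ∧
      (volume.withDensity f) (Ioo m β) ≤ ENNReal.ofReal (h m + 2*K*L) := by
    intro β hmβ hβb
    have haβ : a < β := lt_of_lt_of_le ham hmβ
    have hβ0 : 0 ≤ h β := hpos β ⟨haβ, hβb⟩
    obtain ⟨ρ, hρm, hρd, hρfin, hρint⟩ := monotoneOn_exists_density hmβ (hmonoR β hβb)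
    have hder : ∀ᵐ x ∂(volume : Measure ℝ), x ∈ Ioo m β →
        HasDerivAt h (K - (ρ x).toReal) x := by
      filter_upwards [hρd] with x hx hmem
      have hd := hx hmem
      have hlin : HasDerivAt (fun y : ℝ => K * y) K x := by
        simpa using (hasDerivAt_id x).const_mul K
      have h2 := hlin.sub hd
      apply h2.congr_of_eventuallyEq
      apply Filter.Eventually.of_forall
      intro y
      simp only [Pi.sub_apply]
      ring
    refine ⟨?_, ?_, ?_⟩
    · rw [ae_restrict_iff' measurableSet_Ioo]
      filter_upwards [hder] with x hx hmem
      exact (hx hmem).differentiableAt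
    · have hψ : Monotone (fun x : ℝ => K * (max m (min x β)) - h (max m (min x β))) := by
        intro u v huv
        exact (hmonoR β hβb) ⟨le_max_left _ _, max_le hmβ (min_le_right _ _)⟩
          ⟨le_max_left _ _, max_le hmβ (min_le_right _ _)⟩
          (max_le_max le_rfl (min_le_min_right _ huv))
      have hgm : Measurable (fun x : ℝ =>
          K * x - (K * (max m (min x β)) - h (max m (min x β)))) :=
        (measurable_const.mul measurable_id).sub hψ.measurable
      apply AEMeasurable.congr hgm.aemeasurable
      rw [Filter.EventuallyEq, ae_restrict_iff' measurableSet_Ioo]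
      apply Filter.Eventually.of_forall
      intro x hmem
      rw [min_eq_left hmem.2.le, max_eq_right hmem.1.le]
      ring
    · rw [withDensity_apply _ measurableSet_Ioo]
      have step1 : ∫⁻ x in Ioo m β, f x ≤ ∫⁻ x in Ioo m β, (ρ x + ENNReal.ofReal K) := by
        apply lintegral_mono_ae
        filter_upwards [ae_restrict_of_ae hder, ae_restrict_of_ae hρfin,
          ae_restrict_mem measurableSet_Ioo] with x hx hfin hmem
        have hdx := (hx hmem).deriv
        rw [hfdef]
        simp only
        rw [hdx]
        calc ENNReal.ofReal |K - (ρ x).toReal| ≤ ENNReal.ofReal ((ρ x).toReal + K) := by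
              apply ENNReal.ofReal_le_ofReal
              calc |K - (ρ x).toReal| ≤ |K| + |(ρ x).toReal| := abs_sub _ _
                _ = (ρ x).toReal + K := by
                    rw [abs_of_nonneg ENNReal.toReal_nonneg, abs_of_nonneg hK0]; ring
          _ = ENNReal.ofReal (ρ x).toReal + ENNReal.ofReal K :=
              ENNReal.ofReal_add ENNReal.toReal_nonneg hK0
          _ ≤ ρ x + ENNReal.ofReal K := add_le_add_left ENNReal.ofReal_toReal_le _
      have step2 : ∫⁻ x in Ioo m β, (ρ x + ENNReal.ofReal K) =
          (∫⁻ x in Ioo m β, ρ x) + ENNReal.ofReal K * volume (Ioo m β) := by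
        rw [lintegral_add_right _ measurable_const, setLIntegral_const]
      have step3 : (∫⁻ x in Ioo m β, ρ x) + ENNReal.ofReal K * volume (Ioo m β) ≤
          ENNReal.ofReal (h m + K*L) + ENNReal.ofReal (K*L) := by
        apply add_le_add
        · refine hρint.trans (ENNReal.ofReal_le_ofReal ?_)
          have hKm : K * (β - m) ≤ K * L := mul_le_mul_of_nonneg_left (by linarith) hK0
          nlinarith [hKm]
        · rw [Real.volume_Ioo, ← ENNReal.ofReal_mul hK0]
          apply ENNReal.ofReal_le_ofReal
          have : K * (β - m) ≤ K * L := mul_le_mul_of_nonneg_left (by linarith) hK0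
          linarith
      refine (step1.trans (step2.trans_le step3)).trans ?_
      rw [← ENNReal.ofReal_add (by nlinarith) (by nlinarith)]
      apply ENNReal.ofReal_le_ofReal
      linarith
  -- the exhausting sequences
  have hkp : ∀ k : ℕ, (0:ℝ) < (k:ℝ) + 1 := fun k => by positivity
  have haA : ∀ k : ℕ, a < a + (m - a)/((k:ℝ)+1) := fun k => by
    have := div_pos (show (0:ℝ) < m - a by linarith) (hkp k); linarith
  have hAm : ∀ k : ℕ, a + (m - a)/((k:ℝ)+1) ≤ m := fun k => by
    have := div_le_self (show (0:ℝ) ≤ m - a by linarith) (by linarith [hkp k] : (1:ℝ) ≤ (k:ℝ)+1)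
    linarith
  have hBb : ∀ k : ℕ, b - (b - m)/((k:ℝ)+1) < b := fun k => by
    have := div_pos (show (0:ℝ) < b - m by linarith) (hkp k); linarith
  have hmB : ∀ k : ℕ, m ≤ b - (b - m)/((k:ℝ)+1) := fun k => by
    have := div_le_self (show (0:ℝ) ≤ b - m by linarith) (by linarith [hkp k] : (1:ℝ) ≤ (k:ℝ)+1)
    linarith
  have hUL : (⋃ k : ℕ, Ioo (a + (m - a)/((k:ℝ)+1)) m) = Ioo a m := by
    ext x
    simp only [mem_iUnion, mem_Ioo]
    constructor
    · rintro ⟨k, h1, h2⟩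
      exact ⟨lt_trans (haA k) h1, h2⟩
    · rintro ⟨h1, h2⟩
      obtain ⟨k, hk⟩ := exists_nat_gt ((m - a)/(x - a))
      refine ⟨k, ?_, h2⟩
      have hxa : 0 < x - a := by linarith
      have h3 : m - a < (k:ℝ) * (x - a) := (div_lt_iff₀ hxa).1 hk
      have h4 : (m - a)/((k:ℝ)+1) < x - a := by
        rw [div_lt_iff₀ (hkp k)]
        nlinarith
      linarith
  have hUR : (⋃ k : ℕ, Ioo m (b - (b - m)/((k:ℝ)+1))) = Ioo m b := by
    ext x
    simp only [mem_iUnion, mem_Ioo]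
    constructor
    · rintro ⟨k, h1, h2⟩
      exact ⟨h1, lt_trans h2 (hBb k)⟩
    · rintro ⟨h1, h2⟩
      obtain ⟨k, hk⟩ := exists_nat_gt ((b - m)/(b - x))
      refine ⟨k, h1, ?_⟩
      have hbx : 0 < b - x := by linarith
      have h3 : b - m < (k:ℝ) * (b - x) := (div_lt_iff₀ hbx).1 hk
      have h4 : (b - m)/((k:ℝ)+1) < b - x := by
        rw [div_lt_iff₀ (hkp k)]
        nlinarith
      linarith
  have hdirL : Directed (· ⊆ ·) (fun k : ℕ => Ioo (a + (m - a)/((k:ℝ)+1)) m) := by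
    intro i j
    refine ⟨max i j, Ioo_subset_Ioo_left ?_, Ioo_subset_Ioo_left ?_⟩
    · have h2 : (0:ℝ) ≤ m - a := by linarith
      gcongr
      exact le_max_left i j
    · have h2 : (0:ℝ) ≤ m - a := by linarith
      gcongr
      exact le_max_right i j
  have hdirR : Directed (· ⊆ ·) (fun k : ℕ => Ioo m (b - (b - m)/((k:ℝ)+1))) := by
    intro i j
    refine ⟨max i j, Ioo_subset_Ioo_right ?_, Ioo_subset_Ioo_right ?_⟩
    · have h2 : (0:ℝ) ≤ b - m := by linarith
      gcongr
      exact le_max_left i j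
    · have h2 : (0:ℝ) ≤ b - m := by linarith
      gcongr
      exact le_max_right i j
  -- splitting of the interval
  have hsplit : Ioo a b ⊆ Ioo a m ∪ ({m} ∪ Ioo m b) := by
    intro x hx
    rcases lt_trichotomy x m with hxm | rfl | hxm
    · exact Or.inl ⟨hx.1, hxm⟩
    · exact Or.inr (Or.inl rfl)
    · exact Or.inr (Or.inr ⟨hxm, hx.2⟩)
  have hres0 : volume.restrict ({m} : Set ℝ) = 0 := by
    rw [Measure.restrict_eq_zero]
    exact measure_singleton m
  -- a.e. differentiability on the union
  have haeU : ∀ᵐ x ∂(volume.restrict (Ioo a m ∪ ({m} ∪ Ioo m b))), DifferentiableAt ℝ h x := by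
    rw [ae_restrict_union_iff]
    constructor
    · rw [← hUL, ae_restrict_iUnion_iff]
      exact fun k => (hleft _ (haA k) (hAm k)).1
    · rw [ae_restrict_union_iff]
      refine ⟨?_, ?_⟩
      · rw [hres0]
        simp
      · rw [← hUR, ae_restrict_iUnion_iff]
        exact fun k => (hright _ (hmB k) (hBb k)).1
  have hae : ∀ᵐ x ∂(volume.restrict (Ioo a b)), DifferentiableAt ℝ h x :=
    haeU.filter_mono (ae_mono (Measure.restrict_mono hsplit le_rfl))
  -- a.e. measurability of h
  have hmeasU : AEMeasurable h (volume.restrict (Ioo a m ∪ ({m} ∪ Ioo m b))) := by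
    rw [aemeasurable_union_iff]
    constructor
    · rw [← hUL, aemeasurable_iUnion_iff]
      exact fun k => (hleft _ (haA k) (hAm k)).2.1
    · rw [aemeasurable_union_iff]
      refine ⟨?_, ?_⟩
      · rw [hres0]
        exact aemeasurable_zero_measure
      · rw [← hUR, aemeasurable_iUnion_iff]
        exact fun k => (hright _ (hmB k) (hBb k)).2.1
  have hmeas : AEMeasurable h (volume.restrict (Ioo a b)) :=
    hmeasU.mono_measure (Measure.restrict_mono hsplit le_rfl)
  -- total variation bound
  have hν0 : (volume.withDensity f) ({m} : Set ℝ) = 0 := by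
    rw [withDensity_apply _ (measurableSet_singleton m)]
    exact setLIntegral_measure_zero _ _ (measure_singleton m)
  have hνL : (volume.withDensity f) (Ioo a m) ≤ ENNReal.ofReal (h m + 2*K*L) := by
    rw [← hUL, hdirL.measure_iUnion]
    exact iSup_le fun k => (hleft _ (haA k) (hAm k)).2.2
  have hνR : (volume.withDensity f) (Ioo m b) ≤ ENNReal.ofReal (h m + 2*K*L) := by
    rw [← hUR, hdirR.measure_iUnion]
    exact iSup_le fun k => (hright _ (hmB k) (hBb k)).2.2
  have hKL0 : 0 ≤ 2*K*L := mul_nonneg (mul_nonneg (by norm_num) hK0) hL.le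
  have hνtot : (volume.withDensity f) (Ioo a b) ≤
      ENNReal.ofReal ((h m + 2*K*L) + (h m + 2*K*L)) := by
    calc (volume.withDensity f) (Ioo a b) ≤
        (volume.withDensity f) (Ioo a m ∪ ({m} ∪ Ioo m b)) := measure_mono hsplit
      _ ≤ (volume.withDensity f) (Ioo a m) +
          (volume.withDensity f) ({m} ∪ Ioo m b) := measure_union_le _ _
      _ ≤ (volume.withDensity f) (Ioo a m) +
          ((volume.withDensity f) {m} + (volume.withDensity f) (Ioo m b)) := by
          exact add_le_add_right (measure_union_le _ _) _
      _ ≤ ENNReal.ofReal (h m + 2*K*L) + (0 + ENNReal.ofReal (h m + 2*K*L)) := by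
          rw [hν0]
          exact add_le_add hνL (add_le_add le_rfl hνR)
      _ = ENNReal.ofReal ((h m + 2*K*L) + (h m + 2*K*L)) := by
          rw [zero_add, ← ENNReal.ofReal_add (by linarith) (by linarith)]
  have hTV : ∫ x in Set.Ioo a b, |deriv h x| ≤ 2*(h m) + 4*K*L := by
    rw [integral_eq_lintegral_of_nonneg_ae
      (Filter.Eventually.of_forall fun x => abs_nonneg _)
      ((measurable_deriv h).abs.aestronglyMeasurable)]
    have hlint : ∫⁻ x in Ioo a b, ENNReal.ofReal |deriv h x| ≤
        ENNReal.ofReal ((h m + 2*K*L) + (h m + 2*K*L)) := by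
      rw [show (fun x => ENNReal.ofReal |deriv h x|) = f from rfl,
        ← withDensity_apply _ measurableSet_Ioo]
      exact hνtot
    calc (∫⁻ x in Ioo a b, ENNReal.ofReal |deriv h x|).toReal ≤
        (ENNReal.ofReal ((h m + 2*K*L) + (h m + 2*K*L))).toReal :=
          ENNReal.toReal_mono ENNReal.ofReal_ne_top hlint
      _ ≤ 2*(h m) + 4*K*L := by
          rw [ENNReal.toReal_ofReal (by nlinarith)]
          linarith

  refine ⟨hae, ?_⟩

  -- the integral of h: upper and lower bounds via lintegral
  have hIh : ∫ x in Ioo a b, h x = (∫⁻ x in Ioo a b, ENNReal.ofReal (h x)).toReal :=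
    integral_eq_lintegral_of_nonneg_ae
      ((ae_restrict_iff' measurableSet_Ioo).2 (Filter.Eventually.of_forall hpos))
      hmeas.aestronglyMeasurable
  have hub : ∫⁻ x in Ioo a b, ENNReal.ofReal (h x) ≤ ENNReal.ofReal M * ENNReal.ofReal L := by
    calc ∫⁻ x in Ioo a b, ENNReal.ofReal (h x) ≤ ∫⁻ _ in Ioo a b, ENNReal.ofReal M := by
          apply lintegral_mono_ae
          filter_upwards [ae_restrict_mem measurableSet_Ioo] with x hx
          exact ENNReal.ofReal_le_ofReal (hup x hx)
      _ = ENNReal.ofReal M * volume (Ioo a b) := setLIntegral_const _ _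
      _ = ENNReal.ofReal M * ENNReal.ofReal L := by rw [Real.volume_Ioo, ← hLdef]
  have hsub : Ioo m (m + L/8) ⊆ Ioo a b := by
    intro x hx
    exact ⟨lt_trans ham hx.1, by linarith [hx.2]⟩
  have hlb : ENNReal.ofReal (h m / Λ) * ENNReal.ofReal (L/8) ≤
      ∫⁻ x in Ioo a b, ENNReal.ofReal (h x) := by
    calc ENNReal.ofReal (h m / Λ) * ENNReal.ofReal (L/8)
        = ENNReal.ofReal (h m / Λ) * volume (Ioo m (m + L/8)) := by
          rw [Real.volume_Ioo, show m + L/8 - m = L/8 by ring]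
      _ = ∫⁻ _ in Ioo m (m + L/8), ENNReal.ofReal (h m / Λ) := (setLIntegral_const _ _).symm
      _ ≤ ∫⁻ x in Ioo m (m + L/8), ENNReal.ofReal (h x) := by
          apply lintegral_mono_ae
          filter_upwards [ae_restrict_mem measurableSet_Ioo] with x hx
          apply ENNReal.ofReal_le_ofReal
          rw [div_le_iff₀ hΛpos]
          have := hlowJ x hx
          linarith [mul_comm (h x) Λ]
      _ ≤ ∫⁻ x in Ioo a b, ENNReal.ofReal (h x) := lintegral_mono_set hsub
  have hfin : ∫⁻ x in Ioo a b, ENNReal.ofReal (h x) ≠ ⊤ :=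
    ne_top_of_le_ne_top (ENNReal.mul_ne_top ENNReal.ofReal_ne_top ENNReal.ofReal_ne_top) hub
  have hX : h m / Λ * (L/8) ≤ ∫ x in Ioo a b, h x := by
    rw [hIh]
    have h2 := ENNReal.toReal_mono hfin hlb
    rwa [ENNReal.toReal_mul, ENNReal.toReal_ofReal (div_nonneg hm0 hΛpos.le),
      ENNReal.toReal_ofReal (by linarith)] at h2
  set X := ∫ x in Ioo a b, h x with hXdef
  clear_value X
  have hX0 : 0 ≤ X := le_trans (by positivity) hX
  have hXl : h m * L ≤ 8 * Λ * X := by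
    have h3 := mul_le_mul_of_nonneg_left hX (show (0:ℝ) ≤ 8*Λ by positivity)
    have e2 : 8*Λ*(h m / Λ * (L/8)) = h m * L := by field_simp
    linarith [h3, e2]
  -- K * L bound
  have h8 : c*L/Real.sinh (c*L/4) ≤ 4 := by
    rw [div_le_iff₀ hsL4]
    have h9 : c*L/4 ≤ Real.sinh (c*L/4) := Real.self_le_sinh_iff.2 (by linarith)
    linarith
  have hKL : K * L ≤ 4*(n' * Real.cosh (c*L) * (Λ * h m)) := by
    have e : K * L = (n' * Real.cosh (c*L) * (Λ * h m)) * (c*L/Real.sinh (c*L/4)) := by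
      rw [hKdef, hMdef]
      field_simp
    rw [e]
    calc (n' * Real.cosh (c*L) * (Λ * h m)) * (c*L/Real.sinh (c*L/4)) ≤
        (n' * Real.cosh (c*L) * (Λ * h m)) * 4 :=
          mul_le_mul_of_nonneg_left h8 (mul_nonneg (mul_nonneg hn'0 (Real.cosh_pos _).le)
            (mul_nonneg hΛpos.le hm0))
      _ = 4*(n' * Real.cosh (c*L) * (Λ * h m)) := by ring
  -- final arithmetic
  have hmain : (2*(h m) + 4*K*L) * L ≤ (16 * Λ + 128 * n' * (Λ * Λ) * Real.cosh (c*L)) * X := by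
    have f1 : 2*(h m * L) ≤ 2*(8*Λ*X) := by linarith
    have f2 : 4*((K*L)*L) ≤ 4*((4*(n' * Real.cosh (c*L) * (Λ * h m)))*L) :=
      mul_le_mul_of_nonneg_left (mul_le_mul_of_nonneg_right hKL hL.le) (by norm_num)
    have f3 : (16*(n' * Real.cosh (c*L))*Λ)*(h m * L) ≤ (16*(n' * Real.cosh (c*L))*Λ)*(8*Λ*X) :=
      mul_le_mul_of_nonneg_left hXl (mul_nonneg (mul_nonneg (by norm_num)
        (mul_nonneg hn'0 (Real.cosh_pos _).le)) hΛpos.le)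
    ring_nf at f1 f2 f3 ⊢
    linarith
  calc ∫ x in Set.Ioo a b, |deriv h x| ≤ 2*(h m) + 4*K*L := hTV
    _ ≤ 1/L * (16 * Λ + 128 * n' * (Λ * Λ) * Real.cosh (c*L)) * X := by
        rw [show 1/L * (16 * Λ + 128 * n' * (Λ * Λ) * Real.cosh (c*L)) * X =
          ((16 * Λ + 128 * n' * (Λ * Λ) * Real.cosh (c*L)) * X) / L by ring,
          le_div_iff₀ hL]
        exact hmain
end

section
/- Let κ < 0 and N > 1 be real, let I be an open real interval, and let h : I → ℝ be positive and twice continuously differentiable on I. Then h is a CD(κ,N) density on I if and only if for every x ∈ I one has (log h)''(x) + (1/(N−1))·((log h)'(x))² ≤ −κ. -/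
open Set

/-- A `CD(κ,N)` density on the set `I ⊆ ℝ`, for a constant negative curvature
parameter `κ`, with the explicit hyperbolic distortion coefficients. -/
def IsCDNegDensity (κ N : ℝ) (I : Set ℝ) (h : ℝ → ℝ) : Prop :=
  (∀ x ∈ I, 0 ≤ h x) ∧
    ∀ x₀ ∈ I, ∀ x₁ ∈ I, x₀ ≠ x₁ → ∀ t ∈ Set.Icc (0 : ℝ) 1,
      Real.sinh (Real.sqrt (-κ / (N - 1)) * ((1 - t) * |x₁ - x₀|)) /
            Real.sinh (Real.sqrt (-κ / (N - 1)) * |x₁ - x₀|) * h x₀ ^ (1 / (N - 1)) +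
          Real.sinh (Real.sqrt (-κ / (N - 1)) * (t * |x₁ - x₀|)) /
            Real.sinh (Real.sqrt (-κ / (N - 1)) * |x₁ - x₀|) * h x₁ ^ (1 / (N - 1)) ≤
        h ((1 - t) * x₀ + t * x₁) ^ (1 / (N - 1))

/-- If `f1 c = 0` and `f2 c < 0`, where `f1, f2` are first and second derivatives of `f`
on an open set `s` and `f2` is continuous, then `f` strictly decreases just right of `c`. -/
private lemma strict_dec_aux (f f1 f2 : ℝ → ℝ) (s : Set ℝ) (hs : IsOpen s)
    (hd1 : ∀ x ∈ s, HasDerivAt f (f1 x) x)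
    (hd2 : ∀ x ∈ s, HasDerivAt f1 (f2 x) x)
    (hc2 : ContinuousOn f2 s)
    (c : ℝ) (hc : c ∈ s) (h1 : f1 c = 0) (h2 : f2 c < 0)
    (δ : ℝ) (hδ : 0 < δ) :
    ∃ ε, 0 < ε ∧ ε < δ ∧ c + ε ∈ s ∧ f (c + ε) < f c := by
  have hca : ContinuousAt f2 c := hc2.continuousAt (hs.mem_nhds hc)
  have h3 : f2 ⁻¹' Iio 0 ∈ nhds c := hca.preimage_mem_nhds (Iio_mem_nhds h2)
  have h4 : s ∩ f2 ⁻¹' Iio 0 ∈ nhds c := Filter.inter_mem (hs.mem_nhds hc) h3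
  obtain ⟨η, hη, hball⟩ := Metric.mem_nhds_iff.1 h4
  set r : ℝ := min (η / 2) (δ / 2) with hr_def
  have hr0 : 0 < r := lt_min (by linarith) (by linarith)
  have hrδ : r < δ := lt_of_le_of_lt (min_le_right _ _) (by linarith)
  have hsub : Icc c (c + r) ⊆ s ∩ f2 ⁻¹' Iio 0 := by
    intro y hy
    apply hball
    rw [Metric.mem_ball, Real.dist_eq, abs_of_nonneg (by linarith [hy.1])]
    have : r ≤ η / 2 := min_le_left _ _
    linarith [hy.2]
  have hmem : ∀ y ∈ Icc c (c + r), y ∈ s := fun y hy => (hsub hy).1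
  have hf1neg : ∀ y ∈ Icc c (c + r), f2 y < 0 := fun y hy => (hsub hy).2
  have hanti1 : StrictAntiOn f1 (Icc c (c + r)) := by
    apply strictAntiOn_of_deriv_neg (convex_Icc _ _)
    · exact fun y hy => (hd2 y (hmem y hy)).continuousAt.continuousWithinAt
    · intro y hy
      rw [interior_Icc] at hy
      rw [(hd2 y (hmem y (Ioo_subset_Icc_self hy))).deriv]
      exact hf1neg y (Ioo_subset_Icc_self hy)
  have hcmem : c ∈ Icc c (c + r) := ⟨le_refl _, by linarith⟩
  have hf1lt : ∀ y ∈ Ioo c (c + r), f1 y < 0 := by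
    intro y hy
    have := hanti1 hcmem (Ioo_subset_Icc_self hy) hy.1
    rwa [h1] at this
  have hanti : StrictAntiOn f (Icc c (c + r)) := by
    apply strictAntiOn_of_deriv_neg (convex_Icc _ _)
    · exact fun y hy => (hd1 y (hmem y hy)).continuousAt.continuousWithinAt
    · intro y hy
      rw [interior_Icc] at hy
      rw [(hd1 y (hmem y (Ioo_subset_Icc_self hy))).deriv]
      exact hf1lt y hy
  refine ⟨r, hr0, hrδ, hmem _ ⟨by linarith, le_refl _⟩, ?_⟩
  exact hanti hcmem ⟨by linarith, le_refl _⟩ (by linarith)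

/-- One-dimensional maximum principle: a subsolution of `f'' = L² f` (in the sense that
`f2 < 0` wherever `f < 0`) which vanishes at both endpoints is nonnegative on `[a,b]`. -/
private lemma nonneg_of_subsolution (f f1 f2 : ℝ → ℝ) (s : Set ℝ) (hs : IsOpen s)
    (hd1 : ∀ x ∈ s, HasDerivAt f (f1 x) x)
    (hd2 : ∀ x ∈ s, HasDerivAt f1 (f2 x) x)
    (hc2 : ContinuousOn f2 s)
    (a b : ℝ) (hab : a < b) (hIcc : Icc a b ⊆ s)
    (hsub : ∀ x ∈ Icc a b, f x < 0 → f2 x < 0)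
    (ha : f a = 0) (hb : f b = 0) :
    ∀ x ∈ Icc a b, 0 ≤ f x := by
  by_contra hcon
  push_neg at hcon
  obtain ⟨x0, hx0, hx0neg⟩ := hcon
  have hfc : ContinuousOn f (Icc a b) :=
    fun y hy => (hd1 y (hIcc hy)).continuousAt.continuousWithinAt
  obtain ⟨c, hcmem, hcmin⟩ := isCompact_Icc.exists_isMinOn ⟨a, ⟨le_refl _, hab.le⟩⟩ hfc
  have hfcneg : f c < 0 := lt_of_le_of_lt (hcmin hx0) hx0neg
  have hac : a < c := by
    rcases eq_or_lt_of_le hcmem.1 with h | h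
    · exfalso; rw [← h, ha] at hfcneg; exact lt_irrefl _ hfcneg
    · exact h
  have hcb : c < b := by
    rcases eq_or_lt_of_le hcmem.2 with h | h
    · exfalso; rw [h, hb] at hfcneg; exact lt_irrefl _ hfcneg
    · exact h
  have hloc : IsLocalMin f c := hcmin.isLocalMin (Icc_mem_nhds hac hcb)
  have hf1c : f1 c = 0 := by
    have := hloc.deriv_eq_zero
    rwa [(hd1 c (hIcc hcmem)).deriv] at this
  have hf2c : f2 c < 0 := hsub c hcmem hfcneg
  obtain ⟨ε, hε0, hεδ, -, hlt⟩ :=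
    strict_dec_aux f f1 f2 s hs hd1 hd2 hc2 c (hIcc hcmem) hf1c hf2c (b - c) (by linarith)
  have hmem : c + ε ∈ Icc a b := ⟨by linarith, by linarith⟩
  exact absurd (hcmin hmem) (not_le.mpr hlt)

/-- Differential characterization of `CD(κ,N)` densities (`κ < 0`): a positive, twice
continuously differentiable function on an open interval `I` is a `CD(κ,N)` density
iff `(log h)'' + (log h)'^2/(N-1) ≤ -κ` on `I`. -/
theorem cd_neg_density_differential_characterization (κ N : ℝ) (I : Set ℝ) (h : ℝ → ℝ)
    (hκ : κ < 0) (hN : 1 < N) (hI : IsOpen I) (hI' : I.OrdConnected)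
    (hpos : ∀ x ∈ I, 0 < h x) (hreg : ContDiffOn ℝ 2 h I) :
    IsCDNegDensity κ N I h ↔
      ∀ x ∈ I, deriv (deriv (fun y => Real.log (h y))) x +
        (1 / (N - 1)) * (deriv (fun y => Real.log (h y)) x) ^ 2 ≤ -κ := by
  rw [IsCDNegDensity]
  have hN1 : (0 : ℝ) < N - 1 := by linarith
  have hc0 : (0 : ℝ) < 1 / (N - 1) := by positivity
  set L : ℝ := Real.sqrt (-κ / (N - 1)) with hL_def
  have hL2 : L ^ 2 = -κ / (N - 1) := Real.sq_sqrt (le_of_lt (div_pos (by linarith) hN1))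
  have hL0 : 0 < L := Real.sqrt_pos.mpr (div_pos (by linarith) hN1)
  set u : ℝ → ℝ := fun y => Real.log (h y) with hu_def
  set g : ℝ → ℝ := fun y => Real.exp (1 / (N - 1) * u y) with hg_def
  have hg_pos : ∀ x, 0 < g x := fun x => Real.exp_pos _
  have hg_eq : ∀ x ∈ I, h x ^ (1 / (N - 1)) = g x := by
    intro x hx
    rw [Real.rpow_def_of_pos (hpos x hx), hg_def, mul_comm]
  have hu_reg : ContDiffOn ℝ 2 u I := hreg.log fun x hx => (hpos x hx).ne'
  have hu_diff : ∀ x ∈ I, HasDerivAt u (deriv u x) x := fun x hx =>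
    ((hu_reg.differentiableOn (by norm_num)).differentiableAt (hI.mem_nhds hx)).hasDerivAt
  have hu1_reg : ContDiffOn ℝ 1 (deriv u) I := hu_reg.deriv_of_isOpen hI (by norm_num)
  have hu1_diff : ∀ x ∈ I, HasDerivAt (deriv u) (deriv (deriv u) x) x := fun x hx =>
    ((hu1_reg.differentiableOn (by norm_num)).differentiableAt (hI.mem_nhds hx)).hasDerivAt
  have hu2_cont : ContinuousOn (deriv (deriv u)) I :=
    (hu1_reg.deriv_of_isOpen (m := 0) hI (by norm_num)).continuousOn
  set G1 : ℝ → ℝ := fun y => 1 / (N - 1) * deriv u y * g y with hG1_def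
  set G2 : ℝ → ℝ := fun y => 1 / (N - 1) * deriv (deriv u) y * g y +
      1 / (N - 1) * deriv u y * (1 / (N - 1) * deriv u y * g y) with hG2_def
  have hg_diff : ∀ x ∈ I, HasDerivAt g (G1 x) x := by
    intro x hx
    have h1 := ((hu_diff x hx).const_mul (1 / (N - 1))).exp
    have e : G1 x = Real.exp (1 / (N - 1) * u x) * (1 / (N - 1) * deriv u x) := by
      simp only [hG1_def, hg_def]; ring
    rw [e]
    exact h1
  have hG1_diff : ∀ x ∈ I, HasDerivAt G1 (G2 x) x := fun x hx =>
    ((hu1_diff x hx).const_mul (1 / (N - 1))).mul (hg_diff x hx)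
  have hg_cont : ContinuousOn g I := fun x hx =>
    (hg_diff x hx).continuousAt.continuousWithinAt
  have hu1_cont : ContinuousOn (deriv u) I := hu1_reg.continuousOn
  have hG2_cont : ContinuousOn G2 I :=
    ((continuousOn_const.mul hu2_cont).mul hg_cont).add
      ((continuousOn_const.mul hu1_cont).mul ((continuousOn_const.mul hu1_cont).mul hg_cont))
  have hkey : ∀ x, 0 < g x → (G2 x ≤ L ^ 2 * g x ↔
      deriv (deriv u) x + 1 / (N - 1) * deriv u x ^ 2 ≤ -κ) := by
    intro x hgx
    simp only [hG2_def]
    have e1 : 1 / (N - 1) * deriv (deriv u) x * g x +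
        1 / (N - 1) * deriv u x * (1 / (N - 1) * deriv u x * g x) =
        (deriv (deriv u) x + 1 / (N - 1) * deriv u x ^ 2) * (1 / (N - 1) * g x) := by ring
    have e2 : L ^ 2 * g x = -κ * (1 / (N - 1) * g x) := by
      rw [hL2]; field_simp
    rw [e1, e2]
    constructor
    · intro H
      exact le_of_mul_le_mul_right H (by positivity)
    · intro H
      exact mul_le_mul_of_nonneg_right H (by positivity)
  constructor
  · -- CD property implies the differential inequality
    rintro ⟨-, hCD2⟩ x hx
    rw [← hkey x (hg_pos x)]
    by_contra hcon
    push_neg at hcon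
    set s : Set ℝ := {ε : ℝ | x + ε ∈ I ∧ x - ε ∈ I} with hs_def
    have hs_open : IsOpen s := by
      have h1 : IsOpen ((fun ε : ℝ => x + ε) ⁻¹' I) :=
        hI.preimage (continuous_const.add continuous_id)
      have h2 : IsOpen ((fun ε : ℝ => x - ε) ⁻¹' I) :=
        hI.preimage (continuous_const.sub continuous_id)
      exact h1.inter h2
    have h0s : (0 : ℝ) ∈ s := by simp [hs_def, hx]
    set φ : ℝ → ℝ := fun ε => 2 * Real.cosh (L * ε) * g x - g (x + ε) - g (x - ε) with hφ_def
    set φ1 : ℝ → ℝ :=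
      fun ε => 2 * L * Real.sinh (L * ε) * g x - G1 (x + ε) + G1 (x - ε) with hφ1_def
    set φ2 : ℝ → ℝ :=
      fun ε => 2 * L ^ 2 * Real.cosh (L * ε) * g x - G2 (x + ε) - G2 (x - ε) with hφ2_def
    have hLd : ∀ ε : ℝ, HasDerivAt (fun ε : ℝ => L * ε) L ε := fun ε => by
      simpa using (hasDerivAt_id ε).const_mul L
    have hplus : ∀ ε ∈ s, HasDerivAt (fun ε => g (x + ε)) (G1 (x + ε)) ε := by
      intro ε hε
      have := (hg_diff (x + ε) hε.1).comp ε ((hasDerivAt_id ε).const_add x)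
      simpa [Function.comp_def] using this
    have hminus : ∀ ε ∈ s, HasDerivAt (fun ε => g (x - ε)) (-G1 (x - ε)) ε := by
      intro ε hε
      have := (hg_diff (x - ε) hε.2).comp ε ((hasDerivAt_id ε).const_sub x)
      simpa [Function.comp_def] using this
    have hplus1 : ∀ ε ∈ s, HasDerivAt (fun ε => G1 (x + ε)) (G2 (x + ε)) ε := by
      intro ε hε
      have := (hG1_diff (x + ε) hε.1).comp ε ((hasDerivAt_id ε).const_add x)
      simpa [Function.comp_def] using this
    have hminus1 : ∀ ε ∈ s, HasDerivAt (fun ε => G1 (x - ε)) (-G2 (x - ε)) ε := by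
      intro ε hε
      have := (hG1_diff (x - ε) hε.2).comp ε ((hasDerivAt_id ε).const_sub x)
      simpa [Function.comp_def] using this
    have hd1 : ∀ ε ∈ s, HasDerivAt φ (φ1 ε) ε := by
      intro ε hε
      have hA : HasDerivAt (fun ε : ℝ => 2 * Real.cosh (L * ε) * g x)
          (2 * (Real.sinh (L * ε) * L) * g x) ε := (((hLd ε).cosh).const_mul 2).mul_const (g x)
      have hB := (hA.sub (hplus ε hε)).sub (hminus ε hε)
      refine hB.congr_deriv ?_
      simp only [hφ1_def]; ring
    have hd2 : ∀ ε ∈ s, HasDerivAt φ1 (φ2 ε) ε := by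
      intro ε hε
      have hA : HasDerivAt (fun ε : ℝ => 2 * L * Real.sinh (L * ε) * g x)
          (2 * L * (Real.cosh (L * ε) * L) * g x) ε :=
        (((hLd ε).sinh).const_mul (2 * L)).mul_const (g x)
      have hB := (hA.sub (hplus1 ε hε)).add (hminus1 ε hε)
      refine hB.congr_deriv ?_
      simp only [hφ2_def]; ring
    have hφ2_cont : ContinuousOn φ2 s := by
      apply ContinuousOn.sub
      apply ContinuousOn.sub
      · exact ((continuous_const.mul
          (Real.continuous_cosh.comp (continuous_const.mul continuous_id))).mul
            continuous_const).continuousOn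
      · exact hG2_cont.comp (continuous_const.add continuous_id).continuousOn fun ε hε => hε.1
      · exact hG2_cont.comp (continuous_const.sub continuous_id).continuousOn fun ε hε => hε.2
    have hφ1_0 : φ1 0 = 0 := by simp [hφ1_def]
    have hφ2_0 : φ2 0 < 0 := by
      simp only [hφ2_def, mul_zero, Real.cosh_zero, add_zero, sub_zero, mul_one]
      linarith
    obtain ⟨ε, hε0, hε1, hεs, hεlt⟩ :=
      strict_dec_aux φ φ1 φ2 s hs_open hd1 hd2 hφ2_cont 0 h0s hφ1_0 hφ2_0 1 one_pos
    have hφ0 : φ 0 = 0 := by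
      simp [hφ_def]; ring
    rw [zero_add] at hεs hεlt
    rw [hφ0] at hεlt
    simp only [hφ_def] at hεlt
    have hx1 : x + ε ∈ I := hεs.1
    have hx0 : x - ε ∈ I := hεs.2
    have hCDe := hCD2 (x - ε) hx0 (x + ε) hx1 (by intro hq; linarith) (1 / 2)
      ⟨by norm_num, by norm_num⟩
    have habs : |x + ε - (x - ε)| = 2 * ε := by
      rw [show x + ε - (x - ε) = 2 * ε by ring, abs_of_pos (by linarith)]
    rw [habs, show L * ((1 - 1 / 2) * (2 * ε)) = L * ε by ring,
      show L * (1 / 2 * (2 * ε)) = L * ε by ring,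
      show L * (2 * ε) = 2 * (L * ε) by ring, Real.sinh_two_mul,
      show (1 - 1 / 2) * (x - ε) + 1 / 2 * (x + ε) = x by ring,
      hg_eq _ hx0, hg_eq _ hx1, hg_eq _ hx] at hCDe
    have hsp : 0 < Real.sinh (L * ε) := Real.sinh_pos_iff.mpr (by positivity)
    have hcp : 0 < Real.cosh (L * ε) := Real.cosh_pos _
    have hq : Real.sinh (L * ε) / (2 * Real.sinh (L * ε) * Real.cosh (L * ε)) =
        1 / (2 * Real.cosh (L * ε)) := by
      field_simp
    rw [hq, one_div_mul_eq_div, one_div_mul_eq_div, ← add_div,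
      div_le_iff₀ (by positivity : (0:ℝ) < 2 * Real.cosh (L * ε))] at hCDe
    linarith
  · -- differential inequality implies CD property
    intro hdiff
    refine ⟨fun x hx => (hpos x hx).le, ?_⟩
    have main : ∀ a ∈ I, ∀ b ∈ I, a < b → ∀ t ∈ Icc (0 : ℝ) 1,
        Real.sinh (L * ((1 - t) * |b - a|)) / Real.sinh (L * |b - a|) * h a ^ (1 / (N - 1)) +
          Real.sinh (L * (t * |b - a|)) / Real.sinh (L * |b - a|) * h b ^ (1 / (N - 1)) ≤
          h ((1 - t) * a + t * b) ^ (1 / (N - 1)) := by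
      intro a ha b hb hab t ht
      have habI : Icc a b ⊆ I := hI'.out ha hb
      have habs : |b - a| = b - a := abs_of_pos (by linarith)
      have hS : 0 < Real.sinh (L * (b - a)) :=
        Real.sinh_pos_iff.mpr (mul_pos hL0 (by linarith))
      set S := Real.sinh (L * (b - a)) with hS_def
      have hS0 : S ≠ 0 := ne_of_gt hS
      set ψ : ℝ → ℝ := fun y =>
        (Real.sinh (L * (b - y)) * g a + Real.sinh (L * (y - a)) * g b) / S with hψ_def
      set ψ1 : ℝ → ℝ := fun y =>
        (Real.cosh (L * (b - y)) * -L * g a + Real.cosh (L * (y - a)) * L * g b) / S with hψ1_def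
      have hi1 : ∀ y : ℝ, HasDerivAt (fun y : ℝ => L * (b - y)) (-L) y := by
        intro y
        simpa using ((hasDerivAt_id y).const_sub b).const_mul L
      have hi2 : ∀ y : ℝ, HasDerivAt (fun y : ℝ => L * (y - a)) L y := by
        intro y
        simpa using ((hasDerivAt_id y).sub_const a).const_mul L
      have hψd : ∀ y : ℝ, HasDerivAt ψ (ψ1 y) y := fun y =>
        (((hi1 y).sinh.mul_const (g a)).add ((hi2 y).sinh.mul_const (g b))).div_const S
      have hψ1d : ∀ y : ℝ, HasDerivAt ψ1 (L ^ 2 * ψ y) y := by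
        intro y
        have hD := ((((hi1 y).cosh.mul_const (-L)).mul_const (g a)).add
          (((hi2 y).cosh.mul_const L).mul_const (g b))).div_const S
        refine hD.congr_deriv ?_
        simp only [hψ_def]
        field_simp
      set w : ℝ → ℝ := fun y => g y - ψ y with hw_def
      set w1 : ℝ → ℝ := fun y => G1 y - ψ1 y with hw1_def
      set w2 : ℝ → ℝ := fun y => G2 y - L ^ 2 * ψ y with hw2_def
      have hwd1 : ∀ y ∈ I, HasDerivAt w (w1 y) y := fun y hy => (hg_diff y hy).sub (hψd y)
      have hwd2 : ∀ y ∈ I, HasDerivAt w1 (w2 y) y := fun y hy => (hG1_diff y hy).sub (hψ1d y)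
      have hψ_cont : Continuous ψ := by
        apply Continuous.div_const
        exact ((Real.continuous_sinh.comp
            (continuous_const.mul (continuous_const.sub continuous_id))).mul
              continuous_const).add
          ((Real.continuous_sinh.comp
            (continuous_const.mul (continuous_id.sub continuous_const))).mul continuous_const)
      have hw2_cont : ContinuousOn w2 I :=
        hG2_cont.sub (continuous_const.mul hψ_cont).continuousOn
      have hsub : ∀ y ∈ Icc a b, w y < 0 → w2 y < 0 := by
        intro y hy hneg
        have h1 : G2 y ≤ L ^ 2 * g y := (hkey y (hg_pos y)).mpr (hdiff y (habI hy))
        simp only [hw_def] at hneg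
        have h2 : L ^ 2 * (g y - ψ y) < 0 :=
          mul_neg_of_pos_of_neg (by positivity) hneg
        have h3 : L ^ 2 * (g y - ψ y) = L ^ 2 * g y - L ^ 2 * ψ y := by ring
        rw [h3] at h2
        simp only [hw2_def]
        linarith
      have hwa : w a = 0 := by
        simp only [hw_def, hψ_def]
        rw [sub_self, mul_zero, Real.sinh_zero, zero_mul, add_zero, ← hS_def]
        field_simp
        ring
      have hwb : w b = 0 := by
        simp only [hw_def, hψ_def]
        rw [sub_self, mul_zero, Real.sinh_zero, zero_mul, zero_add, ← hS_def]
        field_simp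
        ring
      have hw_nonneg := nonneg_of_subsolution w w1 w2 I hI hwd1 hwd2 hw2_cont
        a b hab habI hsub hwa hwb
      set xt := (1 - t) * a + t * b with hxt_def
      have hxt_mem : xt ∈ Icc a b :=
        ⟨by nlinarith [ht.1, ht.2], by nlinarith [ht.1, ht.2]⟩
      have hxtI : xt ∈ I := habI hxt_mem
      have hwxt := hw_nonneg xt hxt_mem
      simp only [hw_def] at hwxt
      rw [habs, hg_eq _ ha, hg_eq _ hb, hg_eq _ hxtI, ← hS_def]
      have hψxt : ψ xt = Real.sinh (L * ((1 - t) * (b - a))) / S * g a +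
          Real.sinh (L * (t * (b - a))) / S * g b := by
        simp only [hψ_def]
        rw [show b - xt = (1 - t) * (b - a) by rw [hxt_def]; ring,
          show xt - a = t * (b - a) by rw [hxt_def]; ring]
        ring
      rw [← hψxt]
      linarith
    intro x₀ hx₀ x₁ hx₁ hne t ht
    rcases lt_or_gt_of_ne hne with hlt | hgt
    · exact main x₀ hx₀ x₁ hx₁ hlt t ht
    · have hmain := main x₁ hx₁ x₀ hx₀ hgt (1 - t) ⟨by linarith [ht.2], by linarith [ht.1]⟩
      rw [abs_sub_comm x₀ x₁, show (1 : ℝ) - (1 - t) = t by ring,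
        show t * x₁ + (1 - t) * x₀ = (1 - t) * x₀ + t * x₁ by ring] at hmain
      linarith
end

section
/- Let κ < 0 and N > 1 be real, let I be an open real interval, and let h : ℝ → ℝ be a function. Suppose there exists a family of open subintervals of I whose union equals I such that h is a CD(κ,N) density on each member of the family. Then h is a CD(κ,N) density on I. -/
open Set

namespace CDLocGlob

noncomputable def R (l : ℝ) (f : ℝ → ℝ) (a b : ℝ) : ℝ :=
  (Real.exp (l*b) * f b - Real.exp (l*a) * f a) / (Real.exp (l*b)^2 - Real.exp (l*a)^2)

def P (l : ℝ) (f : ℝ → ℝ) (a b c : ℝ) : Prop :=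
  Real.exp (l*a) * (Real.exp (l*c)^2 - Real.exp (l*b)^2) * f a
    + Real.exp (l*c) * (Real.exp (l*b)^2 - Real.exp (l*a)^2) * f c
    ≤ Real.exp (l*b) * (Real.exp (l*c)^2 - Real.exp (l*a)^2) * f b

theorem expsq_lt {l : ℝ} (hl : 0 < l) {a b : ℝ} (hab : a < b) :
    Real.exp (l*a)^2 < Real.exp (l*b)^2 := by
  have : Real.exp (l*a) < Real.exp (l*b) := Real.exp_lt_exp.2 (by nlinarith)
  nlinarith [Real.exp_pos (l*a), Real.exp_pos (l*b)]

theorem P_iff_R {l : ℝ} (hl : 0 < l) (f : ℝ → ℝ) {a b c : ℝ} (hab : a < b) (hbc : b < c) :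
    P l f a b c ↔ R l f b c ≤ R l f a b := by
  have h1 := expsq_lt hl hab
  have h2 := expsq_lt hl hbc
  rw [R, R, div_le_div_iff₀ (by linarith) (by linarith), P]
  constructor <;> intro H <;> nlinarith [H]

theorem R_between {l : ℝ} (hl : 0 < l) (f : ℝ → ℝ) {a b c : ℝ} (hab : a < b) (hbc : b < c)
    (hR : R l f b c ≤ R l f a b) :
    R l f b c ≤ R l f a c ∧ R l f a c ≤ R l f a b := by
  have h1 := expsq_lt hl hab
  have h2 := expsq_lt hl hbc
  rw [R, R, div_le_div_iff₀ (by linarith) (by linarith)] at hR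
  constructor
  · rw [R, R, div_le_div_iff₀ (by linarith) (by linarith)]
    nlinarith [hR]
  · rw [R, R, div_le_div_iff₀ (by linarith) (by linarith)]
    nlinarith [hR]

theorem sinh_identity (l u v : ℝ) :
    2 * Real.exp (l*u) * Real.exp (l*v) * Real.sinh (l*(v-u))
      = Real.exp (l*v)^2 - Real.exp (l*u)^2 := by
  have : l*(v-u) = l*v - l*u := by ring
  rw [this, Real.sinh_eq, neg_sub, Real.exp_sub, Real.exp_sub]
  field_simp

theorem tform_iff_P {l : ℝ} (hl : 0 < l) (f : ℝ → ℝ) {a b c : ℝ} (hab : a < b) (hbc : b < c) :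
    (Real.sinh (l*(c-b)) / Real.sinh (l*(c-a)) * f a
      + Real.sinh (l*(b-a)) / Real.sinh (l*(c-a)) * f c ≤ f b) ↔ P l f a b c := by
  have hs : 0 < Real.sinh (l*(c-a)) := by
    rw [Real.sinh_pos_iff]; nlinarith
  have pos : (0:ℝ) < 2 * Real.exp (l*a) * Real.exp (l*b) * Real.exp (l*c) := by positivity
  have ia := sinh_identity l b c
  have ib := sinh_identity l a b
  have ic := sinh_identity l a c
  rw [div_mul_eq_mul_div, div_mul_eq_mul_div, ← add_div, div_le_iff₀ hs]
  have eQ : 2 * Real.exp (l*a) * Real.exp (l*b) * Real.exp (l*c) *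
      (Real.sinh (l*(c-b)) * f a + Real.sinh (l*(b-a)) * f c)
      = Real.exp (l*a) * (Real.exp (l*c)^2 - Real.exp (l*b)^2) * f a
        + Real.exp (l*c) * (Real.exp (l*b)^2 - Real.exp (l*a)^2) * f c := by
    linear_combination (Real.exp (l*a) * f a) * ia + (Real.exp (l*c) * f c) * ib
  have eR : 2 * Real.exp (l*a) * Real.exp (l*b) * Real.exp (l*c) *
      (f b * Real.sinh (l*(c-a)))
      = Real.exp (l*b) * (Real.exp (l*c)^2 - Real.exp (l*a)^2) * f b := by
    linear_combination (Real.exp (l*b) * f b) * ic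
  constructor
  · intro H
    rw [P, ← eQ, ← eR]
    exact mul_le_mul_of_nonneg_left H pos.le
  · intro H
    rw [P, ← eQ, ← eR] at H
    exact le_of_mul_le_mul_left H pos

theorem grid {l : ℝ} (hl : 0 < l) (f : ℝ → ℝ) (q : ℕ → ℝ) (n : ℕ)
    (hq : ∀ i, i + 1 ≤ n → q i < q (i+1))
    (hstep : ∀ i, i + 2 ≤ n → R l f (q (i+1)) (q (i+2)) ≤ R l f (q i) (q (i+1))) :
    ∀ i j k, i < j → j < k → k ≤ n → R l f (q j) (q k) ≤ R l f (q i) (q j) := by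
  have qmono : ∀ i j, i < j → j ≤ n → q i < q j := by
    intro i j hij hjn
    induction j with
    | zero => omega
    | succ m IH =>
      rcases Nat.lt_or_ge i m with him | him
      · exact lt_trans (IH him (by omega)) (hq m (by omega))
      · have : i = m := by omega
        subst this; exact hq i hjn
  have rant : ∀ i j, i ≤ j → j + 1 ≤ n → R l f (q j) (q (j+1)) ≤ R l f (q i) (q (i+1)) := by
    intro i j hij hjn
    induction j with
    | zero =>
      obtain rfl : i = 0 := by omega
      exact le_refl _
    | succ m IH =>
      rcases Nat.lt_or_ge i (m+1) with him | him
      · exact le_trans (hstep m (by omega)) (IH (by omega) (by omega))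
      · obtain rfl : i = m + 1 := by omega
        exact le_refl _
  have bounds : ∀ i m, i ≤ m → m + 1 ≤ n →
      R l f (q m) (q (m+1)) ≤ R l f (q i) (q (m+1)) ∧
      R l f (q i) (q (m+1)) ≤ R l f (q i) (q (i+1)) := by
    intro i m him hmn
    induction m with
    | zero =>
      obtain rfl : i = 0 := by omega
      exact ⟨le_refl _, le_refl _⟩
    | succ m IH =>
      rcases Nat.lt_or_ge i (m+1) with hlt | hge
      · have IH' := IH (by omega) (by omega)
        have hR : R l f (q (m+1)) (q (m+2)) ≤ R l f (q i) (q (m+1)) :=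
          le_trans (hstep m hmn) IH'.1
        have hbet := R_between hl f (qmono i (m+1) hlt (by omega)) (hq (m+1) hmn) hR
        exact ⟨hbet.1, le_trans hbet.2 IH'.2⟩
      · obtain rfl : i = m + 1 := by omega
        exact ⟨le_refl _, le_refl _⟩
  intro i j k hij hjk hkn
  obtain ⟨m, rfl⟩ : ∃ m, k = m + 1 := ⟨k - 1, by omega⟩
  obtain ⟨m', rfl⟩ : ∃ m', j = m' + 1 := ⟨j - 1, by omega⟩
  have up : R l f (q (m'+1)) (q (m+1)) ≤ R l f (q (m'+1)) (q (m'+2)) :=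
    (bounds (m'+1) m (by omega) hkn).2
  have lo : R l f (q m') (q (m'+1)) ≤ R l f (q i) (q (m'+1)) :=
    (bounds i m' (by omega) (by omega)).1
  exact le_trans up (le_trans (hstep m' (by omega)) lo)

theorem threePoint {l : ℝ} (hl : 0 < l) (f : ℝ → ℝ) {I : Set ℝ} (hI' : I.OrdConnected)
    (𝒥 : Set (Set ℝ)) (h𝒥 : ∀ J ∈ 𝒥, J ⊆ I ∧ IsOpen J ∧ J.OrdConnected)
    (hcover : ⋃₀ 𝒥 = I)
    (hloc : ∀ J ∈ 𝒥, ∀ a ∈ J, ∀ c ∈ J, ∀ b, a < b → b < c → P l f a b c) :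
    ∀ a ∈ I, ∀ c ∈ I, ∀ b, a < b → b < c → P l f a b c := by
  intro a ha c hc b hab hbc
  have hIcc : Icc a c ⊆ I := hI'.out ha hc
  have hcov : Icc a c ⊆ ⋃₀ 𝒥 := by rw [hcover]; exact hIcc
  obtain ⟨δ, hδ, hball⟩ := lebesgue_number_lemma_of_metric_sUnion isCompact_Icc
    (fun J hJ => (h𝒥 J hJ).2.1) hcov
  -- choose numbers of subdivisions
  obtain ⟨n₁, hn₁⟩ := exists_nat_gt (max 1 ((b - a) / (δ / 2)))
  obtain ⟨n₂, hn₂⟩ := exists_nat_gt (max 1 ((c - b) / (δ / 2)))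
  have hδ2 : (0:ℝ) < δ/2 := by linarith
  have hn₁0 : (0:ℝ) < n₁ := lt_trans (by norm_num) ((le_max_left _ _).trans_lt hn₁)
  have hn₂0 : (0:ℝ) < n₂ := lt_trans (by norm_num) ((le_max_left _ _).trans_lt hn₂)
  set s₁ : ℝ := (b - a) / (n₁:ℝ) with hs₁def
  set s₂ : ℝ := (c - b) / (n₂:ℝ) with hs₂def
  have hs₁pos : 0 < s₁ := div_pos (by linarith) hn₁0
  have hs₂pos : 0 < s₂ := div_pos (by linarith) hn₂0
  have hs₁lt : s₁ < δ/2 := by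
    rw [hs₁def, div_lt_iff₀ hn₁0]
    have h' := (div_lt_iff₀ hδ2).1 ((le_max_right 1 ((b-a)/(δ/2))).trans_lt hn₁)
    nlinarith
  have hs₂lt : s₂ < δ/2 := by
    rw [hs₂def, div_lt_iff₀ hn₂0]
    have h' := (div_lt_iff₀ hδ2).1 ((le_max_right 1 ((c-b)/(δ/2))).trans_lt hn₂)
    nlinarith
  have hn₁ne : n₁ ≠ 0 := by
    intro hcon; rw [hcon] at hn₁0; norm_num at hn₁0
  have hn₂ne : n₂ ≠ 0 := by
    intro hcon; rw [hcon] at hn₂0; norm_num at hn₂0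
  set n : ℕ := n₁ + n₂ with hndef
  set q : ℕ → ℝ := fun i => if i ≤ n₁ then a + (i:ℝ) * s₁ else b + ((i - n₁ : ℕ) : ℝ) * s₂
    with hqdef
  have hqb : a + (n₁:ℝ) * s₁ = b := by
    rw [hs₁def]; field_simp; ring
  have hq0 : q 0 = a := by simp [hqdef]
  have hqn1 : q n₁ = b := by
    simp only [hqdef, if_pos (le_refl n₁)]; exact hqb
  have hqn : q n = c := by
    have h1 : ¬ (n ≤ n₁) := by omega
    have h2 : (n - n₁ : ℕ) = n₂ := by omega
    simp only [hqdef, if_neg h1, h2, hs₂def]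
    field_simp; ring
  have hcons : ∀ i, i + 1 ≤ n → q i < q (i+1) ∧ q (i+1) - q i < δ/2 := by
    intro i hi
    by_cases h1 : i + 1 ≤ n₁
    · have h2 : i ≤ n₁ := by omega
      simp only [hqdef, if_pos h1, if_pos h2]
      push_cast
      constructor <;> nlinarith
    · by_cases h2 : i ≤ n₁
      · have h2' : i = n₁ := by omega
        rw [h2']
        have h3 : (n₁ + 1 - n₁ : ℕ) = 1 := by omega
        rw [h2'] at h1
        simp only [hqdef, if_pos (le_refl n₁), if_neg h1, h3, Nat.cast_one, one_mul, hqb]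
        constructor <;> nlinarith
      · have h3 : (i + 1 - n₁ : ℕ) = (i - n₁ : ℕ) + 1 := by omega
        simp only [hqdef, if_neg h1, if_neg h2, h3]
        push_cast
        have e : ((↑(i - n₁) : ℝ) + 1) * s₂ = (↑(i - n₁) : ℝ) * s₂ + s₂ := by ring
        rw [e]
        constructor
        · linarith
        · linarith
  have qmono : ∀ i j, i ≤ j → j ≤ n → q i ≤ q j := by
    intro i j hij hjn
    induction j with
    | zero =>
      obtain rfl : i = 0 := by omega
      exact le_refl _
    | succ m IH =>
      rcases Nat.lt_or_ge i (m+1) with hlt | hge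
      · exact le_trans (IH (by omega) (by omega)) (hcons m (by omega)).1.le
      · obtain rfl : i = m + 1 := by omega
        exact le_refl _
  have hmem : ∀ i, i ≤ n → q i ∈ Icc a c := by
    intro i hin
    exact ⟨by rw [← hq0]; exact qmono 0 i (by omega) hin,
           by rw [← hqn]; exact qmono i n hin (le_refl n)⟩
  have hstep : ∀ i, i + 2 ≤ n → R l f (q (i+1)) (q (i+2)) ≤ R l f (q i) (q (i+1)) := by
    intro i hi
    obtain ⟨J, hJ, hsub⟩ := hball (q i) (hmem i (by omega))
    have hc1 := hcons i (by omega)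
    have hc2 := hcons (i+1) (by omega)
    have e12 : i + 1 + 1 = i + 2 := rfl
    rw [e12] at hc2
    have m0 : q i ∈ J := hsub (Metric.mem_ball_self hδ)
    have m1 : q (i+1) ∈ J := by
      apply hsub
      rw [Metric.mem_ball, Real.dist_eq, abs_of_pos (by linarith [hc1.1])]
      linarith [hc1.2]
    have m2 : q (i+2) ∈ J := by
      apply hsub
      rw [Metric.mem_ball, Real.dist_eq, abs_of_pos (by linarith [hc1.1, hc2.1])]
      linarith [hc1.2, hc2.2]
    exact (P_iff_R hl f hc1.1 hc2.1).1
      (hloc J hJ (q i) m0 (q (i+2)) m2 (q (i+1)) hc1.1 hc2.1)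
  have hmain := grid hl f q n (fun i hi => (hcons i hi).1) hstep 0 n₁ n
    (by omega) (by omega) (le_refl n)
  rw [hq0, hqn1, hqn] at hmain
  exact (P_iff_R hl f hab hbc).2 hmain

end CDLocGlob

/-- Local-to-global property for one-dimensional `CD(κ,N)` densities (`κ < 0`):
if an open interval `I` is covered by open subintervals on each of which `h` is a
`CD(κ,N)` density, then `h` is a `CD(κ,N)` density on `I`. -/
theorem cd_neg_density_local_to_global (κ N : ℝ) (I : Set ℝ) (h : ℝ → ℝ)
    (hκ : κ < 0) (hN : 1 < N) (hI : IsOpen I) (hI' : I.OrdConnected)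
    (𝒥 : Set (Set ℝ))
    (h𝒥 : ∀ J ∈ 𝒥, J ⊆ I ∧ IsOpen J ∧ J.OrdConnected)
    (hcover : ⋃₀ 𝒥 = I)
    (hCD : ∀ J ∈ 𝒥, IsCDNegDensity κ N J h) :
    IsCDNegDensity κ N I h := by
  set l : ℝ := Real.sqrt (-κ / (N - 1)) with hldef
  have hl : 0 < l := Real.sqrt_pos.2 (div_pos (by linarith) (by linarith))
  set f : ℝ → ℝ := fun x => h x ^ (1 / (N - 1)) with hfdef
  have hnonneg : ∀ x ∈ I, 0 ≤ h x := by
    intro x hx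
    rw [← hcover] at hx
    obtain ⟨J, hJ, hxJ⟩ := hx
    exact (hCD J hJ).1 x hxJ
  have hloc : ∀ J ∈ 𝒥, ∀ a ∈ J, ∀ c ∈ J, ∀ b, a < b → b < c → CDLocGlob.P l f a b c := by
    intro J hJ a haJ c hcJ b hab hbc
    have hac : a < c := lt_trans hab hbc
    have hca : (0:ℝ) < c - a := by linarith
    set t : ℝ := (b - a) / (c - a) with htdef
    have ht : t ∈ Set.Icc (0:ℝ) 1 :=
      ⟨div_nonneg (by linarith) hca.le, (div_le_one hca).2 (by linarith)⟩
    have key := (hCD J hJ).2 a haJ c hcJ (ne_of_lt hac) t ht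
    have e0 : |c - a| = c - a := abs_of_pos hca
    rw [e0] at key
    have e1 : (1 - t) * (c - a) = c - b := by rw [htdef]; field_simp; ring
    have e2 : t * (c - a) = b - a := by rw [htdef]; field_simp
    have e4 : (1 - t) * a + t * c = b := by rw [htdef]; field_simp; ring
    rw [e1, e2, e4] at key
    exact (CDLocGlob.tform_iff_P hl f hab hbc).1 key
  have h3pt := CDLocGlob.threePoint hl f hI' 𝒥 h𝒥 hcover hloc
  refine ⟨hnonneg, ?_⟩
  intro x₀ hx₀ x₁ hx₁ hne t ht
  obtain ⟨ht0, ht1⟩ := ht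
  show Real.sinh (l * ((1 - t) * |x₁ - x₀|)) / Real.sinh (l * |x₁ - x₀|) * f x₀
      + Real.sinh (l * (t * |x₁ - x₀|)) / Real.sinh (l * |x₁ - x₀|) * f x₁
      ≤ f ((1 - t) * x₀ + t * x₁)
  have hd : 0 < |x₁ - x₀| := abs_pos.2 (sub_ne_zero.2 (Ne.symm hne))
  have hs : 0 < Real.sinh (l * |x₁ - x₀|) := by
    rw [Real.sinh_pos_iff]; exact mul_pos hl hd
  rcases eq_or_lt_of_le ht0 with h0 | h0
  · rw [← h0,
      show (1 - (0:ℝ)) * |x₁ - x₀| = |x₁ - x₀| from by ring,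
      show (0:ℝ) * |x₁ - x₀| = 0 from by ring, mul_zero, Real.sinh_zero, zero_div, zero_mul,
      add_zero, div_self hs.ne', one_mul,
      show (1 - (0:ℝ)) * x₀ + 0 * x₁ = x₀ from by ring]
  rcases eq_or_lt_of_le ht1 with h1 | h1
  · rw [h1,
      show (1 - (1:ℝ)) * |x₁ - x₀| = 0 from by ring, mul_zero, Real.sinh_zero, zero_div,
      zero_mul, zero_add,
      show (1:ℝ) * |x₁ - x₀| = |x₁ - x₀| from by ring, div_self hs.ne', one_mul,
      show (1 - (1:ℝ)) * x₀ + 1 * x₁ = x₁ from by ring]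
  rcases lt_trichotomy x₀ x₁ with hlt | heq | hgt
  · have hab : x₀ < (1 - t) * x₀ + t * x₁ := by nlinarith
    have hbc : (1 - t) * x₀ + t * x₁ < x₁ := by nlinarith
    have key := (CDLocGlob.tform_iff_P hl f hab hbc).2 (h3pt x₀ hx₀ x₁ hx₁ _ hab hbc)
    rw [abs_of_pos (by linarith : (0:ℝ) < x₁ - x₀),
      show (1 - t) * (x₁ - x₀) = x₁ - ((1 - t) * x₀ + t * x₁) from by ring,
      show t * (x₁ - x₀) = (1 - t) * x₀ + t * x₁ - x₀ from by ring]
    exact key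
  · exact absurd heq hne
  · have hab : x₁ < (1 - t) * x₀ + t * x₁ := by nlinarith
    have hbc : (1 - t) * x₀ + t * x₁ < x₀ := by nlinarith
    have key := (CDLocGlob.tform_iff_P hl f hab hbc).2 (h3pt x₁ hx₁ x₀ hx₀ _ hab hbc)
    rw [abs_of_neg (by linarith : x₁ - x₀ < 0),
      show (1 - t) * -(x₁ - x₀) = (1 - t) * x₀ + t * x₁ - x₁ from by ring,
      show t * -(x₁ - x₀) = x₀ - ((1 - t) * x₀ + t * x₁) from by ring,
      show -(x₁ - x₀) = x₀ - x₁ from by ring]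
    linarith [key]
end

section
/- Let N > 1 be real and let h be a CD(0,N) density on the compact interval [a,b], where a ≤ 0 < b, such that h is positive at every point of [a,b). Assume the right derivative H := (log∘h)'⁺(0) exists in ℝ. Then for every θ ∈ (0,b) one has 1 + H·θ/(N−1) > 0 and h(θ) ≤ h(0)·(1 + H·θ/(N−1))^{N−1}. -/
open Set

/-- A `CD(0,N)` density on the set `I ⊆ ℝ`: a nonnegative function whose
`(N-1)`-st root is concave, stated via the defining inequality. -/
def IsCDZeroDensity (N : ℝ) (I : Set ℝ) (h : ℝ → ℝ) : Prop :=
  (∀ x ∈ I, 0 ≤ h x) ∧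
    ∀ x₀ ∈ I, ∀ x₁ ∈ I, ∀ t ∈ Set.Icc (0 : ℝ) 1,
      (1 - t) * h x₀ ^ (1 / (N - 1)) + t * h x₁ ^ (1 / (N - 1)) ≤
        h ((1 - t) * x₀ + t * x₁) ^ (1 / (N - 1))

/-- Jacobian comparison for `CD(0,N)` densities on `[a,b]` with `a ≤ 0 < b`:
if the right logarithmic derivative of `h` at `0` equals `H` (expressed via
`HasDerivWithinAt` on `Set.Ioi 0`), then `h(θ) ≤ h(0)·(1 + Hθ/(N-1))^{N-1}` and
`1 + Hθ/(N-1) > 0` for all `θ ∈ (0,b)`. -/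
theorem cd_zero_density_jacobian_comparison (N a b H : ℝ) (h : ℝ → ℝ)
    (hN : 1 < N) (ha : a ≤ 0) (hb : 0 < b)
    (hCD : IsCDZeroDensity N (Set.Icc a b) h)
    (hpos : ∀ x ∈ Set.Ico a b, 0 < h x)
    (hH : HasDerivWithinAt (fun y => Real.log (h y)) H (Set.Ioi 0) 0) :
    ∀ θ ∈ Set.Ioo 0 b,
      0 < 1 + H * θ / (N - 1) ∧ h θ ≤ h 0 * (1 + H * θ / (N - 1)) ^ (N - 1) := by
  intro θ hθ
  obtain ⟨hθ0, hθb⟩ := hθ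
  have hN1 : (0:ℝ) < N - 1 := by linarith
  have hh0 : 0 < h 0 := hpos 0 ⟨ha, hb⟩
  have hhθ : 0 < h θ := hpos θ ⟨by linarith, hθb⟩
  set g : ℝ → ℝ := fun y => h y ^ (1 / (N - 1)) with hgdef
  have hg0 : 0 < g 0 := Real.rpow_pos_of_pos hh0 _
  have hgθ : 0 < g θ := Real.rpow_pos_of_pos hhθ _
  -- the derivative of g within Ioo 0 b at 0
  have hexp : HasDerivWithinAt (fun y => Real.exp (Real.log (h y) * (1 / (N - 1))))
      (Real.exp (Real.log (h 0) * (1 / (N - 1))) * (H * (1 / (N - 1)))) (Set.Ioo 0 b) 0 :=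
    ((hH.mul_const _).exp).mono Set.Ioo_subset_Ioi_self
  have he0 : g 0 = Real.exp (Real.log (h 0) * (1 / (N - 1))) := Real.rpow_def_of_pos hh0 _
  have hgd : HasDerivWithinAt g (g 0 * (H * (1 / (N - 1)))) (Set.Ioo 0 b) 0 := by
    have he : ∀ y ∈ Set.Ioo 0 b, g y = Real.exp (Real.log (h y) * (1 / (N - 1))) := by
      intro y hy
      exact Real.rpow_def_of_pos (hpos y ⟨by linarith [hy.1], hy.2⟩) _
    have := hexp.congr he he0
    rwa [← he0] at this
  -- slope limit
  have hslope : Filter.Tendsto (slope g 0) (nhdsWithin 0 (Set.Ioo 0 b))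
      (nhds (g 0 * (H * (1 / (N - 1))))) := by
    have := hasDerivWithinAt_iff_tendsto_slope.mp hgd
    rwa [Set.diff_singleton_eq_self (by simp)] at this
  -- eventual lower bound on slopes from concavity
  have hev : ∀ᶠ s in nhdsWithin 0 (Set.Ioo 0 b),
      (g θ - g 0) / θ ≤ slope g 0 s := by
    have h1 : ∀ᶠ s in nhdsWithin 0 (Set.Ioo 0 b), s < θ :=
      Filter.Eventually.filter_mono nhdsWithin_le_nhds (eventually_lt_nhds hθ0)
    filter_upwards [h1, self_mem_nhdsWithin] with s hsθ hs
    obtain ⟨hs0, hsb⟩ := hs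
    set t : ℝ := s / θ with ht
    have htmem : t ∈ Set.Icc (0:ℝ) 1 :=
      ⟨div_nonneg hs0.le hθ0.le, (div_le_one hθ0).2 hsθ.le⟩
    have hconc := hCD.2 0 ⟨ha, hb.le⟩ θ ⟨by linarith, hθb.le⟩ t htmem
    have harg : (1 - t) * 0 + t * θ = s := by
      rw [ht, mul_zero, zero_add, div_mul_cancel₀ s hθ0.ne']
    rw [harg] at hconc
    -- hconc : (1 - t) * g 0 + t * g θ ≤ g s
    have hkey : t * (g θ - g 0) ≤ g s - g 0 := by
      have : (1 - t) * g 0 + t * g θ = g 0 + t * (g θ - g 0) := by ring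
      rw [this] at hconc
      linarith
    have hslope_eq : slope g 0 s = (g s - g 0) / s := by
      simp [slope_def_field, div_eq_div_iff]
    rw [hslope_eq, div_le_div_iff₀ hθ0 hs0]
    have : t * (g θ - g 0) * θ = (g θ - g 0) * s := by
      rw [ht, mul_comm (s / θ), mul_assoc, div_mul_cancel₀ s hθ0.ne']
    nlinarith [hkey]
  have hlim : (g θ - g 0) / θ ≤ g 0 * (H * (1 / (N - 1))) := by
    haveI : (nhdsWithin (0:ℝ) (Set.Ioo 0 b)).NeBot := by
      rw [← mem_closure_iff_nhdsWithin_neBot, closure_Ioo hb.ne]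
      exact ⟨le_refl 0, hb.le⟩
    exact ge_of_tendsto hslope hev
  set K : ℝ := 1 + H * θ / (N - 1) with hK
  have hgle : g θ ≤ g 0 * K := by
    rw [div_le_iff₀ hθ0] at hlim
    have : g 0 * K = g 0 + g 0 * (H * (1 / (N - 1))) * θ := by
      rw [hK]; ring
    clear_value g K
    linarith
  have hKpos : 0 < K := by
    have h1 : 0 < g 0 * K := lt_of_lt_of_le hgθ hgle
    clear_value g K
    nlinarith [hg0]
  refine ⟨hKpos, ?_⟩
  have hpow : g θ ^ (N - 1) ≤ (g 0 * K) ^ (N - 1) :=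
    Real.rpow_le_rpow hgθ.le hgle hN1.le
  have hθeq : g θ ^ (N - 1) = h θ := by
    rw [hgdef]
    rw [← Real.rpow_mul hhθ.le, one_div_mul_cancel hN1.ne', Real.rpow_one]
  have h0eq : g 0 ^ (N - 1) = h 0 := by
    rw [hgdef]
    rw [← Real.rpow_mul hh0.le, one_div_mul_cancel hN1.ne', Real.rpow_one]
  calc h θ = g θ ^ (N - 1) := hθeq.symm
    _ ≤ (g 0 * K) ^ (N - 1) := hpow
    _ = g 0 ^ (N - 1) * K ^ (N - 1) := Real.mul_rpow hg0.le hKpos.le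
    _ = h 0 * K ^ (N - 1) := by rw [h0eq]
end

section
/- Let κ < 0 and N > 1 be real and let h be a CD(κ,N) density on the compact interval [a,b], where a ≤ 0 < b, such that h is positive at every point of [a,b). Assume the right derivative H := (log∘h)'⁺(0) exists in ℝ. Set c := √(−κ/(N−1)). Then for every θ ∈ (0,b) one has cosh(c·θ) + (H/(N−1))·(1/c)·sinh(c·θ) > 0 and h(θ) ≤ h(0)·(cosh(c·θ) + (H/(N−1))·(1/c)·sinh(c·θ))^{N−1}. -/
open Set Filter Topology

/-- Jacobian comparison for `CD(κ,N)` densities (`κ < 0`) on `[a,b]` with `a ≤ 0 < b`,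
where `c = √(-κ/(N-1))` and `H` is the right logarithmic derivative of `h` at `0`. -/
theorem cd_neg_density_jacobian_comparison (κ N a b H : ℝ) (h : ℝ → ℝ)
    (hκ : κ < 0) (hN : 1 < N) (ha : a ≤ 0) (hb : 0 < b)
    (hCD : IsCDNegDensity κ N (Set.Icc a b) h)
    (hpos : ∀ x ∈ Set.Ico a b, 0 < h x)
    (hH : HasDerivWithinAt (fun y => Real.log (h y)) H (Set.Ioi 0) 0) :
    ∀ θ ∈ Set.Ioo 0 b,
      0 < Real.cosh (Real.sqrt (-κ / (N - 1)) * θ) +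
          H / (N - 1) * (Real.sqrt (-κ / (N - 1)))⁻¹ *
            Real.sinh (Real.sqrt (-κ / (N - 1)) * θ) ∧
      h θ ≤ h 0 * (Real.cosh (Real.sqrt (-κ / (N - 1)) * θ) +
          H / (N - 1) * (Real.sqrt (-κ / (N - 1)))⁻¹ *
            Real.sinh (Real.sqrt (-κ / (N - 1)) * θ)) ^ (N - 1) := by
  intro θ hθ
  obtain ⟨hθ0, hθb⟩ := hθ
  have hN1 : (0:ℝ) < N - 1 := by linarith
  set c := Real.sqrt (-κ / (N - 1)) with hc_def
  have hc : 0 < c := Real.sqrt_pos.mpr (div_pos (by linarith) hN1)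
  set g : ℝ → ℝ := fun x => h x ^ (1 / (N - 1)) with hg_def
  have hh0 : 0 < h 0 := hpos 0 ⟨ha, hb⟩
  have hhθ : 0 < h θ := hpos θ ⟨by linarith, hθb⟩
  have hg0 : 0 < g 0 := Real.rpow_pos_of_pos hh0 _
  have hgθ : 0 < g θ := Real.rpow_pos_of_pos hhθ _
  set T := Real.sinh (c * θ) with hT_def
  have hT : 0 < T := Real.sinh_pos_iff.mpr (mul_pos hc hθ0)
  set X := Real.cosh (c * θ) + H / (N - 1) * c⁻¹ * T with hX_def
  -- the derivative of `g = h ^ (1/(N-1))` from the right at `0`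
  have hgderiv : HasDerivWithinAt g (g 0 * (1 / (N - 1) * H)) (Ioo 0 b) 0 := by
    have h1 : HasDerivWithinAt (fun y => Real.exp (1 / (N - 1) * Real.log (h y)))
        (Real.exp (1 / (N - 1) * Real.log (h 0)) * (1 / (N - 1) * H)) (Ioo 0 b) 0 :=
      ((hH.const_mul (1 / (N - 1))).exp).mono Set.Ioo_subset_Ioi_self
    have he0 : Real.exp (1 / (N - 1) * Real.log (h 0)) = g 0 := by
      rw [hg_def]; simp only
      rw [Real.rpow_def_of_pos hh0, mul_comm]
    rw [he0] at h1
    refine h1.congr (fun x hx => ?_) ?_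
    · have hx' : 0 < h x := hpos x ⟨le_trans ha hx.1.le, hx.2⟩
      rw [hg_def]; simp only
      rw [Real.rpow_def_of_pos hx', mul_comm]
    · rw [hg_def]; simp only
      rw [Real.rpow_def_of_pos hh0, mul_comm]
  -- the auxiliary function `F`
  set F : ℝ → ℝ := fun s => g s * T - g 0 * Real.sinh (c * (θ - s)) with hF_def
  have hF0 : F 0 = 0 := by simp [hF_def, hT_def]
  set D := g 0 * (1 / (N - 1) * H) * T + g 0 * (c * Real.cosh (c * θ)) with hD_def
  have hFderiv : HasDerivWithinAt F D (Ioo 0 b) 0 := by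
    have h2 : HasDerivAt (fun s : ℝ => c * (θ - s)) (-c) 0 := by
      simpa using ((hasDerivAt_id (0:ℝ)).const_sub θ).const_mul c
    have h3 : HasDerivAt (fun s : ℝ => Real.sinh (c * (θ - s)))
        (Real.cosh (c * (θ - 0)) * (-c)) 0 := h2.sinh
    have h4 := (hgderiv.mul_const T).sub ((h3.const_mul (g 0)).hasDerivWithinAt)
    refine h4.congr_deriv ?_
    rw [hD_def, sub_zero]
    ring
  have hmemIoo : 𝓝[Ioo (0:ℝ) b \ {0}] 0 = 𝓝[>] (0:ℝ) := by
    rw [Set.diff_singleton_eq_self (by simp), nhdsWithin_Ioo_eq_nhdsGT hb]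
  have tF : Tendsto (fun s => F s / s) (𝓝[>] (0:ℝ)) (𝓝 D) := by
    have h5 := hasDerivWithinAt_iff_tendsto_slope.mp hFderiv
    rw [hmemIoo] at h5
    refine h5.congr fun s => ?_
    rw [slope_def_field, hF0, sub_zero, sub_zero]
  have tsinh : Tendsto (fun s => Real.sinh (c * s) / s) (𝓝[>] (0:ℝ)) (𝓝 c) := by
    have hd : HasDerivAt (fun s : ℝ => Real.sinh (c * s)) c 0 := by
      simpa using ((hasDerivAt_id (0:ℝ)).const_mul c).sinh
    have h5 : Tendsto (slope (fun s : ℝ => Real.sinh (c * s)) 0) (𝓝[>] (0:ℝ)) (𝓝 c) :=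
      (hasDerivAt_iff_tendsto_slope.mp hd).mono_left
        (nhdsWithin_mono 0 (fun x hx => by simp [(Set.mem_Ioi.mp hx).ne']))
    refine h5.congr fun s => ?_
    rw [slope_def_field]; simp
  have tmain : Tendsto (fun s => F s / Real.sinh (c * s)) (𝓝[>] (0:ℝ)) (𝓝 (D * c⁻¹)) := by
    have h6 := tF.mul (tsinh.inv₀ hc.ne')
    refine h6.congr' ?_
    filter_upwards [self_mem_nhdsWithin] with s hs
    have hs0 : s ≠ 0 := ne_of_gt hs
    have hsinh : Real.sinh (c * s) ≠ 0 := (Real.sinh_pos_iff.mpr (mul_pos hc hs)).ne'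
    rw [inv_div]
    field_simp
  -- the key inequality from the CD condition
  have hineq : ∀ᶠ s in 𝓝[>] (0:ℝ), g θ ≤ F s / Real.sinh (c * s) := by
    filter_upwards [Ioo_mem_nhdsGT_of_mem ⟨le_refl (0:ℝ), hθ0⟩] with s hs
    obtain ⟨hs0, hsθ⟩ := hs
    have hS : 0 < Real.sinh (c * s) := Real.sinh_pos_iff.mpr (mul_pos hc hs0)
    have hCD2 := hCD.2 0 ⟨ha, hb.le⟩ θ ⟨by linarith, hθb.le⟩ (ne_of_lt hθ0) (s / θ)
      ⟨by positivity, by rw [div_le_one hθ0]; linarith⟩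
    rw [← hc_def] at hCD2
    have habs : |θ - (0:ℝ)| = θ := by rw [sub_zero, abs_of_pos hθ0]
    rw [habs] at hCD2
    have e1 : (1 - s / θ) * θ = θ - s := by field_simp
    have e2 : s / θ * θ = s := by field_simp
    rw [e1, e2] at hCD2
    have e3 : (1 - s / θ) * 0 + s = s := by ring
    rw [e3] at hCD2
    rw [← hT_def] at hCD2
    have h7 := mul_le_mul_of_nonneg_right hCD2 hT.le
    have h7' : Real.sinh (c * (θ - s)) * h 0 ^ (1 / (N - 1)) +
        Real.sinh (c * s) * h θ ^ (1 / (N - 1)) ≤ h s ^ (1 / (N - 1)) * T := by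
      calc Real.sinh (c * (θ - s)) * h 0 ^ (1 / (N - 1)) +
          Real.sinh (c * s) * h θ ^ (1 / (N - 1))
          = (Real.sinh (c * (θ - s)) / T * h 0 ^ (1 / (N - 1)) +
            Real.sinh (c * s) / T * h θ ^ (1 / (N - 1))) * T := by
            field_simp
        _ ≤ _ := h7
    simp only [hF_def, hg_def]
    rw [le_div_iff₀ hS]
    nlinarith [h7']
  have hgle : g θ ≤ D * c⁻¹ := ge_of_tendsto tmain hineq
  have hXeq : D * c⁻¹ = g 0 * X := by
    rw [hD_def, hX_def]
    field_simp
    ring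
  rw [hXeq] at hgle
  have hXpos : 0 < X := by nlinarith [hgθ, hg0, hgle]
  refine ⟨hXpos, ?_⟩
  have h8 : g θ ^ (N - 1) ≤ (g 0 * X) ^ (N - 1) :=
    Real.rpow_le_rpow hgθ.le hgle hN1.le
  have h9 : g θ ^ (N - 1) = h θ := by
    rw [hg_def]; simp only
    rw [← Real.rpow_mul hhθ.le, one_div_mul_cancel hN1.ne', Real.rpow_one]
  have h10 : (g 0 * X) ^ (N - 1) = h 0 * X ^ (N - 1) := by
    rw [Real.mul_rpow hg0.le hXpos.le, hg_def]; simp only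
    rw [← Real.rpow_mul hh0.le, one_div_mul_cancel hN1.ne', Real.rpow_one]
  rw [h9, h10] at h8
  exact h8
end

section
/- Let κ > 0 and N > 1 be real and let h be a CD(κ,N) density on the compact interval [a,b], where a ≤ 0 < b and b−a ≤ π·√((N−1)/κ), such that h is positive at every point of [a,b). Assume the right derivative H := (log∘h)'⁺(0) exists in ℝ. Set c := √(κ/(N−1)). Then for every θ ∈ (0,b) one has cos(c·θ) + (H/(N−1))·(1/c)·sin(c·θ) > 0 and h(θ) ≤ h(0)·(cos(c·θ) + (H/(N−1))·(1/c)·sin(c·θ))^{N−1}. -/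
open Set

/-- A `CD(κ,N)` density on the set `I ⊆ ℝ`, for a constant positive curvature
parameter `κ`, with the explicit trigonometric distortion coefficients. -/
def IsCDPosDensity (κ N : ℝ) (I : Set ℝ) (h : ℝ → ℝ) : Prop :=
  (∀ x ∈ I, 0 ≤ h x) ∧
    ∀ x₀ ∈ I, ∀ x₁ ∈ I, x₀ ≠ x₁ → ∀ t ∈ Set.Icc (0 : ℝ) 1,
      Real.sin (Real.sqrt (κ / (N - 1)) * ((1 - t) * |x₁ - x₀|)) /
            Real.sin (Real.sqrt (κ / (N - 1)) * |x₁ - x₀|) * h x₀ ^ (1 / (N - 1)) +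
          Real.sin (Real.sqrt (κ / (N - 1)) * (t * |x₁ - x₀|)) /
            Real.sin (Real.sqrt (κ / (N - 1)) * |x₁ - x₀|) * h x₁ ^ (1 / (N - 1)) ≤
        h ((1 - t) * x₀ + t * x₁) ^ (1 / (N - 1))

/-- Jacobian comparison for `CD(κ,N)` densities (`κ > 0`) on `[a,b]` with `a ≤ 0 < b`
and `b - a ≤ π·√((N-1)/κ)`, where `c = √(κ/(N-1))` and `H` is the right logarithmic
derivative of `h` at `0`. -/
theorem cd_pos_density_jacobian_comparison (κ N a b H : ℝ) (h : ℝ → ℝ)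
    (hκ : 0 < κ) (hN : 1 < N) (ha : a ≤ 0) (hb : 0 < b)
    (hdiam : b - a ≤ Real.pi * Real.sqrt ((N - 1) / κ))
    (hCD : IsCDPosDensity κ N (Set.Icc a b) h)
    (hpos : ∀ x ∈ Set.Ico a b, 0 < h x)
    (hH : HasDerivWithinAt (fun y => Real.log (h y)) H (Set.Ioi 0) 0) :
    ∀ θ ∈ Set.Ioo 0 b,
      0 < Real.cos (Real.sqrt (κ / (N - 1)) * θ) +
          H / (N - 1) * (Real.sqrt (κ / (N - 1)))⁻¹ *
            Real.sin (Real.sqrt (κ / (N - 1)) * θ) ∧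
      h θ ≤ h 0 * (Real.cos (Real.sqrt (κ / (N - 1)) * θ) +
          H / (N - 1) * (Real.sqrt (κ / (N - 1)))⁻¹ *
            Real.sin (Real.sqrt (κ / (N - 1)) * θ)) ^ (N - 1) := by
  intro θ hθ
  obtain ⟨hθ0, hθb⟩ := hθ
  have hN1 : (0:ℝ) < N - 1 := by linarith
  set c : ℝ := Real.sqrt (κ / (N - 1)) with hc
  have hcpos : 0 < c := Real.sqrt_pos.2 (by positivity)
  have hinv : Real.sqrt ((N - 1) / κ) = c⁻¹ := by
    rw [hc, ← Real.sqrt_inv]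
    congr 1
    field_simp
  -- sin (c θ) > 0
  have hcθπ : c * θ < Real.pi := by
    have h1 : θ < Real.pi * c⁻¹ := by
      calc θ < b := hθb
        _ ≤ b - a := by linarith
        _ ≤ Real.pi * c⁻¹ := by rw [← hinv]; exact hdiam
    have h2 : c * θ < c * (Real.pi * c⁻¹) := by
      exact mul_lt_mul_of_pos_left h1 hcpos
    calc c * θ < c * (Real.pi * c⁻¹) := h2
      _ = Real.pi := by field_simp
  have hsin : 0 < Real.sin (c * θ) :=
    Real.sin_pos_of_pos_of_lt_pi (mul_pos hcpos hθ0) hcθπ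
  -- the auxiliary function g
  set g : ℝ → ℝ := fun x => h x ^ (1 / (N - 1)) with hg
  have h0pos : 0 < h 0 := hpos 0 ⟨ha, hb⟩
  have hθpos : 0 < h θ := hpos θ ⟨by linarith, hθb⟩
  have g0pos : 0 < g 0 := Real.rpow_pos_of_pos h0pos _
  have gθpos : 0 < g θ := Real.rpow_pos_of_pos hθpos _
  -- the key pointwise inequality from the CD condition
  have key : ∀ ε ∈ Ioo (0:ℝ) θ,
      g θ * Real.sin (c * ε) ≤ g ε * Real.sin (c * θ) - g 0 * Real.sin (c * (θ - ε)) := by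
    intro ε hε
    obtain ⟨hε0, hεθ⟩ := hε
    have ht : ε / θ ∈ Icc (0:ℝ) 1 :=
      ⟨by positivity, by rw [div_le_one hθ0]; linarith⟩
    have hmem0 : (0:ℝ) ∈ Icc a b := ⟨ha, hb.le⟩
    have hmemθ : θ ∈ Icc a b := ⟨by linarith, hθb.le⟩
    have hCD2 := hCD.2 0 hmem0 θ hmemθ hθ0.ne (ε / θ) ht
    have habs : |θ - 0| = θ := by rw [sub_zero, abs_of_pos hθ0]
    rw [habs] at hCD2
    have e1 : (1 - ε / θ) * θ = θ - ε := by field_simp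
    have e2 : ε / θ * θ = ε := by field_simp
    have e3 : (1 - ε / θ) * 0 + ε = ε := by ring
    rw [e1, e2, e3, ← hc] at hCD2
    -- hCD2 : sin(c(θ-ε))/sin(cθ) * g 0 + sin(cε)/sin(cθ) * g θ ≤ g ε
    rw [div_mul_eq_mul_div, div_mul_eq_mul_div, ← add_div, div_le_iff₀ hsin] at hCD2
    simp only [hg]
    ring_nf at hCD2 ⊢
    linarith
  -- derivative of g within Ioi 0 at 0
  have hgd : HasDerivWithinAt g (g 0 * (H * (1 / (N - 1)))) (Set.Ioi 0) 0 := by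
    have hu : HasDerivWithinAt (fun y => Real.exp (Real.log (h y) * (1 / (N - 1))))
        (Real.exp (Real.log (h 0) * (1 / (N - 1))) * (H * (1 / (N - 1)))) (Set.Ioi 0) 0 :=
      (hH.mul_const (1 / (N - 1))).exp
    have heq0 : g 0 = Real.exp (Real.log (h 0) * (1 / (N - 1))) :=
      Real.rpow_def_of_pos h0pos _
    have hev : g =ᶠ[nhdsWithin 0 (Set.Ioi 0)]
        fun y => Real.exp (Real.log (h y) * (1 / (N - 1))) := by
      have hIb : Set.Iio b ∈ nhdsWithin (0:ℝ) (Set.Ioi 0) :=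
        nhdsWithin_le_nhds (Iio_mem_nhds hb)
      have hIo : Set.Ioi (0:ℝ) ∈ nhdsWithin (0:ℝ) (Set.Ioi 0) := self_mem_nhdsWithin
      filter_upwards [hIb, hIo] with x hxb hx0
      exact Real.rpow_def_of_pos (hpos x ⟨by linarith [Set.mem_Ioi.mp hx0], hxb⟩) _
    exact (hu.congr_of_eventuallyEq hev heq0).congr_deriv (by rw [heq0])
  -- derivative of φ
  set φ : ℝ → ℝ := fun ε => g ε * Real.sin (c * θ) - g 0 * Real.sin (c * (θ - ε)) with hφ
  have hinner : HasDerivAt (fun ε : ℝ => c * (θ - ε)) (-c) 0 := by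
    have := ((hasDerivAt_id (0:ℝ)).const_sub θ).const_mul c
    simpa using this
  have hsinin : HasDerivAt (fun ε : ℝ => Real.sin (c * (θ - ε)))
      (Real.cos (c * (θ - 0)) * (-c)) 0 := hinner.sin
  have hφd : HasDerivWithinAt φ
      (g 0 * (H * (1 / (N - 1))) * Real.sin (c * θ) + g 0 * (Real.cos (c * θ) * c))
      (Set.Ioi 0) 0 := by
    have h1 := (hgd.mul_const (Real.sin (c * θ)))
    have h2 := (hsinin.hasDerivWithinAt (s := Set.Ioi 0)).const_mul (g 0)
    have := h1.sub h2
    simp only [sub_zero] at this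
    convert this using 1
    · rfl
    · rfl
    · rfl
    ring
  -- slope limits
  have hdiff : Set.Ioi (0:ℝ) \ {0} = Set.Ioi 0 := by
    apply Set.diff_singleton_eq_self
    simp
  have hφ0 : φ 0 = 0 := by simp [hφ]
  have hslopeφ : Filter.Tendsto (slope φ 0) (nhdsWithin 0 (Set.Ioi 0))
      (nhds (g 0 * (H * (1 / (N - 1))) * Real.sin (c * θ) + g 0 * (Real.cos (c * θ) * c))) := by
    have := hasDerivWithinAt_iff_tendsto_slope.mp hφd
    rwa [hdiff] at this
  set L : ℝ → ℝ := fun ε => g θ * Real.sin (c * ε) with hL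
  have hLd : HasDerivWithinAt L (g θ * (Real.cos (c * 0) * c)) (Set.Ioi 0) 0 := by
    have hin : HasDerivAt (fun ε : ℝ => c * ε) c 0 := by
      simpa using (hasDerivAt_id (0:ℝ)).const_mul c
    exact ((hin.sin).const_mul (g θ)).hasDerivWithinAt
  have hslopeL : Filter.Tendsto (slope L 0) (nhdsWithin 0 (Set.Ioi 0))
      (nhds (g θ * (Real.cos (c * 0) * c))) := by
    have := hasDerivWithinAt_iff_tendsto_slope.mp hLd
    rwa [hdiff] at this
  -- eventual inequality of slopes
  have hev : ∀ᶠ ε in nhdsWithin 0 (Set.Ioi 0), slope L 0 ε ≤ slope φ 0 ε := by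
    have hIθ : Set.Iio θ ∈ nhdsWithin (0:ℝ) (Set.Ioi 0) :=
      nhdsWithin_le_nhds (Iio_mem_nhds hθ0)
    have hIo : Set.Ioi (0:ℝ) ∈ nhdsWithin (0:ℝ) (Set.Ioi 0) := self_mem_nhdsWithin
    filter_upwards [hIθ, hIo] with ε hεθ hε0
    have hε0' : (0:ℝ) < ε := hε0
    have hk := key ε ⟨hε0', hεθ⟩
    have hL0 : L 0 = 0 := by simp [hL]
    rw [slope_def_field, slope_def_field, hL0, hφ0, sub_zero, sub_zero, sub_zero]
    exact (div_le_div_iff_of_pos_right hε0').mpr hk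
  -- pass to the limit
  have hlim : g θ * (Real.cos (c * 0) * c) ≤
      g 0 * (H * (1 / (N - 1))) * Real.sin (c * θ) + g 0 * (Real.cos (c * θ) * c) :=
    le_of_tendsto_of_tendsto hslopeL hslopeφ hev
  have hlim' : g θ * c ≤
      g 0 * (H * (1 / (N - 1))) * Real.sin (c * θ) + g 0 * (Real.cos (c * θ) * c) := by
    simpa using hlim
  -- the coefficient A
  set A : ℝ := Real.cos (c * θ) + H / (N - 1) * c⁻¹ * Real.sin (c * θ) with hA
  have hgA : g θ ≤ g 0 * A := by
    have hAc : g 0 * A * c =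
        g 0 * (H * (1 / (N - 1))) * Real.sin (c * θ) + g 0 * (Real.cos (c * θ) * c) := by
      rw [hA]
      field_simp
      ring
    have h1 : g θ * c ≤ g 0 * A * c := by rw [hAc]; exact hlim'
    exact le_of_mul_le_mul_right h1 hcpos
  have hApos : 0 < A := by
    by_contra hcon
    push_neg at hcon
    have : g 0 * A ≤ 0 := mul_nonpos_of_nonneg_of_nonpos g0pos.le hcon
    linarith
  refine ⟨hApos, ?_⟩
  have hpow : ∀ x : ℝ, 0 ≤ h x → g x ^ (N - 1) = h x := by
    intro x hx
    show (h x ^ (1 / (N - 1))) ^ (N - 1) = h x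
    rw [← Real.rpow_mul hx, one_div, inv_mul_cancel₀ hN1.ne', Real.rpow_one]
  calc h θ = g θ ^ (N - 1) := (hpow θ hθpos.le).symm
    _ ≤ (g 0 * A) ^ (N - 1) := Real.rpow_le_rpow gθpos.le hgA hN1.le
    _ = g 0 ^ (N - 1) * A ^ (N - 1) := Real.mul_rpow g0pos.le hApos.le
    _ = h 0 * A ^ (N - 1) := by rw [hpow 0 h0pos.le]
end
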